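/- arXiv:2310.03216 — 7 statements merged into one kernel-verified Lean document; each statement's English description precedes it below -/
import Mathlib

section
/- Let d ≥ 1, n ≥ 1 and let a_1, …, a_n ∈ ℕ^d \ {0}. In the formal power series ring R = ℂ[[x_1,…,x_d,y_1,…,y_d]] let I_Δ be the ideal generated by the binomials x^{a_1} − y^{a_1}, …, x^{a_n} − y^{a_n}. Let f be a homogeneous polynomial of some degree k in the variables u_1,…,u_d, and let σ_x, σ_y : ℂ[[u_1,…,u_d]] → R be the ℂ-algebra maps induced by u_i ↦ x_i and u_i ↦ y_i. If σ_x(f) − σ_y(f) is integral over I_Δ, then for every α ∈ ℕ^d such that the coefficient of u^α in f is nonzero, the binomial x^α − y^α is integral over I_Δ. -/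
/-- An element `f` of a commutative ring is *integral over the ideal* `I` if it satisfies an
equation `f ^ m + a 1 * f ^ (m-1) + ⋯ + a (m-1) * f + a m = 0` with `a j ∈ I ^ j`. -/
def IsIntegralOverIdeal {R : Type*} [CommRing R] (I : Ideal R) (f : R) : Prop :=
  ∃ m : ℕ, 0 < m ∧ ∃ a : ℕ → R, (∀ j, 1 ≤ j → j ≤ m → a j ∈ I ^ j) ∧
    f ^ m + ∑ j ∈ Finset.Icc 1 m, a j * f ^ (m - j) = 0

/-- The monomial `x ^ α` in `ℂ[[x_1,…,x_d,y_1,…,y_d]]`, the `x`-variables being indexed by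
the left summand of `Fin d ⊕ Fin d`. -/
noncomputable def Xmon (d : ℕ) (α : Fin d →₀ ℕ) : MvPowerSeries (Fin d ⊕ Fin d) ℂ :=
  MvPowerSeries.monomial (R := ℂ) (α.embDomain (Function.Embedding.inl)) 1

/-- The monomial `y ^ α` in `ℂ[[x_1,…,x_d,y_1,…,y_d]]`. -/
noncomputable def Ymon (d : ℕ) (α : Fin d →₀ ℕ) : MvPowerSeries (Fin d ⊕ Fin d) ℂ :=
  MvPowerSeries.monomial (R := ℂ) (α.embDomain (Function.Embedding.inr)) 1

noncomputable section Aux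

open Finsupp

/-- `t ^ e` for an exponent finsupp `e`. -/
def tpow {σ : Type*} (t : σ → ℂ) (e : σ →₀ ℕ) : ℂ := e.prod fun i k => t i ^ k

lemma tpow_zero {σ : Type*} (t : σ → ℂ) : tpow t 0 = 1 := Finsupp.prod_zero_index

lemma tpow_add {σ : Type*} (t : σ → ℂ) (e e' : σ →₀ ℕ) :
    tpow t (e + e') = tpow t e * tpow t e' :=
  Finsupp.prod_add_index' (fun i => pow_zero _) (fun i k l => pow_add _ _ _)

/-- Coefficient-wise rescaling of a multivariate power series: `x_i ↦ t i • x_i`. -/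
def rescaleFun {σ : Type*} (t : σ → ℂ) (g : MvPowerSeries σ ℂ) : MvPowerSeries σ ℂ :=
  fun e => tpow t e * MvPowerSeries.coeff (R := ℂ) e g

lemma coeff_rescaleFun {σ : Type*} (t : σ → ℂ) (g : MvPowerSeries σ ℂ) (e : σ →₀ ℕ) :
    MvPowerSeries.coeff (R := ℂ) e (rescaleFun t g) = tpow t e * MvPowerSeries.coeff (R := ℂ) e g := rfl

def rescaleHom {σ : Type*} (t : σ → ℂ) : MvPowerSeries σ ℂ →ₐ[ℂ] MvPowerSeries σ ℂ where
  toFun := rescaleFun t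
  map_one' := by
    ext e
    classical
    rw [coeff_rescaleFun, MvPowerSeries.coeff_one]
    split_ifs with h
    · subst h; simp [tpow_zero]
    · simp
  map_mul' g h := by
    show rescaleFun t (g * h) = rescaleFun t g * rescaleFun t h
    ext e
    classical
    rw [coeff_rescaleFun, MvPowerSeries.coeff_mul, MvPowerSeries.coeff_mul, Finset.mul_sum]
    refine Finset.sum_congr rfl fun p hp => ?_
    rw [Finset.HasAntidiagonal.mem_antidiagonal] at hp
    rw [coeff_rescaleFun, coeff_rescaleFun, ← hp, tpow_add]
    ring
  map_zero' := by ext e; simp [coeff_rescaleFun]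
  map_add' g h := by ext e; simp [coeff_rescaleFun, mul_add]
  commutes' c := by
    show rescaleFun t (algebraMap ℂ (MvPowerSeries σ ℂ) c) = algebraMap ℂ (MvPowerSeries σ ℂ) c
    ext e
    classical
    rw [coeff_rescaleFun, MvPowerSeries.algebraMap_apply, MvPowerSeries.coeff_C]
    split_ifs with h
    · subst h; simp [tpow_zero]
    · simp

lemma rescaleHom_monomial {σ : Type*} (t : σ → ℂ) (e : σ →₀ ℕ) (c : ℂ) :
    rescaleHom t (MvPowerSeries.monomial (R := ℂ) e c) = tpow t e • MvPowerSeries.monomial (R := ℂ) e c := by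
  ext e'
  classical
  show tpow t e' * (MvPowerSeries.coeff (R := ℂ) e' (MvPowerSeries.monomial (R := ℂ) e c)) = _
  rw [map_smul, MvPowerSeries.coeff_monomial, smul_eq_mul]
  split_ifs with h
  · subst h; ring
  · ring

end Aux

set_option synthInstance.maxHeartbeats 1000000 in
set_option maxHeartbeats 1000000 in
open Polynomial in
lemma mem_integralClosure_of_isIntegralOverIdeal {R : Type*} [CommRing R] {I : Ideal R} {g : R}
    (h : IsIntegralOverIdeal I g) :
    (C g * X) ∈ integralClosure (reesAlgebra I) (Polynomial R) := by
  obtain ⟨m, hm, a, haI, heq⟩ := h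
  classical
  set a' : ℕ → R := fun j => if 1 ≤ j ∧ j ≤ m then a j else 0 with ha'def
  have ha'mem : ∀ j, a' j ∈ I ^ j := by
    intro j
    show (if 1 ≤ j ∧ j ≤ m then a j else 0) ∈ I ^ j
    split_ifs with hj
    · exact haI j hj.1 hj.2
    · exact zero_mem _
  have ha' : ∀ j, (C (a' j) * X ^ j) ∈ reesAlgebra I := by
    intro j
    rw [mem_reesAlgebra_iff]
    intro i
    rw [coeff_C_mul, coeff_X_pow]
    split_ifs with hij
    · subst hij; rw [mul_one]; exact ha'mem _
    · rw [mul_zero]; exact zero_mem _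
  refine ⟨X ^ m + ∑ j ∈ Finset.Icc 1 m,
      Polynomial.C (⟨C (a' j) * X ^ j, ha' j⟩ : reesAlgebra I) * Polynomial.X ^ (m - j), ?_, ?_⟩
  · apply monic_X_pow_add
    apply lt_of_le_of_lt (Polynomial.degree_sum_le _ _)
    rw [Finset.sup_lt_iff (by exact_mod_cast WithBot.bot_lt_coe m)]
    intro j hj
    rw [Finset.mem_Icc] at hj
    apply lt_of_le_of_lt (Polynomial.degree_C_mul_X_pow_le _ _)
    exact_mod_cast Nat.sub_lt_of_pos_le hj.1 hj.2
  · rw [← Polynomial.aeval_def, map_add, map_pow, Polynomial.aeval_X, map_sum]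
    have hterm : ∀ j ∈ Finset.Icc 1 m,
        (Polynomial.aeval (C g * X))
            (Polynomial.C (⟨C (a' j) * X ^ j, ha' j⟩ : reesAlgebra I) * Polynomial.X ^ (m - j)) =
          C (a j * g ^ (m - j)) * X ^ m := by
      intro j hj
      rw [Finset.mem_Icc] at hj
      rw [map_mul, map_pow, Polynomial.aeval_X, Polynomial.aeval_C]
      have h1 : (algebraMap (reesAlgebra I) R[X]) (⟨C (a' j) * X ^ j, ha' j⟩ : reesAlgebra I)
          = C (a' j) * X ^ j := rfl
      have h2 : a' j = a j := if_pos ⟨hj.1, hj.2⟩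
      rw [h1, h2, mul_pow, ← C_pow]
      calc C (a j) * X ^ j * (C (g ^ (m - j)) * X ^ (m - j))
          = C (a j) * C (g ^ (m - j)) * (X ^ j * X ^ (m - j)) := by ring
        _ = C (a j * g ^ (m - j)) * X ^ m := by
            rw [← pow_add, Nat.add_sub_cancel' hj.2, ← C_mul]
    rw [Finset.sum_congr rfl hterm, ← Finset.sum_mul, mul_pow, ← C_pow, ← map_sum,
      ← add_mul, ← C_add, heq, map_zero, zero_mul]

set_option synthInstance.maxHeartbeats 1000000 in
set_option maxHeartbeats 1000000 in
open Polynomial in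
lemma isIntegralOverIdeal_of_mem_integralClosure {R : Type*} [CommRing R] [Nontrivial R]
    {I : Ideal R} {g : R}
    (h : (C g * X) ∈ integralClosure (reesAlgebra I) (Polynomial R)) :
    IsIntegralOverIdeal I g := by
  obtain ⟨p, hp, hev⟩ := h
  rw [← Polynomial.aeval_def] at hev
  set m := p.natDegree with hmdef
  have hm : 0 < m := by
    rcases Nat.eq_zero_or_pos m with h0 | h0
    · exfalso
      have : p = 1 := hp.natDegree_eq_zero.mp h0
      rw [this, map_one] at hev
      exact one_ne_zero hev
    · exact h0
  refine ⟨m, hm, fun j => ((p.coeff (m - j) : R[X])).coeff j, ?_, ?_⟩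
  · intro j _ _
    have hmem := (p.coeff (m - j)).2
    rw [mem_reesAlgebra_iff] at hmem
    exact hmem j
  · have hsum : (Polynomial.aeval (C g * X)) p
        = ∑ i ∈ Finset.range (m + 1), ((p.coeff i : R[X]) * C (g ^ i)) * X ^ i := by
      rw [Polynomial.aeval_eq_sum_range]
      refine Finset.sum_congr rfl fun i _ => ?_
      rw [Algebra.smul_def, mul_pow, ← C_pow]
      have : (algebraMap (reesAlgebra I) R[X]) (p.coeff i) = (p.coeff i : R[X]) := rfl
      rw [this]; ring
    rw [hsum] at hev
    have hcoeff := congrArg (fun q : R[X] => q.coeff m) hev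
    simp only [Polynomial.finset_sum_coeff, Polynomial.coeff_zero] at hcoeff
    have hterm : ∀ i ∈ Finset.range (m + 1),
        (((p.coeff i : R[X]) * C (g ^ i)) * X ^ i).coeff m
          = ((p.coeff i : R[X])).coeff (m - i) * g ^ i := by
      intro i hi
      rw [Finset.mem_range, Nat.lt_succ_iff] at hi
      rw [Polynomial.coeff_mul_X_pow', if_pos hi, Polynomial.coeff_mul_C]
    rw [Finset.sum_congr rfl hterm, Finset.sum_range_succ] at hcoeff
    have hlead : ((p.coeff m : R[X])).coeff (m - m) * g ^ m = g ^ m := by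
      rw [Nat.sub_self, hmdef, hp.coeff_natDegree]
      norm_num
    rw [hlead] at hcoeff
    have hbij : ∑ i ∈ Finset.range m, ((p.coeff i : R[X])).coeff (m - i) * g ^ i
        = ∑ j ∈ Finset.Icc 1 m, ((p.coeff (m - j) : R[X])).coeff j * g ^ (m - j) := by
      refine Finset.sum_nbij' (fun i => m - i) (fun j => m - j) ?_ ?_ ?_ ?_ ?_
      · intro i hi
        rw [Finset.mem_range] at hi
        rw [Finset.mem_Icc]
        omega
      · intro j hj
        rw [Finset.mem_Icc] at hj
        rw [Finset.mem_range]
        omega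
      · intro i hi; rw [Finset.mem_range] at hi; omega
      · intro j hj; rw [Finset.mem_Icc] at hj; omega
      · intro i hi
        rw [Finset.mem_range] at hi
        have h1 : m - (m - i) = i := by omega
        rw [h1]
    rw [hbij] at hcoeff
    rw [add_comm] at hcoeff
    show g ^ m + ∑ j ∈ Finset.Icc 1 m, (↑(p.coeff (m - j)) : R[X]).coeff j * g ^ (m - j) = 0
    exact hcoeff

noncomputable section Aux2

open MvPowerSeries

lemma prodX {d : ℕ} (emb : Fin d ↪ (Fin d ⊕ Fin d)) (α : Fin d →₀ ℕ) :
    (α.prod fun i k => (MvPowerSeries.X (emb i) : MvPowerSeries (Fin d ⊕ Fin d) ℂ) ^ k)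
      = MvPowerSeries.monomial (R := ℂ) (α.embDomain emb) 1 := by
  induction α using Finsupp.induction with
  | zero => simp [Finsupp.prod_zero_index, MvPowerSeries.monomial_zero_one]
  | single_add a b f ha hb ih =>
    rw [Finsupp.prod_add_index (fun i _ => pow_zero _) (fun i _ k l => pow_add _ _ _),
      Finsupp.prod_single_index (h := fun i k => (MvPowerSeries.X (emb i) : MvPowerSeries (Fin d ⊕ Fin d) ℂ) ^ k) (pow_zero _), ih, MvPowerSeries.X_pow_eq,
      MvPowerSeries.monomial_mul_monomial, one_mul, Finsupp.embDomain_add,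
      Finsupp.embDomain_single]

lemma tpow_embDomain_inl {d : ℕ} (s : Fin d → ℂ) (α : Fin d →₀ ℕ) :
    tpow (Sum.elim s s) (α.embDomain Function.Embedding.inl) = tpow s α := by
  unfold tpow
  rw [Finsupp.prod_embDomain]
  rfl

lemma tpow_embDomain_inr {d : ℕ} (s : Fin d → ℂ) (α : Fin d →₀ ℕ) :
    tpow (Sum.elim s s) (α.embDomain Function.Embedding.inr) = tpow s α := by
  unfold tpow
  rw [Finsupp.prod_embDomain]
  rfl

lemma aeval_inl_eq {d : ℕ} (f : MvPolynomial (Fin d) ℂ) :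
    (MvPolynomial.aeval fun i => (MvPowerSeries.X (Sum.inl i) : MvPowerSeries (Fin d ⊕ Fin d) ℂ)) f
      = ∑ α ∈ f.support, MvPolynomial.coeff α f • Xmon d α := by
  conv_lhs => rw [f.as_sum]
  rw [map_sum]
  refine Finset.sum_congr rfl fun α _ => ?_
  rw [MvPolynomial.aeval_monomial, Xmon, Algebra.smul_def]
  congr 1
  exact prodX Function.Embedding.inl α

lemma aeval_inr_eq {d : ℕ} (f : MvPolynomial (Fin d) ℂ) :
    (MvPolynomial.aeval fun i => (MvPowerSeries.X (Sum.inr i) : MvPowerSeries (Fin d ⊕ Fin d) ℂ)) f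
      = ∑ α ∈ f.support, MvPolynomial.coeff α f • Ymon d α := by
  conv_lhs => rw [f.as_sum]
  rw [map_sum]
  refine Finset.sum_congr rfl fun α _ => ?_
  rw [MvPolynomial.aeval_monomial, Ymon, Algebra.smul_def]
  congr 1
  exact prodX Function.Embedding.inr α

lemma rescale_Xmon {d : ℕ} (s : Fin d → ℂ) (α : Fin d →₀ ℕ) :
    rescaleHom (Sum.elim s s) (Xmon d α) = tpow s α • Xmon d α := by
  rw [Xmon, rescaleHom_monomial, tpow_embDomain_inl]

lemma rescale_Ymon {d : ℕ} (s : Fin d → ℂ) (α : Fin d →₀ ℕ) :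
    rescaleHom (Sum.elim s s) (Ymon d α) = tpow s α • Ymon d α := by
  rw [Ymon, rescaleHom_monomial, tpow_embDomain_inr]

end Aux2

section Stability

lemma rescale_mem_pow {d n : ℕ} (a : Fin n → (Fin d →₀ ℕ))
    (IΔ : Ideal (MvPowerSeries (Fin d ⊕ Fin d) ℂ))
    (hIΔ : IΔ = Ideal.span (Set.range fun i => Xmon d (a i) - Ymon d (a i)))
    (s : Fin d → ℂ) :
    ∀ (j : ℕ) (g : MvPowerSeries (Fin d ⊕ Fin d) ℂ),
      g ∈ IΔ ^ j → rescaleHom (Sum.elim s s) g ∈ IΔ ^ j := by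
  have hmap : Ideal.map (rescaleHom (Sum.elim s s)) IΔ ≤ IΔ := by
    rw [hIΔ, Ideal.map_span, Ideal.span_le]
    rintro _ ⟨_, ⟨i, rfl⟩, rfl⟩
    show (rescaleHom (Sum.elim s s)) (Xmon d (a i) - Ymon d (a i)) ∈ _
    rw [map_sub, rescale_Xmon, rescale_Ymon, ← smul_sub, Algebra.smul_def]
    exact Ideal.mul_mem_left _ _ (Ideal.subset_span ⟨i, rfl⟩)
  intro j g hg
  have h1 : rescaleHom (Sum.elim s s) g ∈ Ideal.map (rescaleHom (Sum.elim s s)) (IΔ ^ j) :=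
    Ideal.mem_map_of_mem _ hg
  rw [Ideal.map_pow] at h1
  exact Ideal.pow_right_mono hmap j h1

lemma isIntegralOverIdeal_rescale {d n : ℕ} (a : Fin n → (Fin d →₀ ℕ))
    (IΔ : Ideal (MvPowerSeries (Fin d ⊕ Fin d) ℂ))
    (hIΔ : IΔ = Ideal.span (Set.range fun i => Xmon d (a i) - Ymon d (a i)))
    (s : Fin d → ℂ) (F : MvPowerSeries (Fin d ⊕ Fin d) ℂ)
    (hF : IsIntegralOverIdeal IΔ F) :
    IsIntegralOverIdeal IΔ (rescaleHom (Sum.elim s s) F) := by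
  obtain ⟨m, hm, b, hb, heq⟩ := hF
  refine ⟨m, hm, fun j => rescaleHom (Sum.elim s s) (b j),
    fun j h1 h2 => rescale_mem_pow a IΔ hIΔ s j _ (hb j h1 h2), ?_⟩
  have h := congrArg (rescaleHom (Sum.elim s s)) heq
  simpa [map_add, map_pow, map_sum, map_mul] using h

end Stability

set_option synthInstance.maxHeartbeats 1000000 in
set_option maxHeartbeats 1000000 in
lemma exists_combination {d : ℕ} (S : Finset (Fin d →₀ ℕ)) (α₀ : Fin d →₀ ℕ) (hα₀ : α₀ ∈ S) :
    ∃ (N : ℕ) (μ : Fin N → ℂ) (t : Fin N → (Fin d → ℂ)),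
      ∀ α (hα : α ∈ S), (∑ i, μ i * tpow (t i) α) = if α = α₀ then 1 else 0 := by
  classical
  set w : (Fin d → ℂ) → (↥S → ℂ) := fun t β => tpow t ↑β with hw
  have hsingle : ∀ (β : ↥S) (c : ℂ), c • (Pi.single β (1 : ℂ) : ↥S → ℂ) = (Pi.single β c : ↥S → ℂ) := by
    intro β c
    funext γ
    rw [Pi.smul_apply, Pi.single_apply, Pi.single_apply, smul_eq_mul]
    split_ifs <;> simp
  have hlam : ∀ (lam : Module.Dual ℂ (↥S → ℂ)) (v : ↥S → ℂ),
      lam v = ∑ β ∈ Finset.univ (α := ↥S), v β * lam (Pi.single β 1) := by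
    intro lam v
    have hv : v = ∑ β ∈ Finset.univ (α := ↥S), v β • (Pi.single β (1 : ℂ) : ↥S → ℂ) := by
      rw [Finset.sum_congr rfl fun β _ => hsingle β (v β)]
      exact (Finset.univ_sum_single v).symm
    conv_lhs => rw [hv]
    rw [map_sum]
    refine Finset.sum_congr rfl fun β _ => ?_
    rw [map_smul, smul_eq_mul]
  have hspan : Submodule.span ℂ (Set.range w) = ⊤ := by
    by_contra hne
    obtain ⟨lam, hlam0, hlmap⟩ := Submodule.exists_dual_map_eq_bot_of_lt_top
      (lt_top_iff_ne_top.mpr hne) inferInstance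
    have hvanish : ∀ t, lam (w t) = 0 := by
      intro t
      have h1 : w t ∈ Submodule.span ℂ (Set.range w) := Submodule.subset_span ⟨t, rfl⟩
      have h2 : lam (w t) ∈ Submodule.map lam (Submodule.span ℂ (Set.range w)) :=
        Submodule.mem_map_of_mem h1
      rw [hlmap] at h2
      simpa using h2
    set q : MvPolynomial (Fin d) ℂ := ∑ β ∈ Finset.univ (α := ↥S),
      lam (Pi.single β 1) • MvPolynomial.monomial (β : Fin d →₀ ℕ) (1 : ℂ) with hq
    have heval : ∀ t : Fin d → ℂ, MvPolynomial.eval t q = 0 := by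
      intro t
      rw [hq, map_sum]
      have h2 : ∀ β : ↥S, MvPolynomial.eval t
          (lam (Pi.single β 1) • MvPolynomial.monomial (β : Fin d →₀ ℕ) (1 : ℂ))
            = w t β * lam (Pi.single β 1) := by
        intro β
        rw [MvPolynomial.smul_eq_C_mul, map_mul, MvPolynomial.eval_C, MvPolynomial.eval_monomial]
        show lam (Pi.single β 1) * (1 * tpow t ↑β) = _
        ring
      rw [Finset.sum_congr rfl fun β _ => h2 β, ← hlam lam (w t), hvanish]
    have hq0 : q = 0 := by
      apply MvPolynomial.funext
      intro x
      rw [heval, map_zero]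
    have hcoeffs : ∀ β : ↥S, lam (Pi.single β 1) = 0 := by
      intro β₀
      have h3 := congrArg (MvPolynomial.coeff (β₀ : Fin d →₀ ℕ)) hq0
      rw [hq, MvPolynomial.coeff_sum, MvPolynomial.coeff_zero] at h3
      rw [Finset.sum_eq_single β₀ ?hne ?habs] at h3
      case hne =>
        intro β _ hne'
        rw [MvPolynomial.coeff_smul, MvPolynomial.coeff_monomial,
          if_neg (fun hh => hne' (Subtype.ext hh)), smul_zero]
      case habs =>
        intro habs; exact absurd (Finset.mem_univ β₀) habs
      rw [MvPolynomial.coeff_smul, MvPolynomial.coeff_monomial, if_pos rfl, smul_eq_mul,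
        mul_one] at h3
      exact h3
    apply hlam0
    apply LinearMap.pi_ext
    intro i x
    rw [← hsingle i x, map_smul, hcoeffs i, smul_zero, LinearMap.zero_apply]
  have hmem : (Pi.single (⟨α₀, hα₀⟩ : ↥S) 1 : ↥S → ℂ) ∈ Submodule.span ℂ (Set.range w) := by
    rw [hspan]; trivial
  obtain ⟨N, μ, gf, hsum⟩ := Submodule.mem_span_set'.mp hmem
  refine ⟨N, μ, fun i => Classical.choose (gf i).2, ?_⟩
  intro α hα
  have ht : ∀ i, w (Classical.choose (gf i).2) = (gf i : ↥S → ℂ) :=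
    fun i => Classical.choose_spec (gf i).2
  have h5 := congrFun hsum (⟨α, hα⟩ : ↥S)
  rw [Finset.sum_apply] at h5
  have h6 : ∀ i : Fin N, (μ i • (gf i : ↥S → ℂ)) (⟨α, hα⟩ : ↥S)
      = μ i * tpow (Classical.choose (gf i).2) α := by
    intro i
    have h7 : (gf i : ↥S → ℂ) (⟨α, hα⟩ : ↥S) = tpow (Classical.choose (gf i).2) α := by
      exact (congrFun (ht i) (⟨α, hα⟩ : ↥S)).symm
    rw [Pi.smul_apply, h7, smul_eq_mul]
  rw [Finset.sum_congr rfl fun i _ => h6 i] at h5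
  rw [h5, Pi.single_apply]
  by_cases hcase : α = α₀
  · subst hcase; rw [if_pos rfl, if_pos rfl]
  · rw [if_neg hcase, if_neg (by simpa [Subtype.ext_iff] using hcase)]


set_option synthInstance.maxHeartbeats 1000000 in
set_option maxHeartbeats 1000000 in
open Polynomial in
lemma C_smul_mem_closure {R : Type*} [CommRing R] [Algebra ℂ R] (I : Ideal R) (c : ℂ)
    (w : R[X]) (hw : w ∈ integralClosure (reesAlgebra I) R[X]) :
    c • w ∈ integralClosure (reesAlgebra I) R[X] := by
  have hC : Polynomial.C (algebraMap ℂ R c) ∈ reesAlgebra I := by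
    rw [mem_reesAlgebra_iff]
    intro i
    rw [coeff_C]
    split_ifs with h
    · subst h; rw [pow_zero, Ideal.one_eq_top]; trivial
    · exact zero_mem _
  have h1 : c • w = Polynomial.C (algebraMap ℂ R c) * w := by
    rw [Algebra.smul_def, Polynomial.algebraMap_apply]
  rw [h1]
  exact mul_mem ((integralClosure _ _).algebraMap_mem (⟨_, hC⟩ : reesAlgebra I)) hw

set_option synthInstance.maxHeartbeats 1000000 in
set_option maxHeartbeats 1000000 in
/-- If `f` is a homogeneous polynomial in `u_1,…,u_d` such that `f(x) - f(y)` is integral over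
the binomial ideal `I_Δ = ⟨x^{a_i} - y^{a_i} : 1 ≤ i ≤ n⟩` of `ℂ[[x_1,…,x_d,y_1,…,y_d]]`,
then `x^α - y^α` is integral over `I_Δ` for every monomial `u^α` appearing in `f` with a
nonzero coefficient.  Here `f(x)` and `f(y)` are obtained from `f` via the ℂ-algebra maps
induced by `u_i ↦ x_i` and `u_i ↦ y_i` respectively. -/
theorem monomials_of_homogeneous_saturated (d n : ℕ) (hd : 1 ≤ d) (hn : 1 ≤ n)
    (a : Fin n → (Fin d →₀ ℕ)) (ha : ∀ i, a i ≠ 0)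
    (IΔ : Ideal (MvPowerSeries (Fin d ⊕ Fin d) ℂ))
    (hIΔ : IΔ = Ideal.span (Set.range fun i => Xmon d (a i) - Ymon d (a i)))
    (k : ℕ) (f : MvPolynomial (Fin d) ℂ) (hf : f.IsHomogeneous k)
    (hint : IsIntegralOverIdeal IΔ
      ((MvPolynomial.aeval fun i => MvPowerSeries.X (Sum.inl i)) f -
       (MvPolynomial.aeval fun i => MvPowerSeries.X (Sum.inr i)) f)) :
    ∀ α : Fin d →₀ ℕ, MvPolynomial.coeff α f ≠ 0 →
      IsIntegralOverIdeal IΔ (Xmon d α - Ymon d α) := by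
  intro α₀ hα₀
  classical
  have hsupp : α₀ ∈ f.support := MvPolynomial.mem_support_iff.mpr hα₀
  obtain ⟨N, μ, t, hcomb⟩ := exists_combination f.support α₀ hsupp
  set F : MvPowerSeries (Fin d ⊕ Fin d) ℂ := ((MvPolynomial.aeval fun i => MvPowerSeries.X (Sum.inl i)) f -
    (MvPolynomial.aeval fun i => MvPowerSeries.X (Sum.inr i)) f) with hFdef
  have hFdecomp : ∀ s : Fin d → ℂ, rescaleHom (Sum.elim s s) F
      = ∑ β ∈ f.support, (MvPolynomial.coeff β f * tpow s β) • (Xmon d β - Ymon d β) := by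
    intro s
    rw [hFdef, map_sub, aeval_inl_eq, aeval_inr_eq, map_sum, map_sum, ← Finset.sum_sub_distrib]
    refine Finset.sum_congr rfl fun β _ => ?_
    rw [map_smul, map_smul, rescale_Xmon, rescale_Ymon, smul_smul, smul_smul, ← smul_sub]
  have hres : ∀ s : Fin d → ℂ, IsIntegralOverIdeal IΔ (rescaleHom (Sum.elim s s) F) :=
    fun s => isIntegralOverIdeal_rescale a IΔ hIΔ s F hint
  set z := ∑ i : Fin N, μ i • rescaleHom (Sum.elim (t i) (t i)) F with hzdef
  have hz : z = MvPolynomial.coeff α₀ f • (Xmon d α₀ - Ymon d α₀) := by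
    rw [hzdef]
    calc ∑ i : Fin N, μ i • rescaleHom (Sum.elim (t i) (t i)) F
        = ∑ i : Fin N, ∑ β ∈ f.support,
            (μ i * (MvPolynomial.coeff β f * tpow (t i) β)) • (Xmon d β - Ymon d β) := by
          refine Finset.sum_congr rfl fun i _ => ?_
          rw [hFdecomp (t i), Finset.smul_sum]
          refine Finset.sum_congr rfl fun β _ => ?_
          rw [smul_smul]
      _ = ∑ β ∈ f.support, (∑ i : Fin N, μ i * (MvPolynomial.coeff β f * tpow (t i) β)) •
            (Xmon d β - Ymon d β) := by
          rw [Finset.sum_comm]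
          refine Finset.sum_congr rfl fun β _ => ?_
          rw [Finset.sum_smul]
      _ = ∑ β ∈ f.support, (MvPolynomial.coeff β f * (if β = α₀ then 1 else 0)) •
            (Xmon d β - Ymon d β) := by
          refine Finset.sum_congr rfl fun β hβ => ?_
          congr 1
          rw [← hcomb β hβ, Finset.mul_sum]
          refine Finset.sum_congr rfl fun i _ => ?_
          ring
      _ = MvPolynomial.coeff α₀ f • (Xmon d α₀ - Ymon d α₀) := by
          rw [Finset.sum_eq_single α₀]
          · rw [if_pos rfl, mul_one]
          · intro β _ hne; rw [if_neg hne, mul_zero, zero_smul]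
          · intro habs; exact absurd hsupp habs
  have hclosure : ∀ s : Fin d → ℂ,
      (Polynomial.C (rescaleHom (Sum.elim s s) F) * Polynomial.X)
        ∈ integralClosure (reesAlgebra IΔ)
            (Polynomial (MvPowerSeries (Fin d ⊕ Fin d) ℂ)) :=
    fun s => mem_integralClosure_of_isIntegralOverIdeal (hres s)
  have hzmem : (Polynomial.C z * Polynomial.X) ∈ integralClosure (reesAlgebra IΔ)
      (Polynomial (MvPowerSeries (Fin d ⊕ Fin d) ℂ)) := by
    rw [hzdef]
    have heq : Polynomial.C (∑ i : Fin N, μ i • rescaleHom (Sum.elim (t i) (t i)) F)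
          * Polynomial.X
        = ∑ i : Fin N, μ i • (Polynomial.C (rescaleHom (Sum.elim (t i) (t i)) F)
            * Polynomial.X) := by
      rw [map_sum, Finset.sum_mul]
      refine Finset.sum_congr rfl fun i _ => ?_
      simp only [Algebra.smul_def, map_mul, Polynomial.algebraMap_apply, mul_assoc]
    rw [heq]
    exact sum_mem fun i _ => C_smul_mem_closure IΔ (μ i) _ (hclosure (t i))
  have hv : (Xmon d α₀ - Ymon d α₀) = (MvPolynomial.coeff α₀ f)⁻¹ • z := by
    rw [hz, smul_smul, inv_mul_cancel₀ hα₀, one_smul]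
  have hvmem : (Polynomial.C (Xmon d α₀ - Ymon d α₀) * Polynomial.X)
      ∈ integralClosure (reesAlgebra IΔ)
          (Polynomial (MvPowerSeries (Fin d ⊕ Fin d) ℂ)) := by
    rw [hv]
    have heq : Polynomial.C ((MvPolynomial.coeff α₀ f)⁻¹ • z) * Polynomial.X
        = (MvPolynomial.coeff α₀ f)⁻¹ • (Polynomial.C z * Polynomial.X) := by
      simp only [Algebra.smul_def, map_mul, Polynomial.algebraMap_apply, mul_assoc]
    rw [heq]
    exact C_smul_mem_closure IΔ _ _ hzmem
  exact isIntegralOverIdeal_of_mem_integralClosure hvmem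
end

section
/- Let I be an ideal of the formal power series ring R = ℂ[[z_1,…,z_n]] generated by a (possibly infinite) family of homogeneous polynomials. If f ∈ R is integral over I, then for every k ∈ ℕ the degree-k homogeneous component of f (the polynomial Σ_{|α|=k} c_α z^α, where c_α is the coefficient of z^α in f, regarded as an element of R) is also integral over I. Consequently the set of elements of R integral over I is an ideal generated by homogeneous polynomials. -/
/-- The degree-`k` homogeneous component of a formal power series: the polynomial
`Σ_{|α| = k} c_α z^α` (where `c_α` is the coefficient of `z^α` in `f`), regarded as an
element of `ℂ[[z_1,…,z_n]]`. -/
noncomputable def homogeneousComponent (n k : ℕ) (f : MvPowerSeries (Fin n) ℂ) :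
    MvPowerSeries (Fin n) ℂ :=
  fun e => if (e.sum fun _ m => m) = k then MvPowerSeries.coeff e f else 0



noncomputable section
namespace ICAux
open scoped Classical

variable {n : ℕ}

theorem degree_add (u v : Fin n →₀ ℕ) : (u + v).degree = u.degree + v.degree := by
  simp only [Finsupp.degree_eq_weight_one]
  exact map_add _ u v

/-- degree-first monomial well-order, via embedding into `ℕ ×ₗ Lex (Fin n →₀ ℕ)`. -/
def κ (e : Fin n →₀ ℕ) : ℕ ×ₗ Lex (Fin n →₀ ℕ) := toLex (e.degree, toLex e)

theorem κ_lt_iff {e d : Fin n →₀ ℕ} :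
    κ e < κ d ↔ e.degree < d.degree ∨ (e.degree = d.degree ∧ toLex e < toLex d) :=
  Prod.Lex.lt_iff

theorem κ_inj : Function.Injective (κ (n := n)) := by
  intro e d h
  have := congrArg (fun x => (ofLex x).2) h
  simpa [κ] using this

theorem κ_add_lt_add_iff {a e d : Fin n →₀ ℕ} : κ (a + e) < κ (a + d) ↔ κ e < κ d := by
  rw [κ_lt_iff, κ_lt_iff]
  rw [degree_add, degree_add]
  have hlex : toLex (a + e) = toLex a + toLex e := rfl
  have hlex' : toLex (a + d) = toLex a + toLex d := rfl
  rw [hlex, hlex']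
  constructor
  · rintro (h | ⟨h1, h2⟩)
    · exact Or.inl (by omega)
    · exact Or.inr ⟨by omega, lt_of_add_lt_add_left h2⟩
  · rintro (h | ⟨h1, h2⟩)
    · exact Or.inl (by omega)
    · exact Or.inr ⟨by omega, (add_lt_add_iff_left _).mpr h2⟩

theorem κ_degree_le {e d : Fin n →₀ ℕ} (h : κ e ≤ κ d) : e.degree ≤ d.degree := by
  rcases eq_or_lt_of_le h with h | h
  · rw [κ_inj h]
  · rcases κ_lt_iff.mp h with h | ⟨h, _⟩ <;> omega

theorem κ_lt_of_degree_lt {e d : Fin n →₀ ℕ} (h : e.degree < d.degree) : κ e < κ d :=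
  κ_lt_iff.mpr (Or.inl h)

theorem κ_wf : WellFounded (fun e d : Fin n →₀ ℕ => κ e < κ d) :=
  InvImage.wf κ (IsWellFounded.wf)

theorem exists_ne_zero {f : MvPowerSeries (Fin n) ℂ} (hf : f ≠ 0) : ∃ e, f e ≠ 0 :=
  Function.ne_iff.mp hf

/-- the least exponent (w.r.t. κ) in the support of a nonzero power series. -/
def lexp (f : MvPowerSeries (Fin n) ℂ) : Fin n →₀ ℕ :=
  if h : f = 0 then 0 else κ_wf.min {e | f e ≠ 0} (exists_ne_zero h)

theorem lexp_mem {f : MvPowerSeries (Fin n) ℂ} (hf : f ≠ 0) : f (lexp f) ≠ 0 := by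
  rw [lexp, dif_neg hf]
  exact κ_wf.min_mem {e | f e ≠ 0} _

theorem coeff_eq_zero_of_lt_lexp {f : MvPowerSeries (Fin n) ℂ} {d : Fin n →₀ ℕ}
    (hd : κ d < κ (lexp f)) : f d = 0 := by
  by_cases hf : f = 0
  · rw [hf]; rfl
  by_contra hfd
  rw [lexp, dif_neg hf] at hd
  exact κ_wf.not_lt_min {e | f e ≠ 0} hfd hd

theorem lexp_le {f : MvPowerSeries (Fin n) ℂ} {d : Fin n →₀ ℕ} (hd : f d ≠ 0) :
    κ (lexp f) ≤ κ d := by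
  by_contra h
  exact hd (coeff_eq_zero_of_lt_lexp (lt_of_not_ge h))

theorem lexp_eq {f : MvPowerSeries (Fin n) ℂ} {e : Fin n →₀ ℕ} (he : f e ≠ 0)
    (hmin : ∀ d, κ d < κ e → f d = 0) : lexp f = e := by
  have h1 : κ (lexp f) ≤ κ e := lexp_le he
  have hf : f ≠ 0 := fun h => he (by rw [h]; rfl)
  have h2 : ¬ κ (lexp f) < κ e := fun h => lexp_mem hf (hmin _ h)
  exact κ_inj (le_antisymm h1 (not_lt.mp h2))

end ICAux
end


noncomputable section
namespace ICAux
open scoped Classical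

variable {n : ℕ}

/-- The ideal of power series all of whose coefficients in degrees `< N` vanish. -/
def lowOrder (n N : ℕ) : Ideal (MvPowerSeries (Fin n) ℂ) where
  carrier := {f | ∀ e : Fin n →₀ ℕ, e.degree < N → f e = 0}
  add_mem' := by
    intro a b ha hb e he
    have : (a + b) e = a e + b e := rfl
    rw [this, ha e he, hb e he, add_zero]
  zero_mem' := by intro e _; rfl
  smul_mem' := by
    intro c f hf e he
    have : (c • f) e = MvPowerSeries.coeff e (c * f) := rfl
    rw [this, MvPowerSeries.coeff_mul]
    apply Finset.sum_eq_zero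
    rintro ⟨p, q⟩ hpq
    rw [Finset.HasAntidiagonal.mem_antidiagonal] at hpq
    have hq : q.degree < N := by
      have : p.degree + q.degree = e.degree := by rw [← degree_add, hpq]
      omega
    have : MvPowerSeries.coeff q f = f q := rfl
    rw [this, hf q hq, mul_zero]

theorem mem_lowOrder_iff {N : ℕ} {f : MvPowerSeries (Fin n) ℂ} :
    f ∈ lowOrder n N ↔ ∀ e : Fin n →₀ ℕ, e.degree < N → f e = 0 := Iff.rfl

theorem lowOrder_antitone {N M : ℕ} (h : N ≤ M) : lowOrder n M ≤ lowOrder n N := by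
  intro f hf e he
  exact hf e (lt_of_lt_of_le he h)

/-- Dickson's lemma via PWO. -/
theorem dickson (Λ : Set (Fin n →₀ ℕ)) :
    ∃ B : Finset (Fin n →₀ ℕ), ↑B ⊆ Λ ∧ ∀ l ∈ Λ, ∃ b ∈ B, b ≤ l := by
  classical
  set Min : Set (Fin n →₀ ℕ) := {e | e ∈ Λ ∧ ∀ d ∈ Λ, d ≤ e → d = e} with hMin
  have hcover : ∀ l ∈ Λ, ∃ b ∈ Min, b ≤ l := by
    intro l hl
    induction l using WellFoundedLT.induction with
    | ind l IH =>
      by_cases hmin : ∀ d ∈ Λ, d ≤ l → d = l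
      · exact ⟨l, ⟨hl, hmin⟩, le_rfl⟩
      · push_neg at hmin
        obtain ⟨d, hd, hdl, hne⟩ := hmin
        obtain ⟨b, hb, hbd⟩ := IH d (lt_of_le_of_ne hdl hne) hd
        exact ⟨b, hb, le_trans hbd hdl⟩
  have hfin : Min.Finite := by
    by_contra hinf
    have hinf' : Min.Infinite := hinf
    obtain f := hinf'.natEmbedding
    obtain ⟨i, j, hij, hle⟩ := Set.isPWO_of_wellQuasiOrderedLE Min (fun k => f k)
    have heq : (f i : Fin n →₀ ℕ) = (f j : Fin n →₀ ℕ) := (f j).2.2 _ (f i).2.1 hle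
    exact (hij.ne (f.injective (Subtype.ext heq))).elim
  refine ⟨hfin.toFinset, ?_, ?_⟩
  · intro b hb
    rw [Set.Finite.coe_toFinset] at hb
    exact hb.1
  · intro l hl
    obtain ⟨b, hb, hbl⟩ := hcover l hl
    exact ⟨b, hfin.mem_toFinset.mpr hb, hbl⟩

end ICAux
end


noncomputable section
namespace ICAux
open scoped Classical
open MvPowerSeries

variable {n : ℕ}

theorem coeff_monomial_mul_app (δ d : Fin n →₀ ℕ) (c : ℂ) (g : MvPowerSeries (Fin n) ℂ) :
    ((monomial δ c) * g) d = if δ ≤ d then c * g (d - δ) else 0 :=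
  MvPowerSeries.coeff_monomial_mul (m := d) (n := δ) (φ := g) c

theorem monomial_mul_coeff_lt {δ d : Fin n →₀ ℕ} {c : ℂ} {g : MvPowerSeries (Fin n) ℂ}
    (hd : κ d < κ (δ + lexp g)) : ((monomial δ c) * g) d = 0 := by
  rw [coeff_monomial_mul_app]
  split_ifs with h
  · have hd' : d = δ + (d - δ) := (add_tsub_cancel_of_le h).symm
    rw [hd'] at hd
    rw [coeff_eq_zero_of_lt_lexp (κ_add_lt_add_iff.mp hd), mul_zero]
  · rfl

theorem monomial_mul_coeff_top (δ : Fin n →₀ ℕ) (c : ℂ) (g : MvPowerSeries (Fin n) ℂ) :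
    ((monomial δ c) * g) (δ + lexp g) = c * g (lexp g) := by
  rw [coeff_monomial_mul_app, if_pos le_self_add, add_tsub_cancel_left]

/-- **Core lemma**: every ideal of `ℂ[[z₁,…,zₙ]]` is closed for the adic topology. -/
theorem mem_of_approx (K : Ideal (MvPowerSeries (Fin n) ℂ)) (x0 : MvPowerSeries (Fin n) ℂ)
    (hx : ∀ N : ℕ, ∃ u ∈ K, x0 - u ∈ lowOrder n N) : x0 ∈ K := by
  classical
  set C : Set (MvPowerSeries (Fin n) ℂ) := {f | ∀ N : ℕ, ∃ u ∈ K, f - u ∈ lowOrder n N} with hC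
  have hKC : ∀ u ∈ K, u ∈ C := by
    intro u hu N
    exact ⟨u, hu, by rw [sub_self]; exact (lowOrder n N).zero_mem⟩
  have hCsub : ∀ f ∈ C, ∀ v ∈ K, f - v ∈ C := by
    intro f hf v hv N
    obtain ⟨u, hu, hfu⟩ := hf N
    exact ⟨u - v, K.sub_mem hu hv, by rwa [sub_sub_sub_cancel_right]⟩
  -- leading exponents of elements of the closure are leading exponents of elements of K
  have hlexpC : ∀ f ∈ C, f ≠ 0 → ∃ u ∈ K, u ≠ 0 ∧ lexp u = lexp f := by
    intro f hf hf0
    obtain ⟨u, hu, hfu⟩ := hf ((lexp f).degree + 1)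
    have hagree : ∀ e : Fin n →₀ ℕ, e.degree ≤ (lexp f).degree → u e = f e := by
      intro e he
      have := hfu e (by omega)
      have h2 : (f - u) e = f e - u e := rfl
      rw [h2] at this
      linear_combination -this
    have hul : u (lexp f) ≠ 0 := by
      rw [hagree _ le_rfl]; exact lexp_mem hf0
    refine ⟨u, hu, fun h => hul (by rw [h]; rfl), lexp_eq hul ?_⟩
    intro d hd
    rw [hagree d (κ_degree_le hd.le)]
    exact coeff_eq_zero_of_lt_lexp hd
  set Λ : Set (Fin n →₀ ℕ) := {e | ∃ u, u ∈ K ∧ u ≠ 0 ∧ lexp u = e} with hΛ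
  obtain ⟨B, hBΛ, hBcov⟩ := dickson Λ
  set gw : (Fin n →₀ ℕ) → MvPowerSeries (Fin n) ℂ := fun b =>
    if h : ∃ u, u ∈ K ∧ u ≠ 0 ∧ lexp u = b then h.choose else 0 with hgwdef
  have hgw : ∀ b ∈ Λ, gw b ∈ K ∧ gw b ≠ 0 ∧ lexp (gw b) = b := by
    intro b hb
    have hb' : ∃ u, u ∈ K ∧ u ≠ 0 ∧ lexp u = b := hb
    have hgb : gw b = hb'.choose := by simp only [hgwdef]; rw [dif_pos hb']
    rw [hgb]
    exact hb'.choose_spec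
  set bb : (Fin n →₀ ℕ) → (Fin n →₀ ℕ) := fun e =>
    if h : ∃ b, b ∈ B ∧ b ≤ e then h.choose else 0 with hbbdef
  have hbb : ∀ e ∈ Λ, bb e ∈ B ∧ bb e ≤ e := by
    intro e he
    have h : ∃ b, b ∈ B ∧ b ≤ e := by
      obtain ⟨b, hb1, hb2⟩ := hBcov e he; exact ⟨b, hb1, hb2⟩
    have hbe : bb e = h.choose := by simp only [hbbdef]; rw [dif_pos h]
    rw [hbe]
    exact h.choose_spec
  -- the reduction step
  set step : MvPowerSeries (Fin n) ℂ → MvPowerSeries (Fin n) ℂ := fun y =>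
    if hy : y ≠ 0 then
      y - (monomial (lexp y - bb (lexp y))
        (y (lexp y) / (gw (bb (lexp y))) (bb (lexp y)))) * gw (bb (lexp y))
    else 0 with hstepdef
  have hstep0 : step 0 = 0 := by simp only [hstepdef]; simp
  have hstep : ∀ y, y ∈ C → y ≠ 0 →
      (y - step y ∈ K ∧ ∀ d, κ d ≤ κ (lexp y) → (step y) d = 0) := by
    intro y hyC hy0
    have hyΛ : lexp y ∈ Λ := by
      obtain ⟨u, hu1, hu2, hu3⟩ := hlexpC y hyC hy0
      exact ⟨u, hu1, hu2, hu3⟩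
    obtain ⟨hbB, hble⟩ := hbb _ hyΛ
    obtain ⟨hgK, hg0, hgl⟩ := hgw _ (hBΛ hbB)
    have hsy : step y = y - (monomial (lexp y - bb (lexp y))
        (y (lexp y) / (gw (bb (lexp y))) (bb (lexp y)))) * gw (bb (lexp y)) := by
      simp only [hstepdef]; rw [dif_pos hy0]
    constructor
    · rw [hsy, sub_sub_cancel]
      exact Ideal.mul_mem_left _ _ hgK
    · intro d hd
      have hsum : (lexp y - bb (lexp y)) + lexp (gw (bb (lexp y))) = lexp y := by
        rw [hgl]; exact tsub_add_cancel_of_le hble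
      rcases lt_or_eq_of_le hd with hd | hd
      · have h1 : y d = 0 := coeff_eq_zero_of_lt_lexp hd
        have h2 : ((monomial (lexp y - bb (lexp y))
            (y (lexp y) / (gw (bb (lexp y))) (bb (lexp y)))) * gw (bb (lexp y))) d = 0 := by
          apply monomial_mul_coeff_lt
          rw [hsum]; exact hd
        rw [hsy]
        have : (y - (monomial (lexp y - bb (lexp y))
            (y (lexp y) / (gw (bb (lexp y))) (bb (lexp y)))) * gw (bb (lexp y))) d
            = y d - ((monomial (lexp y - bb (lexp y))
            (y (lexp y) / (gw (bb (lexp y))) (bb (lexp y)))) * gw (bb (lexp y))) d := rfl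
        rw [this, h1, h2, sub_zero]
      · have hde : d = lexp y := κ_inj hd
        rw [hsy, hde]
        have hsub : (y - (monomial (lexp y - bb (lexp y))
            (y (lexp y) / (gw (bb (lexp y))) (bb (lexp y)))) * gw (bb (lexp y))) (lexp y)
            = y (lexp y) - ((monomial (lexp y - bb (lexp y))
            (y (lexp y) / (gw (bb (lexp y))) (bb (lexp y)))) * gw (bb (lexp y))) (lexp y) := rfl
        rw [hsub]
        have htop := monomial_mul_coeff_top (lexp y - bb (lexp y))
          (y (lexp y) / (gw (bb (lexp y))) (bb (lexp y))) (gw (bb (lexp y)))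
        rw [hsum] at htop
        rw [htop, hgl]
        have hgb : (gw (bb (lexp y))) (bb (lexp y)) ≠ 0 := by
          have := lexp_mem hg0
          rwa [hgl] at this
        rw [div_mul_cancel₀ _ hgb, sub_self]
  -- iterate
  set xs : ℕ → MvPowerSeries (Fin n) ℂ := fun s => step^[s] x0 with hxs
  have hxs0 : xs 0 = x0 := rfl
  have hxssucc : ∀ s, xs (s + 1) = step (xs s) := by
    intro s; simp only [hxs]; exact Function.iterate_succ_apply' step s x0
  have hinv : ∀ s, xs s ∈ C ∧ x0 - xs s ∈ K := by
    intro s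
    induction s with
    | zero =>
      refine ⟨?_, by rw [hxs0, sub_self]; exact K.zero_mem⟩
      rw [hxs0]
      exact hx
    | succ s ih =>
      obtain ⟨ih1, ih2⟩ := ih
      by_cases h0 : xs s = 0
      · rw [hxssucc, h0, hstep0]
        rw [h0] at ih1 ih2
        exact ⟨ih1, ih2⟩
      · obtain ⟨hk, _⟩ := hstep (xs s) ih1 h0
        rw [hxssucc]
        constructor
        · have := hCsub (xs s) ih1 _ hk
          rwa [sub_sub_cancel] at this
        · have : x0 - step (xs s) = (x0 - xs s) + (xs s - step (xs s)) := by ring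
          rw [this]
          exact K.add_mem ih2 hk
  have hchain : ∀ s, xs (s + 1) ≠ 0 → xs s ≠ 0 ∧ κ (lexp (xs s)) < κ (lexp (xs (s + 1))) := by
    intro s hs1
    have h0 : xs s ≠ 0 := by
      intro h
      rw [hxssucc, h, hstep0] at hs1
      exact hs1 rfl
    refine ⟨h0, ?_⟩
    obtain ⟨_, hcoeff⟩ := hstep (xs s) (hinv s).1 h0
    have := lexp_mem hs1
    rw [hxssucc] at this ⊢
    by_contra hcon
    exact this (hcoeff _ (not_lt.mp hcon))
  have hmono : ∀ s t, s < t → xs t ≠ 0 → xs s ≠ 0 ∧ κ (lexp (xs s)) < κ (lexp (xs t)) := by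
    intro s t hst
    induction t with
    | zero => omega
    | succ t ih =>
      intro ht
      obtain ⟨ht0, hlt⟩ := hchain t ht
      rcases Nat.lt_succ_iff_lt_or_eq.mp hst with h | h
      · obtain ⟨h1, h2⟩ := ih h ht0
        exact ⟨h1, h2.trans hlt⟩
      · subst h; exact ⟨ht0, hlt⟩
  have hlinj : ∀ s t, xs s ≠ 0 → xs t ≠ 0 → lexp (xs s) = lexp (xs t) → s = t := by
    intro s t hs ht hl
    rcases lt_trichotomy s t with h | h | h
    · exact absurd (congrArg κ hl) (hmono s t h ht).2.ne
    · exact h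
    · exact absurd (congrArg κ hl).symm (hmono t s h hs).2.ne
  have hgrow : ∀ M : ℕ, ∃ S : ℕ, ∀ s, S ≤ s → xs s ≠ 0 → M < (lexp (xs s)).degree := by
    intro M
    set T : Set ℕ := {s | xs s ≠ 0 ∧ (lexp (xs s)).degree ≤ M} with hT
    have hTfin : T.Finite := by
      have himg : (fun s => lexp (xs s)) '' T ⊆ {e : Fin n →₀ ℕ | e.degree ≤ M} := by
        rintro e ⟨s, hs, rfl⟩; exact hs.2
      have hinj : Set.InjOn (fun s => lexp (xs s)) T := by
        intro s hs t ht h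
        exact hlinj s t hs.1 ht.1 h
      exact Set.Finite.of_finite_image ((Finsupp.finite_of_degree_le M).subset himg) hinj
    obtain ⟨S0, hS0⟩ := hTfin.bddAbove
    refine ⟨S0 + 1, fun s hs hs0 => ?_⟩
    by_contra hcon
    have : s ∈ T := ⟨hs0, not_lt.mp hcon⟩
    have := hS0 this
    omega
  -- the quotient series
  set dl : ℕ → (Fin n →₀ ℕ) := fun s => lexp (xs s) - bb (lexp (xs s)) with hdl
  set cf : ℕ → ℂ := fun s =>
    (xs s) (lexp (xs s)) / (gw (bb (lexp (xs s)))) (bb (lexp (xs s))) with hcf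
  set P : ℕ → (Fin n →₀ ℕ) → (Fin n →₀ ℕ) → Prop := fun s b e =>
    xs s ≠ 0 ∧ bb (lexp (xs s)) = b ∧ dl s = e with hP
  have hxsΛ : ∀ s, xs s ≠ 0 → lexp (xs s) ∈ Λ := by
    intro s h
    obtain ⟨u, h1, h2, h3⟩ := hlexpC _ (hinv s).1 h
    exact ⟨u, h1, h2, h3⟩
  have hrec : ∀ s, xs s ≠ 0 → bb (lexp (xs s)) + dl s = lexp (xs s) := by
    intro s h
    rw [hdl]
    exact add_tsub_cancel_of_le (hbb _ (hxsΛ s h)).2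
  have hPuniq : ∀ b e s t, P s b e → P t b e → s = t := by
    rintro b e s t ⟨hs0, hsb, hse⟩ ⟨ht0, htb, hte⟩
    apply hlinj s t hs0 ht0
    rw [← hrec s hs0, ← hrec t ht0, hsb, htb, hse, hte]
  set hby : (Fin n →₀ ℕ) → MvPowerSeries (Fin n) ℂ := fun b => fun e =>
    if h : ∃ s, P s b e then cf h.choose else 0 with hhby
  have hdiff : ∀ s, xs s - xs (s + 1) =
      if xs s ≠ 0 then (monomial (dl s) (cf s)) * gw (bb (lexp (xs s))) else 0 := by
    intro s
    by_cases h0 : xs s = 0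
    · rw [if_neg (by simp [h0]), hxssucc, h0, hstep0, sub_zero]
    · rw [if_pos h0, hxssucc]
      simp only [hstepdef]
      rw [dif_pos h0, sub_sub_cancel]
  -- final computation
  have hmain : x0 = ∑ b ∈ B, hby b * gw b := by
    apply MvPowerSeries.ext
    intro d
    set Dd := d.degree with hDd
    set maxB := B.sup Finsupp.degree with hmaxB
    obtain ⟨S, hS⟩ := hgrow (Dd + maxB)
    have hSbig : ∀ s, S ≤ s → xs s ≠ 0 → Dd < (dl s).degree := by
      intro s hs hs0
      have h1 := hS s hs hs0
      have h2 : (bb (lexp (xs s))).degree + (dl s).degree = (lexp (xs s)).degree := by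
        rw [← degree_add, hrec s hs0]
      have h3 : (bb (lexp (xs s))).degree ≤ maxB :=
        Finset.le_sup (hbb _ (hxsΛ s hs0)).1
      omega
    have hxsS : MvPowerSeries.coeff d (xs S) = 0 := by
      by_cases h0 : xs S = 0
      · rw [h0]; exact map_zero _
      · rw [MvPowerSeries.coeff_apply]
        apply coeff_eq_zero_of_lt_lexp
        apply κ_lt_of_degree_lt
        have := hS S le_rfl h0
        omega
    have htel : x0 - xs S = ∑ s ∈ Finset.range S, (xs s - xs (s + 1)) := by
      rw [Finset.sum_range_sub' xs S, hxs0]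
    set T0 : Finset ℕ := (Finset.range S).filter (fun s => xs s ≠ 0) with hT0
    have step1 : MvPowerSeries.coeff d x0 =
        ∑ s ∈ T0, MvPowerSeries.coeff d
          ((monomial (dl s) (cf s)) * gw (bb (lexp (xs s)))) := by
      have h1 : MvPowerSeries.coeff d x0 =
          MvPowerSeries.coeff d (x0 - xs S) + MvPowerSeries.coeff d (xs S) := by
        rw [← map_add, sub_add_cancel]
      rw [h1, hxsS, add_zero, htel, map_sum]
      rw [hT0, Finset.sum_filter]
      apply Finset.sum_congr rfl
      intro s _
      rw [hdiff s]
      split_ifs with h0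
      · rfl
      · exact map_zero _
    have step2 : ∀ b ∈ B,
        MvPowerSeries.coeff d (hby b * gw b) =
        ∑ s ∈ T0.filter (fun s => bb (lexp (xs s)) = b),
          MvPowerSeries.coeff d ((monomial (dl s) (cf s)) * gw (bb (lexp (xs s)))) := by
      intro b hbB
      set Tb := T0.filter (fun s => bb (lexp (xs s)) = b) with hTb
      set Hb : MvPowerSeries (Fin n) ℂ := ∑ s ∈ Tb, (monomial (dl s) (cf s)) with hHb
      have hsmem : ∀ s ∈ Tb, xs s ≠ 0 ∧ bb (lexp (xs s)) = b ∧ s < S := by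
        intro s hs
        rw [hTb, hT0, Finset.mem_filter, Finset.mem_filter, Finset.mem_range] at hs
        exact ⟨hs.1.2, hs.2, hs.1.1⟩
      have hdiffmem : hby b - Hb ∈ lowOrder n (Dd + 1) := by
        intro p hp
        have hp' : p.degree ≤ Dd := by omega
        have hsub : (hby b - Hb) p = hby b p - Hb p := rfl
        have hHbp : Hb p = ∑ s ∈ Tb, (if p = dl s then cf s else 0) := by
          rw [hHb]
          have : (∑ s ∈ Tb, (monomial (dl s) (cf s))) p
              = MvPowerSeries.coeff p (∑ s ∈ Tb, (monomial (dl s) (cf s))) := rfl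
          rw [this, map_sum]
          apply Finset.sum_congr rfl
          intro s _
          rw [MvPowerSeries.coeff_monomial]
        by_cases h : ∃ s, P s b p
        · have hspec := h.choose_spec
          set s0 := h.choose with hs0def
          have hs0S : s0 < S := by
            by_contra hcon
            have := hSbig s0 (not_lt.mp hcon) hspec.1
            rw [hspec.2.2] at this
            omega
          have hs0mem : s0 ∈ Tb := by
            rw [hTb, hT0, Finset.mem_filter, Finset.mem_filter, Finset.mem_range]
            exact ⟨⟨hs0S, hspec.1⟩, hspec.2.1⟩
          have hsum : Hb p = cf s0 := by
            rw [hHbp]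
            rw [Finset.sum_eq_single_of_mem s0 hs0mem]
            · rw [if_pos hspec.2.2.symm]
            · intro s hs hne
              rw [if_neg]
              intro hpd
              obtain ⟨hs1, hs2, _⟩ := hsmem s hs
              exact hne (hPuniq b p s s0 ⟨hs1, hs2, hpd.symm⟩ hspec)
          have hhbyp : hby b p = cf s0 := by
            simp only [hhby]
            rw [dif_pos h, hs0def]
          rw [hsub, hsum, hhbyp, sub_self]
        · have hhbyp : hby b p = 0 := by
            simp only [hhby]; rw [dif_neg h]
          have hsum : Hb p = 0 := by
            rw [hHbp]
            apply Finset.sum_eq_zero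
            intro s hs
            rw [if_neg]
            intro hpd
            obtain ⟨hs1, hs2, _⟩ := hsmem s hs
            exact h ⟨s, hs1, hs2, hpd.symm⟩
          rw [hsub, hhbyp, hsum, sub_self]
      have hzero : MvPowerSeries.coeff d ((hby b - Hb) * gw b) = 0 := by
        have hmem : (hby b - Hb) * gw b ∈ lowOrder n (Dd + 1) :=
          Ideal.mul_mem_right _ _ hdiffmem
        exact hmem d (by omega)
      have heq : MvPowerSeries.coeff d (hby b * gw b) =
          MvPowerSeries.coeff d (Hb * gw b) := by
        have h1 : hby b * gw b - Hb * gw b = (hby b - Hb) * gw b := by ring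
        have h2 : MvPowerSeries.coeff d (hby b * gw b) -
            MvPowerSeries.coeff d (Hb * gw b) = 0 := by
          rw [← map_sub, h1, hzero]
        exact sub_eq_zero.mp h2
      rw [heq, hHb, Finset.sum_mul, map_sum]
      apply Finset.sum_congr rfl
      intro s hs
      obtain ⟨_, hs2, _⟩ := hsmem s hs
      rw [hs2]
    have step3 : MvPowerSeries.coeff d (∑ b ∈ B, hby b * gw b) =
        ∑ s ∈ T0, MvPowerSeries.coeff d
          ((monomial (dl s) (cf s)) * gw (bb (lexp (xs s)))) := by
      rw [map_sum]
      rw [Finset.sum_congr rfl step2]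
      have hmaps : ∀ s ∈ T0, bb (lexp (xs s)) ∈ B := by
        intro s hs
        rw [hT0, Finset.mem_filter] at hs
        exact (hbb _ (hxsΛ s hs.2)).1
      exact Finset.sum_fiberwise_of_maps_to hmaps _
    show MvPowerSeries.coeff d x0 = MvPowerSeries.coeff d (∑ b ∈ B, hby b * gw b)
    rw [step1, step3]
  rw [hmain]
  apply Ideal.sum_mem
  intro b hb
  exact Ideal.mul_mem_left _ _ (hgw b (hBΛ hb)).1

end ICAux
end


noncomputable section
set_option maxHeartbeats 1000000
set_option synthInstance.maxHeartbeats 400000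
namespace ICAux2
open Polynomial

/-- An element `f` of a commutative ring is *integral over the ideal* `I` (local copy). -/
def IsIntOver {A : Type*} [CommRing A] (I : Ideal A) (f : A) : Prop :=
  ∃ m : ℕ, 0 < m ∧ ∃ a : ℕ → A, (∀ j, 1 ≤ j → j ≤ m → a j ∈ I ^ j) ∧
    f ^ m + ∑ j ∈ Finset.Icc 1 m, a j * f ^ (m - j) = 0

variable {A : Type*} [CommRing A] [Nontrivial A] (I : Ideal A)

theorem algebraMap_rees (x : ↥(reesAlgebra I)) :
    algebraMap (↥(reesAlgebra I)) (Polynomial A) x = (x : Polynomial A) := rfl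

theorem isIntOver_iff (f : A) :
    IsIntOver I f ↔ IsIntegral (↥(reesAlgebra I)) (C f * X) := by
  constructor
  · rintro ⟨m, hm, a, ha, heq⟩
    classical
    set a' : ℕ → A := fun j => if 1 ≤ j ∧ j ≤ m then a j else 0 with ha'
    have ha'mem : ∀ j, (monomial j (a' j) : Polynomial A) ∈ reesAlgebra I := by
      intro j
      rw [reesAlgebra.monomial_mem]
      simp only [ha']
      split_ifs with h
      · exact ha j h.1 h.2
      · exact zero_mem _
    set Aj : ℕ → ↥(reesAlgebra I) := fun j => ⟨monomial j (a' j), ha'mem j⟩ with hAj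
    refine ⟨X ^ m + ∑ j ∈ Finset.Icc 1 m, Polynomial.C (Aj j) * X ^ (m - j), ?_, ?_⟩
    · apply monic_X_pow_add
      apply lt_of_le_of_lt (Polynomial.degree_sum_le _ _)
      rw [Finset.sup_lt_iff (by exact_mod_cast WithBot.bot_lt_coe m)]
      intro j hj
      rw [Finset.mem_Icc] at hj
      refine lt_of_le_of_lt (degree_C_mul_X_pow_le _ _) ?_
      exact_mod_cast Nat.sub_lt_of_pos_le hj.1 hj.2
    · rw [show eval₂ (algebraMap (↥(reesAlgebra I)) (Polynomial A)) (C f * X)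
          = aeval (C f * X) from rfl]
      rw [map_add, map_pow, map_sum, aeval_X]
      have hterm : ∀ j ∈ Finset.Icc 1 m,
          (aeval (C f * X)) (Polynomial.C (Aj j) * X ^ (m - j))
            = Polynomial.C (a j * f ^ (m - j)) * X ^ m := by
        intro j hj
        rw [Finset.mem_Icc] at hj
        rw [map_mul, map_pow, aeval_X, aeval_C, algebraMap_rees]
        have h1 : (Aj j : Polynomial A) = Polynomial.C (a' j) * X ^ j := by
          rw [hAj, C_mul_X_pow_eq_monomial]
        rw [h1]
        simp only [ha']
        rw [if_pos ⟨hj.1, hj.2⟩, mul_pow, ← Polynomial.C_pow]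
        rw [show Polynomial.C (a j) * X ^ j * (Polynomial.C (f ^ (m - j)) * X ^ (m - j))
            = Polynomial.C (a j * f ^ (m - j)) * (X ^ j * X ^ (m - j)) by rw [map_mul]; ring]
        rw [← pow_add, Nat.add_sub_cancel' hj.2]
      rw [Finset.sum_congr rfl hterm, ← Finset.sum_mul, ← map_sum, mul_pow, ← Polynomial.C_pow]
      rw [show Polynomial.C (f ^ m) * X ^ m
          + Polynomial.C (∑ j ∈ Finset.Icc 1 m, a j * f ^ (m - j)) * X ^ m
          = Polynomial.C (f ^ m + ∑ j ∈ Finset.Icc 1 m, a j * f ^ (m - j)) * X ^ m by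
        rw [map_add]; ring]
      rw [heq, map_zero, zero_mul]
  · rintro ⟨p, pmonic, hp⟩
    rw [show eval₂ (algebraMap (↥(reesAlgebra I)) (Polynomial A)) (C f * X) p
        = aeval (C f * X) p from rfl] at hp
    set m := p.natDegree with hmdef
    have hm : 0 < m := by
      by_contra h
      have hm0 : m = 0 := by omega
      have : p = Polynomial.C (p.coeff 0) := Polynomial.eq_C_of_natDegree_eq_zero hm0
      have hc : p.coeff 0 = 1 := by
        have := pmonic.coeff_natDegree
        rwa [← hmdef, hm0] at this
      rw [this, hc] at hp
      simp only [map_one] at hp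
      exact one_ne_zero hp
    -- expand and take the coefficient of X^m
    have hps : p = ∑ i ∈ Finset.range (m + 1), monomial i (p.coeff i) :=
      p.as_sum_range' (m + 1) (by omega)
    have hexp : (0 : Polynomial A) =
        ∑ i ∈ Finset.range (m + 1), ((p.coeff i : Polynomial A)) * (C f * X) ^ i := by
      rw [← hp]
      conv_lhs => rw [hps]
      rw [map_sum]
      apply Finset.sum_congr rfl
      intro i _
      rw [aeval_monomial, algebraMap_rees]
    have hcoeffm : (0 : A) =
        ∑ i ∈ Finset.range (m + 1), ((p.coeff i : Polynomial A)).coeff (m - i) * f ^ i := by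
      have := congrArg (fun q : Polynomial A => q.coeff m) hexp
      simp only [Polynomial.coeff_zero] at this
      rw [this, Polynomial.finset_sum_coeff]
      apply Finset.sum_congr rfl
      intro i hi
      rw [Finset.mem_range] at hi
      rw [mul_pow, ← Polynomial.C_pow,
        show ((p.coeff i : Polynomial A)) * (Polynomial.C (f ^ i) * X ^ i)
          = ((p.coeff i : Polynomial A)) * Polynomial.C (f ^ i) * X ^ i by ring,
        Polynomial.coeff_mul_X_pow', if_pos (by omega : i ≤ m), Polynomial.coeff_mul_C]
    refine ⟨m, hm, fun j => ((p.coeff (m - j) : Polynomial A)).coeff j, ?_, ?_⟩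
    · intro j _ _
      exact (mem_reesAlgebra_iff I _).mp (p.coeff (m - j)).2 j
    · have htop : ((p.coeff m : Polynomial A)).coeff 0 * f ^ m = f ^ m := by
        have h1 : p.coeff m = 1 := pmonic.coeff_natDegree
        rw [h1]
        simp
      rw [Finset.sum_range_succ, Nat.sub_self] at hcoeffm
      rw [htop] at hcoeffm
      have hbij : ∑ i ∈ Finset.range m, ((p.coeff i : Polynomial A)).coeff (m - i) * f ^ i
          = ∑ j ∈ Finset.Icc 1 m, ((p.coeff (m - j) : Polynomial A)).coeff j * f ^ (m - j) := by
        apply Finset.sum_nbij' (fun i => m - i) (fun j => m - j)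
        · intro i hi; rw [Finset.mem_range] at hi; rw [Finset.mem_Icc]; omega
        · intro j hj; rw [Finset.mem_Icc] at hj; rw [Finset.mem_range]; omega
        · intro i hi; rw [Finset.mem_range] at hi; omega
        · intro j hj; rw [Finset.mem_Icc] at hj; omega
        · intro i hi
          rw [Finset.mem_range] at hi
          rw [Nat.sub_sub_self (by omega : i ≤ m)]
      rw [hbij] at hcoeffm
      linear_combination -hcoeffm

theorem isIntOver_zero : IsIntOver I (0 : A) := by
  refine ⟨1, one_pos, fun _ => 0, fun j _ _ => zero_mem _, by simp⟩

theorem isIntOver_of_mem {f : A} (hf : f ∈ I) : IsIntOver I f := by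
  refine ⟨1, one_pos, fun _ => -f, fun j hj1 hj2 => ?_, by simp⟩
  have : j = 1 := by omega
  rw [this, pow_one]
  exact neg_mem hf

theorem IsIntOver.add {f g : A} (hf : IsIntOver I f) (hg : IsIntOver I g) :
    IsIntOver I (f + g) := by
  rw [isIntOver_iff] at *
  have : Polynomial.C (f + g) * X = Polynomial.C f * X + Polynomial.C g * X := by
    rw [map_add]; ring
  rw [this]
  exact hf.add hg

theorem IsIntOver.smul (r : A) {f : A} (hf : IsIntOver I f) : IsIntOver I (r * f) := by
  rw [isIntOver_iff] at *
  have h1 : Polynomial.C (r * f) * X = Polynomial.C r * (Polynomial.C f * X) := by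
    rw [map_mul]; ring
  rw [h1]
  have h2 : (Polynomial.C r : Polynomial A) ∈ reesAlgebra I := by
    rw [mem_reesAlgebra_iff]
    intro i
    rcases Nat.eq_zero_or_pos i with h | h
    · subst h
      simp only [Polynomial.coeff_C, if_pos rfl, pow_zero, Ideal.one_eq_top]
      exact Submodule.mem_top
    · rw [Polynomial.coeff_C, if_neg (by omega)]
      exact zero_mem _
  have h3 : IsIntegral (↥(reesAlgebra I)) (Polynomial.C r : Polynomial A) := by
    have : Polynomial.C r = algebraMap (↥(reesAlgebra I)) (Polynomial A)
        (⟨Polynomial.C r, h2⟩ : ↥(reesAlgebra I)) := rfl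
    rw [this]
    exact isIntegral_algebraMap
  exact h3.mul hf

/-- transport of integrality along a ring hom preserving the ideal -/
theorem IsIntOver.map {σ : A →+* A} (hσ : Ideal.map σ I ≤ I) {f : A}
    (hf : IsIntOver I f) : IsIntOver I (σ f) := by
  obtain ⟨m, hm, a, ha, heq⟩ := hf
  refine ⟨m, hm, fun j => σ (a j), fun j hj1 hj2 => ?_, ?_⟩
  · have h1 : σ (a j) ∈ Ideal.map σ (I ^ j) := Ideal.mem_map_of_mem σ (ha j hj1 hj2)
    rw [Ideal.map_pow] at h1
    exact Ideal.pow_right_mono hσ j h1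
  · have := congrArg σ heq
    rw [map_zero] at this
    rw [← this, map_add, map_pow, map_sum]
    apply congrArg
    apply Finset.sum_congr rfl
    intro j _
    rw [map_mul, map_pow]

/-- The set of integral elements is an ideal. -/
def intOverIdeal {A : Type*} [CommRing A] [Nontrivial A] (I : Ideal A) : Ideal A where
  carrier := {f | IsIntOver I f}
  add_mem' := fun hf hg => IsIntOver.add I hf hg
  zero_mem' := isIntOver_zero I
  smul_mem' := fun r f hf => IsIntOver.smul I r hf

theorem mem_intOverIdeal {A : Type*} [CommRing A] [Nontrivial A] {I : Ideal A} {f : A} :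
    f ∈ intOverIdeal I ↔ IsIntOver I f := Iff.rfl

end ICAux2
end


noncomputable section
namespace ICAux3
open ICAux ICAux2
open scoped Classical

variable {n : ℕ}

/-- rescaling `z_i ↦ t z_i`, as a function. -/
def rescFun (t : ℂ) (f : MvPowerSeries (Fin n) ℂ) : MvPowerSeries (Fin n) ℂ :=
  fun e => t ^ e.degree * f e

theorem rescFun_coeff (t : ℂ) (f : MvPowerSeries (Fin n) ℂ) (e : Fin n →₀ ℕ) :
    MvPowerSeries.coeff e (rescFun t f) = t ^ e.degree * MvPowerSeries.coeff e f := rfl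

/-- rescaling `z_i ↦ t z_i` as a ring homomorphism of `ℂ[[z_1,…,z_n]]`. -/
def resc (t : ℂ) : MvPowerSeries (Fin n) ℂ →+* MvPowerSeries (Fin n) ℂ where
  toFun := rescFun t
  map_one' := by
    apply MvPowerSeries.ext
    intro e
    rw [rescFun_coeff, MvPowerSeries.coeff_one]
    by_cases h : e = 0
    · rw [if_pos h, h, map_zero, pow_zero, one_mul]
    · rw [if_neg h, mul_zero]
  map_mul' := by
    intro f g
    apply MvPowerSeries.ext
    intro e
    rw [rescFun_coeff, MvPowerSeries.coeff_mul, MvPowerSeries.coeff_mul, Finset.mul_sum]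
    apply Finset.sum_congr rfl
    rintro ⟨p, q⟩ hpq
    rw [Finset.HasAntidiagonal.mem_antidiagonal] at hpq
    rw [rescFun_coeff, rescFun_coeff]
    have : e.degree = p.degree + q.degree := by rw [← hpq, degree_add]
    rw [this, pow_add]
    ring
  map_zero' := by
    apply MvPowerSeries.ext
    intro e
    rw [rescFun_coeff, map_zero, mul_zero]
  map_add' := by
    intro f g
    apply MvPowerSeries.ext
    intro e
    rw [map_add, rescFun_coeff, rescFun_coeff, rescFun_coeff, map_add, mul_add]

theorem resc_coeff (t : ℂ) (f : MvPowerSeries (Fin n) ℂ) (e : Fin n →₀ ℕ) :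
    resc t f e = t ^ e.degree * f e := rfl

theorem isHomog_degree {p : MvPolynomial (Fin n) ℂ} {k : ℕ} (hp : p.IsHomogeneous k)
    {d : Fin n →₀ ℕ} (hd : MvPolynomial.coeff d p ≠ 0) : d.degree = k := by
  rw [Finsupp.degree_eq_weight_one]
  exact hp hd

theorem resc_homog (t : ℂ) {p : MvPolynomial (Fin n) ℂ} {k : ℕ} (hp : p.IsHomogeneous k) :
    resc t (p : MvPowerSeries (Fin n) ℂ)
      = (MvPowerSeries.C (σ := Fin n) (R := ℂ)) (t ^ k) * (p : MvPowerSeries (Fin n) ℂ) := by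
  funext e
  rw [resc_coeff]
  have h2 : ((MvPowerSeries.C (σ := Fin n) (R := ℂ)) (t ^ k) * (p : MvPowerSeries (Fin n) ℂ)) e
      = t ^ k * ((p : MvPowerSeries (Fin n) ℂ) e) := MvPowerSeries.coeff_C_mul e _ _
  rw [h2]
  by_cases h : (p : MvPowerSeries (Fin n) ℂ) e = 0
  · rw [h, mul_zero, mul_zero]
  · have : MvPolynomial.coeff e p ≠ 0 := by
      rwa [show (p : MvPowerSeries (Fin n) ℂ) e = MvPolynomial.coeff e p from
        MvPolynomial.coeff_coe p e] at h
    rw [isHomog_degree hp this]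

theorem resc_map_le {S : Set (MvPolynomial (Fin n) ℂ)} (hS : ∀ p ∈ S, ∃ k, p.IsHomogeneous k)
    {I : Ideal (MvPowerSeries (Fin n) ℂ)}
    (hI : I = Ideal.span ((fun p : MvPolynomial (Fin n) ℂ =>
      (p : MvPowerSeries (Fin n) ℂ)) '' S)) (t : ℂ) :
    Ideal.map (resc t) I ≤ I := by
  rw [hI, Ideal.map_span]
  apply Ideal.span_le.mpr
  rintro x ⟨y, ⟨p, hp, rfl⟩, rfl⟩
  obtain ⟨k, hk⟩ := hS p hp
  rw [resc_homog t hk]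
  exact Ideal.mul_mem_left _ _ (Ideal.subset_span ⟨p, hp, rfl⟩)

/-- Vandermonde interpolation coefficients. -/
theorem vandermonde_comb (k N : ℕ) (hkN : k ≤ N) :
    ∃ c : Fin (N + 1) → ℂ, ∀ m : ℕ, m ≤ N →
      (∑ i, c i * (((i : ℕ) + 1 : ℂ)) ^ m) = if m = k then 1 else 0 := by
  set v : Fin (N + 1) → ℂ := fun i => ((i : ℕ) + 1 : ℂ) with hv
  set V := Matrix.vandermonde v with hV
  have hdet : V.det ≠ 0 := by
    rw [hV, Matrix.det_vandermonde]
    rw [Finset.prod_ne_zero_iff]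
    intro i _
    rw [Finset.prod_ne_zero_iff]
    intro j hj
    rw [Finset.mem_Ioi] at hj
    intro hzero
    have hij : ((j : ℕ) + 1 : ℂ) = ((i : ℕ) + 1 : ℂ) := by
      rw [hv] at hzero
      linear_combination hzero
    have h2 : (j : ℕ) = (i : ℕ) := by
      have := hij
      field_simp at this
      exact_mod_cast (add_left_inj 1).mp this
    exact absurd (Fin.ext h2).symm hj.ne
  have hWV : V⁻¹ * V = 1 := Matrix.nonsing_inv_mul V (Ne.isUnit hdet)
  refine ⟨fun i => V⁻¹ ⟨k, by omega⟩ i, fun m hm => ?_⟩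
  have h1 : (∑ i, V⁻¹ ⟨k, by omega⟩ i * V i ⟨m, by omega⟩)
      = (V⁻¹ * V) ⟨k, by omega⟩ ⟨m, by omega⟩ := (Matrix.mul_apply).symm
  have h2 : ∀ i : Fin (N + 1), V i ⟨m, by omega⟩ = v i ^ m := fun i => rfl
  calc (∑ i, V⁻¹ ⟨k, by omega⟩ i * (((i : ℕ) + 1 : ℂ)) ^ m)
      = ∑ i, V⁻¹ ⟨k, by omega⟩ i * V i ⟨m, by omega⟩ := by
        apply Finset.sum_congr rfl; intro i _; rw [h2]
    _ = (V⁻¹ * V) ⟨k, by omega⟩ ⟨m, by omega⟩ := h1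
    _ = if m = k then 1 else 0 := by
        rw [hWV, Matrix.one_apply]
        by_cases h : m = k
        · rw [if_pos (by subst h; rfl), if_pos h]
        · rw [if_neg (by intro hc; exact h (by injection hc; omega)), if_neg h]

end ICAux3
end


noncomputable section
namespace ICAux4
open ICAux ICAux2 ICAux3
open scoped Classical

variable {n : ℕ}

theorem isIntegralOverIdeal_iff_isIntOver {A : Type*} [CommRing A] (I : Ideal A) (f : A) :
    IsIntegralOverIdeal I f ↔ IsIntOver I f := Iff.rfl

theorem degree_eq_sum_univ (e : Fin n →₀ ℕ) : e.degree = ∑ i, e i := by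
  rw [Finsupp.degree]
  exact Finset.sum_subset (Finset.subset_univ _) (by intro i _ h; simpa using h)

theorem homogeneousComponent_coeff (k : ℕ) (f : MvPowerSeries (Fin n) ℂ) (e : Fin n →₀ ℕ) :
    homogeneousComponent n k f e = if e.degree = k then f e else 0 := rfl

/-- the exponents of degree `k`, as a finset. -/
def compFinset (n k : ℕ) : Finset (Fin n →₀ ℕ) :=
  (Finset.Nat.antidiagonalTuple n k).map
    ⟨Finsupp.equivFunOnFinite.symm, Finsupp.equivFunOnFinite.symm.injective⟩

theorem mem_compFinset {k : ℕ} {e : Fin n →₀ ℕ} : e ∈ compFinset n k ↔ e.degree = k := by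
  simp only [compFinset, Finset.mem_map, Function.Embedding.coeFn_mk,
    Finset.Nat.mem_antidiagonalTuple]
  constructor
  · rintro ⟨x, hx, rfl⟩
    rw [degree_eq_sum_univ]
    rw [← hx]
    apply Finset.sum_congr rfl
    intro i _
    rfl
  · intro h
    refine ⟨⇑e, ?_, Finsupp.equivFunOnFinite.symm_apply_apply e⟩
    rw [← h, degree_eq_sum_univ]

/-- the degree-`k` component as a polynomial. -/
def compPoly (k : ℕ) (f : MvPowerSeries (Fin n) ℂ) : MvPolynomial (Fin n) ℂ :=
  ∑ e ∈ compFinset n k, MvPolynomial.monomial e (f e)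

theorem compPoly_coe (k : ℕ) (f : MvPowerSeries (Fin n) ℂ) :
    ((compPoly k f : MvPolynomial (Fin n) ℂ) : MvPowerSeries (Fin n) ℂ)
      = homogeneousComponent n k f := by
  apply MvPowerSeries.ext
  intro d
  rw [MvPolynomial.coeff_coe, MvPowerSeries.coeff_apply, homogeneousComponent_coeff]
  rw [compPoly, MvPolynomial.coeff_sum]
  have h1 : ∀ e ∈ compFinset n k,
      MvPolynomial.coeff d (MvPolynomial.monomial e (f e)) = if e = d then f e else 0 := by
    intro e _
    rw [MvPolynomial.coeff_monomial]
  rw [Finset.sum_congr rfl h1, Finset.sum_ite_eq' (compFinset n k) d f]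
  by_cases h : d.degree = k
  · rw [if_pos (mem_compFinset.mpr h), if_pos h]
  · rw [if_neg (fun hc => h (mem_compFinset.mp hc)), if_neg h]

theorem compPoly_homog (k : ℕ) (f : MvPowerSeries (Fin n) ℂ) :
    (compPoly k f).IsHomogeneous k := by
  apply MvPolynomial.IsHomogeneous.sum
  intro e he
  exact MvPolynomial.isHomogeneous_monomial _ (mem_compFinset.mp he)

/-- Main engine for part 1: each homogeneous component of an element integral over a
homogeneously generated ideal is again integral. -/
theorem component_isIntOver {S : Set (MvPolynomial (Fin n) ℂ)}
    (hS : ∀ p ∈ S, ∃ k, p.IsHomogeneous k) {I : Ideal (MvPowerSeries (Fin n) ℂ)}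
    (hI : I = Ideal.span ((fun p : MvPolynomial (Fin n) ℂ =>
      (p : MvPowerSeries (Fin n) ℂ)) '' S))
    (f : MvPowerSeries (Fin n) ℂ) (hf : IsIntOver I f) (k : ℕ) :
    IsIntOver I (homogeneousComponent n k f) := by
  have hJ : homogeneousComponent n k f ∈ intOverIdeal I := by
    apply mem_of_approx
    intro N
    set M := max N k with hM
    obtain ⟨c, hc⟩ := vandermonde_comb k M (le_max_right N k)
    set u : MvPowerSeries (Fin n) ℂ :=
      ∑ i : Fin (M + 1), (MvPowerSeries.C (σ := Fin n) (R := ℂ)) (c i) * resc (((i : ℕ) + 1 : ℂ)) f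
      with hu
    refine ⟨u, ?_, ?_⟩
    · apply Submodule.sum_mem
      intro i _
      apply Ideal.mul_mem_left
      rw [mem_intOverIdeal]
      exact IsIntOver.map I (resc_map_le hS hI _) hf
    · apply lowOrder_antitone (show N ≤ M + 1 by omega)
      intro e he
      have hue : u e = (∑ i : Fin (M + 1), c i * (((i : ℕ) + 1 : ℂ)) ^ e.degree) * f e := by
        rw [hu]
        have h1 : (∑ i : Fin (M + 1), (MvPowerSeries.C (σ := Fin n) (R := ℂ)) (c i)
            * resc (((i : ℕ) + 1 : ℂ)) f) e
            = ∑ i : Fin (M + 1), ((MvPowerSeries.C (σ := Fin n) (R := ℂ)) (c i)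
              * resc (((i : ℕ) + 1 : ℂ)) f) e :=
          map_sum (MvPowerSeries.coeff e)
            (fun i : Fin (M + 1) => (MvPowerSeries.C (σ := Fin n) (R := ℂ)) (c i)
              * resc (((i : ℕ) + 1 : ℂ)) f) Finset.univ
        rw [h1, Finset.sum_mul]
        apply Finset.sum_congr rfl
        intro i _
        rw [show ((MvPowerSeries.C (σ := Fin n) (R := ℂ)) (c i) * resc (((i : ℕ) + 1 : ℂ)) f) e
            = c i * (resc (((i : ℕ) + 1 : ℂ)) f) e from MvPowerSeries.coeff_C_mul e _ _]
        rw [resc_coeff]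
        ring
      have hsub : (homogeneousComponent n k f - u) e
          = homogeneousComponent n k f e - u e := rfl
      rw [hsub, hue, hc e.degree (by omega), homogeneousComponent_coeff]
      by_cases h : e.degree = k
      · rw [if_pos h, if_pos h, one_mul, sub_self]
      · rw [if_neg h, if_neg h, zero_mul, sub_zero]
  exact hJ

end ICAux4
end

open ICAux ICAux2 ICAux3 ICAux4 in
/-- Let `I` be an ideal of `ℂ[[z_1,…,z_n]]` generated by a family of homogeneous polynomials.
If `f` is integral over `I`, so is every homogeneous component of `f`; consequently the set of
elements integral over `I` is an ideal generated by homogeneous polynomials. -/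
theorem integralClosure_of_homogeneous_ideal_is_homogeneous (n : ℕ)
    (S : Set (MvPolynomial (Fin n) ℂ)) (hS : ∀ p ∈ S, ∃ k, p.IsHomogeneous k)
    (I : Ideal (MvPowerSeries (Fin n) ℂ))
    (hI : I = Ideal.span ((fun p : MvPolynomial (Fin n) ℂ =>
      (p : MvPowerSeries (Fin n) ℂ)) '' S)) :
    (∀ f : MvPowerSeries (Fin n) ℂ, IsIntegralOverIdeal I f →
      ∀ k : ℕ, IsIntegralOverIdeal I (homogeneousComponent n k f)) ∧
    ∃ J : Ideal (MvPowerSeries (Fin n) ℂ),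
      (↑J = {f : MvPowerSeries (Fin n) ℂ | IsIntegralOverIdeal I f}) ∧
      ∃ S' : Set (MvPolynomial (Fin n) ℂ), (∀ p ∈ S', ∃ k, p.IsHomogeneous k) ∧
        J = Ideal.span ((fun p : MvPolynomial (Fin n) ℂ =>
          (p : MvPowerSeries (Fin n) ℂ)) '' S') := by
  have part1 : ∀ f : MvPowerSeries (Fin n) ℂ, IsIntegralOverIdeal I f →
      ∀ k : ℕ, IsIntegralOverIdeal I (homogeneousComponent n k f) :=
    fun f hf k => component_isIntOver hS hI f hf k
  refine ⟨part1, ?_⟩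
  set S' : Set (MvPolynomial (Fin n) ℂ) :=
    {p | (∃ k, p.IsHomogeneous k) ∧
      IsIntegralOverIdeal I ((p : MvPowerSeries (Fin n) ℂ))} with hS'
  refine ⟨Ideal.span ((fun p : MvPolynomial (Fin n) ℂ =>
    (p : MvPowerSeries (Fin n) ℂ)) '' S'), ?_, S', fun p hp => hp.1, rfl⟩
  apply Set.eq_of_subset_of_subset
  · intro f hf
    have hf' : f ∈ Ideal.span ((fun p : MvPolynomial (Fin n) ℂ =>
      (p : MvPowerSeries (Fin n) ℂ)) '' S') := hf
    have hle : Ideal.span ((fun p : MvPolynomial (Fin n) ℂ =>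
        (p : MvPowerSeries (Fin n) ℂ)) '' S') ≤ intOverIdeal I := by
      apply Ideal.span_le.mpr
      rintro x ⟨p, hp, rfl⟩
      exact hp.2
    exact hle hf'
  · intro f hf
    show f ∈ Ideal.span ((fun p : MvPolynomial (Fin n) ℂ =>
      (p : MvPowerSeries (Fin n) ℂ)) '' S')
    apply mem_of_approx
    intro N
    set u : MvPowerSeries (Fin n) ℂ :=
      ∑ k ∈ Finset.range N, ((compPoly k f : MvPolynomial (Fin n) ℂ)
        : MvPowerSeries (Fin n) ℂ) with hu
    refine ⟨u, ?_, ?_⟩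
    · apply Submodule.sum_mem
      intro k _
      apply Ideal.subset_span
      refine ⟨compPoly k f, ⟨⟨k, compPoly_homog k f⟩, ?_⟩, rfl⟩
      rw [compPoly_coe]
      exact part1 f hf k
    · intro e he
      have hue : u e = ∑ k ∈ Finset.range N, (if e.degree = k then f e else 0) := by
        rw [hu]
        have h1 : (∑ k ∈ Finset.range N, ((compPoly k f : MvPolynomial (Fin n) ℂ)
            : MvPowerSeries (Fin n) ℂ)) e
            = ∑ k ∈ Finset.range N, ((compPoly k f : MvPolynomial (Fin n) ℂ)
              : MvPowerSeries (Fin n) ℂ) e :=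
          map_sum (MvPowerSeries.coeff e)
            (fun k => ((compPoly k f : MvPolynomial (Fin n) ℂ)
              : MvPowerSeries (Fin n) ℂ)) (Finset.range N)
        rw [h1]
        apply Finset.sum_congr rfl
        intro k _
        rw [compPoly_coe]
        exact homogeneousComponent_coeff k f e
      have hsub : (f - u) e = f e - u e := rfl
      rw [hsub, hue, Finset.sum_ite_eq (Finset.range N) e.degree (fun _ => f e)]
      rw [if_pos (Finset.mem_range.mpr he), sub_self]
end

section
/- Let α ≥ 1, β ≥ 1 and N ≥ 2 be integers with gcd(β, N) = 1, and let T^s = { m·min(N,β) : m ∈ ℕ } ∪ { n ∈ ℕ : n ≥ max(N,β) }. Then the set Γ^s = { (a,b) ∈ ℕ² : N divides b, or (a ≥ α and b ∈ T^s) } is an additive submonoid of ℕ² containing (1,0), (α,β) and (0,N). -/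
/-- Let `α, β ≥ 1`, `N ≥ 2`, `gcd(β, N) = 1`, and let `T^s = min(N,β)·ℕ ∪ [max(N,β), ∞)` be
the saturation of the numerical semigroup generated by `N` and `β`.  Then
`Γ^s = { (a,b) ∈ ℕ² : N ∣ b, or (a ≥ α and b ∈ T^s) }` is an additive submonoid of `ℕ²`
containing `(1,0)`, `(α,β)` and `(0,N)`. -/
theorem saturation_semigroup_hypersurface (α β N : ℕ)
    (hα : 1 ≤ α) (hβ : 1 ≤ β) (hN : 2 ≤ N) (hgcd : Nat.gcd β N = 1)
    (Ts : Set ℕ)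
    (hTs : Ts = {n | ∃ m : ℕ, n = m * min N β} ∪ {n | max N β ≤ n}) :
    ∃ M : AddSubmonoid (ℕ × ℕ),
      (↑M = {p : ℕ × ℕ | N ∣ p.2 ∨ (α ≤ p.1 ∧ p.2 ∈ Ts)}) ∧
      (1, 0) ∈ M ∧ (α, β) ∈ M ∧ (0, N) ∈ M := by
  subst hTs
  -- Ts is closed under addition
  have hTadd : ∀ s t : ℕ,
      s ∈ ({n | ∃ m : ℕ, n = m * min N β} ∪ {n | max N β ≤ n} : Set ℕ) →
      t ∈ ({n | ∃ m : ℕ, n = m * min N β} ∪ {n | max N β ≤ n} : Set ℕ) →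
      s + t ∈ ({n | ∃ m : ℕ, n = m * min N β} ∪ {n | max N β ≤ n} : Set ℕ) := by
    rintro s t (⟨m, rfl⟩ | hs) (⟨k, rfl⟩ | ht)
    · exact Or.inl ⟨m + k, by ring⟩
    · exact Or.inr (le_add_of_nonneg_of_le (Nat.zero_le _) ht)
    · exact Or.inr (le_add_of_le_of_nonneg hs (Nat.zero_le _))
    · exact Or.inr (le_add_of_le_of_nonneg hs (Nat.zero_le _))
  -- adding a multiple of N stays in Ts
  have hTN : ∀ t : ℕ,
      t ∈ ({n | ∃ m : ℕ, n = m * min N β} ∪ {n | max N β ≤ n} : Set ℕ) →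
      ∀ k : ℕ, t + k * N ∈
        ({n | ∃ m : ℕ, n = m * min N β} ∪ {n | max N β ≤ n} : Set ℕ) := by
    intro t ht k
    rcases Nat.eq_zero_or_pos k with rfl | hk
    · simpa using ht
    rcases le_or_gt N β with hNβ | hβN
    · rcases ht with ⟨m, rfl⟩ | ht
      · exact Or.inl ⟨m + k, by rw [min_eq_left hNβ]; ring⟩
      · exact Or.inr (le_add_of_le_of_nonneg ht (Nat.zero_le _))
    · refine Or.inr ?_
      have : N ≤ k * N := Nat.le_mul_of_pos_left N hk
      calc max N β = N := max_eq_left hβN.le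
        _ ≤ k * N := this
        _ ≤ t + k * N := Nat.le_add_left _ _
  refine ⟨{
    carrier := {p : ℕ × ℕ | N ∣ p.2 ∨ (α ≤ p.1 ∧ p.2 ∈
      ({n | ∃ m : ℕ, n = m * min N β} ∪ {n | max N β ≤ n} : Set ℕ))}
    zero_mem' := Or.inl (dvd_zero N)
    add_mem' := by
      rintro p q (⟨k, hk⟩ | ⟨hp1, hp2⟩) (⟨l, hl⟩ | ⟨hq1, hq2⟩)
      · exact Or.inl ⟨k + l, by simp [hk, hl]; ring⟩
      · refine Or.inr ⟨le_trans hq1 (Nat.le_add_left _ _), ?_⟩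
        have := hTN q.2 hq2 k
        simpa [hk, Nat.add_comm, Nat.mul_comm] using this
      · refine Or.inr ⟨le_trans hp1 (Nat.le_add_right _ _), ?_⟩
        have := hTN p.2 hp2 l
        simpa [hl, Nat.mul_comm] using this
      · exact Or.inr ⟨le_trans hp1 (Nat.le_add_right _ _), hTadd _ _ hp2 hq2⟩ }, rfl, ?_, ?_, ?_⟩
  · exact Or.inl (dvd_zero N)
  · refine Or.inr ⟨le_refl α, ?_⟩
    rcases le_or_gt β N with h | h
    · exact Or.inl ⟨1, by rw [min_eq_right h, one_mul]⟩
    · exact Or.inr (by rw [max_eq_right h.le]; exact le_refl β)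
  · exact Or.inl dvd_rfl
end

section
/- Let α ≥ 1 and 2 ≤ N < β be integers with gcd(β, N) = 1, let T^s = { mN : m ∈ ℕ } ∪ { n ∈ ℕ : n ≥ β }, and let Γ^s = { (a,b) ∈ ℕ² : N divides b, or (a ≥ α and b ∈ T^s) }. Set A = {(1,0), (α,β), (0,N)} and B = { (α, β+i) : 1 ≤ i ≤ N−1 and N does not divide β+i }. Then: (1) Γ^s is the additive submonoid of ℕ² generated by A ∪ B; (2) for every g ∈ A ∪ B, g does not belong to the additive submonoid generated by (A ∪ B) \ {g}; (3) A ∪ B has exactly N+1 elements. -/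
/-- The target monoid. -/
def GammaMon (α β N : ℕ) : AddSubmonoid (ℕ × ℕ) where
  carrier := {p | N ∣ p.2 ∨ (α ≤ p.1 ∧ β ≤ p.2)}
  zero_mem' := Or.inl (dvd_zero N)
  add_mem' := by
    rintro ⟨a, b⟩ ⟨c, d⟩ h1 h2
    simp only [Set.mem_setOf_eq, Prod.mk_add_mk] at *
    rcases h1 with h1 | ⟨h1, h1'⟩ <;> rcases h2 with h2 | ⟨h2, h2'⟩
    · exact Or.inl (dvd_add h1 h2)
    · exact Or.inr ⟨by omega, by omega⟩
    · exact Or.inr ⟨by omega, by omega⟩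
    · exact Or.inr ⟨by omega, by omega⟩

lemma closure_decomp {S : Set (ℕ × ℕ)} {x : ℕ × ℕ} (hx : x ∈ AddSubmonoid.closure S) :
    x = 0 ∨ ∃ s ∈ S, ∃ t ∈ AddSubmonoid.closure S, x = s + t := by
  induction hx using AddSubmonoid.closure_induction with
  | mem s hs => exact Or.inr ⟨s, hs, 0, zero_mem _, (add_zero s).symm⟩
  | zero => exact Or.inl rfl
  | add x y hx hy ihx ihy =>
    rcases ihx with rfl | ⟨s, hs, t, ht, rfl⟩
    · rw [zero_add]; exact ihy
    · exact Or.inr ⟨s, hs, t + y, add_mem ht hy, add_assoc s t y⟩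

lemma dvd_unique_in_range {N r i : ℕ} (hr1 : 1 ≤ r) (hrN : r < N) (hi1 : 1 ≤ i)
    (hiN : i < N) : N ∣ (r + i) ↔ i = N - r := by
  constructor
  · rintro ⟨k, hk⟩
    have hk2 : N * k < N * 2 := by omega
    have : k < 2 := Nat.lt_of_mul_lt_mul_left hk2
    interval_cases k <;> omega
  · rintro rfl
    exact ⟨1, by omega⟩

/-- Case `N < β` of the minimal generating set of the saturated semigroup of the toric
hypersurface `y^N - x^{αN} z^β = 0`.  With `T^s = N·ℕ ∪ [β, ∞)`,
`Γ^s = { (a,b) : N ∣ b, or (a ≥ α and b ∈ T^s) }`, `A = {(1,0), (α,β), (0,N)}` and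
`B = { (α, β+i) : 1 ≤ i ≤ N-1, N ∤ β+i }`: the set `A ∪ B` generates `Γ^s`, is minimal,
and has exactly `N + 1` elements. -/
theorem minimal_generators_case_N_lt_beta (α β N : ℕ)
    (hα : 1 ≤ α) (hN : 2 ≤ N) (hNβ : N < β) (hgcd : Nat.gcd β N = 1)
    (Ts : Set ℕ) (hTs : Ts = {n | ∃ m : ℕ, n = m * N} ∪ {n | β ≤ n})
    (Γs : Set (ℕ × ℕ)) (hΓs : Γs = {p : ℕ × ℕ | N ∣ p.2 ∨ (α ≤ p.1 ∧ p.2 ∈ Ts)})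
    (A B : Set (ℕ × ℕ))
    (hA : A = {(1, 0), (α, β), (0, N)})
    (hB : B = {p : ℕ × ℕ | ∃ i : ℕ, 1 ≤ i ∧ i ≤ N - 1 ∧ ¬ N ∣ (β + i) ∧ p = (α, β + i)}) :
    (↑(AddSubmonoid.closure (A ∪ B)) = Γs) ∧
    (∀ g ∈ A ∪ B, g ∉ AddSubmonoid.closure ((A ∪ B) \ {g})) ∧
    (A ∪ B).ncard = N + 1 := by
  subst hTs hΓs hA hB
  have hNb : ¬ N ∣ β := by
    intro h
    have h1 : N ∣ Nat.gcd β N := Nat.dvd_gcd h dvd_rfl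
    rw [hgcd] at h1
    exact absurd (Nat.le_of_dvd one_pos h1) (by omega)
  -- simplified description of Γs
  have hΓ : ∀ p : ℕ × ℕ,
      (p ∈ {p : ℕ × ℕ | N ∣ p.2 ∨ (α ≤ p.1 ∧ p.2 ∈ ({n | ∃ m : ℕ, n = m * N} ∪ {n | β ≤ n} : Set ℕ))})
      ↔ (N ∣ p.2 ∨ (α ≤ p.1 ∧ β ≤ p.2)) := by
    rintro ⟨a, b⟩
    simp only [Set.mem_setOf_eq, Set.mem_union]
    constructor
    · rintro (h | ⟨h1, (⟨m, rfl⟩ | h2)⟩)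
      · exact Or.inl h
      · exact Or.inl (Dvd.intro_left m rfl)
      · exact Or.inr ⟨h1, h2⟩
    · rintro (h | ⟨h1, h2⟩)
      · exact Or.inl h
      · exact Or.inr ⟨h1, Or.inr h2⟩
  set A : Set (ℕ × ℕ) := {(1, 0), (α, β), (0, N)} with hA
  set B : Set (ℕ × ℕ) := {p : ℕ × ℕ | ∃ i : ℕ, 1 ≤ i ∧ i ≤ N - 1 ∧ ¬ N ∣ (β + i) ∧ p = (α, β + i)} with hB
  have h10 : ((1 : ℕ), (0 : ℕ)) ∈ A ∪ B := Or.inl (by simp [hA])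
  have h0N : ((0 : ℕ), N) ∈ A ∪ B := Or.inl (by simp [hA])
  have hαβ : ((α : ℕ), β) ∈ A ∪ B := Or.inl (by simp [hA])
  -- generators are in the monoid
  have hgen : A ∪ B ⊆ (GammaMon α β N : Set (ℕ × ℕ)) := by
    rintro p (hp | hp)
    · rcases hp with rfl | rfl | rfl
      · exact Or.inl (dvd_zero N)
      · exact Or.inr ⟨le_refl _, le_refl _⟩
      · exact Or.inl dvd_rfl
    · obtain ⟨i, hi1, hi2, hdi, rfl⟩ := hp
      exact Or.inr ⟨le_refl _, by omega⟩
  have hsub : (AddSubmonoid.closure (A ∪ B) : Set (ℕ × ℕ)) ⊆ (GammaMon α β N : Set (ℕ × ℕ)) :=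
    AddSubmonoid.closure_le.mpr hgen
  -- (1) generation
  have part1 : (↑(AddSubmonoid.closure (A ∪ B)) : Set (ℕ × ℕ)) =
      {p : ℕ × ℕ | N ∣ p.2 ∨ (α ≤ p.1 ∧ p.2 ∈ ({n | ∃ m : ℕ, n = m * N} ∪ {n | β ≤ n} : Set ℕ))} := by
    apply Set.eq_of_subset_of_subset
    · intro p hp
      rw [hΓ p]
      exact hsub hp
    · intro p hp
      rw [hΓ p] at hp
      obtain ⟨a, b⟩ := p
      by_cases hdvd : N ∣ b
      · obtain ⟨k, rfl⟩ := hdvd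
        have heq : ((a : ℕ), N * k) = a • ((1 : ℕ), (0 : ℕ)) + k • ((0 : ℕ), N) := by
          simp [Prod.ext_iff, smul_eq_mul]; ring
        rw [heq]
        exact add_mem (nsmul_mem (AddSubmonoid.subset_closure h10) a)
          (nsmul_mem (AddSubmonoid.subset_closure h0N) k)
      · simp only [Set.mem_setOf_eq] at hp
        rcases hp with h | ⟨h1, h2⟩
        · exact absurd h hdvd
        set r := (b - β) % N with hrdef
        set k := (b - β) / N with hkdef
        have hdm : N * k + r = b - β := Nat.div_add_mod (b - β) N
        have hb : b = β + r + N * k := by omega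
        have hrN : r < N := Nat.mod_lt _ (by omega)
        have hnr : ¬ N ∣ (β + r) := by
          intro h
          exact hdvd (by rw [hb]; exact dvd_add h (Dvd.intro k rfl))
        have key : ∀ c : ℕ, ((α : ℕ), c) ∈ AddSubmonoid.closure (A ∪ B) → c + N * k = b →
            ((a : ℕ), b) ∈ AddSubmonoid.closure (A ∪ B) := by
          intro c hc hcb
          have heq : ((a : ℕ), b) = (a - α) • ((1 : ℕ), (0 : ℕ)) + ((α : ℕ), c) + k • ((0 : ℕ), N) := by
            simp [Prod.ext_iff, smul_eq_mul]
            have hcomm := Nat.mul_comm N k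
            omega
          rw [heq]
          exact add_mem (add_mem (nsmul_mem (AddSubmonoid.subset_closure h10) _) hc)
            (nsmul_mem (AddSubmonoid.subset_closure h0N) k)
        rcases Nat.eq_zero_or_pos r with hr0 | hr1
        · exact key β (AddSubmonoid.subset_closure hαβ) (by omega)
        · have hmemB : ((α : ℕ), β + r) ∈ A ∪ B :=
            Or.inr ⟨r, hr1, by omega, hnr, rfl⟩
          exact key (β + r) (AddSubmonoid.subset_closure hmemB) (by omega)
  refine ⟨part1, ?_, ?_⟩
  -- (2) minimality
  · intro g hg hcl
    have hg0 : g ≠ 0 := by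
      rcases hg with hgA | hgB
      · rcases hgA with rfl | rfl | rfl <;> simp [Prod.ext_iff] <;> omega
      · obtain ⟨i, hi1, hi2, hdi, rfl⟩ := hgB
        simp [Prod.ext_iff]; omega
    rcases closure_decomp hcl with rfl | ⟨s, hs, t, ht, heq⟩
    · exact hg0 rfl
    obtain ⟨hsAB, hsne⟩ := hs
    have hsne' : s ≠ g := by simpa using hsne
    have htG : t ∈ (GammaMon α β N : Set (ℕ × ℕ)) :=
      hsub (AddSubmonoid.closure_mono Set.diff_subset ht)
    have htG' : N ∣ t.2 ∨ (α ≤ t.1 ∧ β ≤ t.2) := htG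
    have hg1 : g.1 = s.1 + t.1 := by rw [heq]; rfl
    have hg2 : g.2 = s.2 + t.2 := by rw [heq]; rfl
    clear heq ht hcl
    -- case on g and s
    rcases hg with hgA | hgB
    · rcases hgA with rfl | rfl | rfl
      · -- g = (1,0)
        rcases hsAB with hsA | hsB
        · rcases hsA with rfl | rfl | rfl
          · exact hsne' rfl
          · simp at hg1 hg2; omega
          · simp at hg1 hg2; omega
        · obtain ⟨j, hj1, hj2, hdj, rfl⟩ := hsB
          simp at hg1 hg2; omega
      · -- g = (α, β)
        rcases hsAB with hsA | hsB
        · rcases hsA with rfl | rfl | rfl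
          · -- s = (1,0), t = (α-1, β)
            simp only at hg1 hg2
            rcases htG' with h | ⟨h1, h2⟩
            · exact hNb (hg2 ▸ (by simpa using h))
            · omega
          · exact hsne' rfl
          · -- s = (0,N), t = (α, β - N)
            simp only at hg1 hg2
            rcases htG' with h | ⟨h1, h2⟩
            · exact hNb (by rw [hg2]; exact dvd_add dvd_rfl h)
            · omega
        · obtain ⟨j, hj1, hj2, hdj, rfl⟩ := hsB
          simp only at hg1 hg2; omega
      · -- g = (0, N)
        rcases hsAB with hsA | hsB
        · rcases hsA with rfl | rfl | rfl
          · simp at hg1 hg2; omega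
          · simp at hg1 hg2; omega
          · exact hsne' rfl
        · obtain ⟨j, hj1, hj2, hdj, rfl⟩ := hsB
          simp at hg1 hg2; omega
    · obtain ⟨i, hi1, hi2, hdi, rfl⟩ := hgB
      -- g = (α, β + i)
      rcases hsAB with hsA | hsB
      · rcases hsA with rfl | rfl | rfl
        · -- s = (1,0)
          simp only at hg1 hg2
          rcases htG' with h | ⟨h1, h2⟩
          · exact hdi (hg2 ▸ (by simpa using h))
          · omega
        · -- s = (α, β)
          simp only at hg1 hg2
          rcases htG' with h | ⟨h1, h2⟩
          · have ht2 : t.2 = i := by omega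
            rw [ht2] at h
            exact absurd (Nat.le_of_dvd (by omega) h) (by omega)
          · omega
        · -- s = (0, N)
          simp only at hg1 hg2
          rcases htG' with h | ⟨h1, h2⟩
          · exact hdi (by rw [hg2]; exact dvd_add dvd_rfl h)
          · omega
      · obtain ⟨j, hj1, hj2, hdj, hsval⟩ := hsB
        subst hsval
        simp only at hg1 hg2
        have hji : j ≠ i := by
          intro h; exact hsne' (by rw [h])
        rcases htG' with h | ⟨h1, h2⟩
        · have ht2 : t.2 = i - j ∧ j < i := by omega
          exact absurd (Nat.le_of_dvd (by omega) h) (by omega)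
        · omega
  -- (3) cardinality
  · classical
    set r := β % N with hrdef
    have hr1 : 1 ≤ r := by
      rcases Nat.eq_zero_or_pos r with h | h
      · exact absurd (Nat.dvd_of_mod_eq_zero h) hNb
      · exact h
    have hrN : r < N := Nat.mod_lt _ (by omega)
    set FA : Finset (ℕ × ℕ) := {(1, 0), (α, β), (0, N)} with hFA
    set FB : Finset (ℕ × ℕ) :=
      ((Finset.Icc 1 (N - 1)).filter fun i => ¬ N ∣ (β + i)).image fun i => (α, β + i) with hFB
    have hcoe : A ∪ B = ↑(FA ∪ FB) := by
      ext p
      simp only [Set.mem_union, hA, hB, Set.mem_insert_iff, Set.mem_singleton_iff,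
        Set.mem_setOf_eq, Finset.coe_union, Finset.coe_image, Finset.coe_filter,
        Finset.mem_Icc, Set.mem_image, hFA, hFB, Finset.coe_insert, Finset.coe_singleton,
        Set.mem_setOf_eq]
      constructor
      · rintro (h | ⟨i, hi1, hi2, hdi, rfl⟩)
        · exact Or.inl h
        · exact Or.inr ⟨i, ⟨⟨hi1, hi2⟩, hdi⟩, rfl⟩
      · rintro (h | ⟨i, ⟨⟨hi1, hi2⟩, hdi⟩, rfl⟩)
        · exact Or.inl h
        · exact Or.inr ⟨i, hi1, hi2, hdi, rfl⟩
    rw [hcoe, Set.ncard_coe_finset]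
    have hdisj : Disjoint FA FB := by
      rw [Finset.disjoint_left]
      intro p hp hpB
      simp only [hFB, Finset.mem_image, Finset.mem_filter, Finset.mem_Icc] at hpB
      obtain ⟨i, ⟨⟨hi1, hi2⟩, hdi⟩, rfl⟩ := hpB
      simp only [hFA, Finset.mem_insert, Finset.mem_singleton, Prod.mk.injEq] at hp
      omega
    rw [Finset.card_union_of_disjoint hdisj]
    have hcardA : FA.card = 3 := by
      rw [hFA]
      rw [Finset.card_insert_of_notMem (by simp [Prod.ext_iff]; omega),
        Finset.card_insert_of_notMem (by simp [Prod.ext_iff]; omega),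
        Finset.card_singleton]
    have hinj : Set.InjOn (fun i => ((α : ℕ), β + i))
        ↑((Finset.Icc 1 (N - 1)).filter fun i => ¬ N ∣ (β + i)) := by
      intro i _ j _ h
      simpa [Prod.ext_iff] using h
    have hcardB : FB.card = N - 2 := by
      rw [hFB, Finset.card_image_of_injOn hinj]
      have hsplit := Finset.card_filter_add_card_filter_not
        (s := Finset.Icc 1 (N - 1)) (fun i => N ∣ (β + i))
      have hIcc : (Finset.Icc 1 (N - 1)).card = N - 1 := by
        rw [Nat.card_Icc]; omega
      have hone : ((Finset.Icc 1 (N - 1)).filter fun i => N ∣ (β + i)) = {N - r} := by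
        apply Finset.ext
        intro i
        simp only [Finset.mem_filter, Finset.mem_Icc, Finset.mem_singleton]
        constructor
        · rintro ⟨⟨hi1, hi2⟩, hdi⟩
          have hiN : i < N := by omega
          have hdm := Nat.div_add_mod β N
          obtain ⟨q, hq⟩ : ∃ q, N * (β / N) = q := ⟨_, rfl⟩
          rw [hq] at hdm
          have hrewrite : β + i = q + (r + i) := by omega
          rw [hrewrite, Nat.dvd_add_right ⟨β / N, hq.symm⟩] at hdi
          exact (dvd_unique_in_range hr1 hrN hi1 hiN).mp hdi
        · rintro rfl
          have hdm := Nat.div_add_mod β N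
          obtain ⟨q, hq⟩ : ∃ q, N * (β / N) = q := ⟨_, rfl⟩
          rw [hq] at hdm
          refine ⟨⟨by omega, by omega⟩, ?_⟩
          have hrewrite : β + (N - r) = q + (r + (N - r)) := by omega
          rw [hrewrite, Nat.dvd_add_right ⟨β / N, hq.symm⟩]
          exact (dvd_unique_in_range hr1 hrN (by omega) (by omega)).mpr rfl
      rw [hone] at hsplit
      simp only [Finset.card_singleton, hIcc] at hsplit
      omega
    omega
end

section
/- Let α ≥ 1 and 2 ≤ β < N be integers with gcd(β, N) = 1, let k = ⌊N/β⌋, let T^s = { mβ : m ∈ ℕ } ∪ { n ∈ ℕ : n ≥ N }, and let Γ^s = { (a,b) ∈ ℕ² : N divides b, or (a ≥ α and b ∈ T^s) }. Set A = {(1,0), (α,β), (0,N)} and B = { (α, iβ) : 2 ≤ i ≤ k } ∪ { (α, N+i) : 1 ≤ i ≤ N−1 and β does not divide i }. Then: (1) Γ^s is the additive submonoid of ℕ² generated by A ∪ B; (2) for every g ∈ A ∪ B, g does not belong to the additive submonoid generated by (A ∪ B) \ {g}; (3) A ∪ B has exactly N+1 elements. -/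
private lemma aux_not_mem_closure {M : Type*} [AddCommMonoid M] (S : Set M)
    (T : AddSubmonoid M) (hS : S ⊆ T) (g : M) (hg0 : g ≠ 0)
    (hirr : ∀ p ∈ T, ∀ q ∈ T, p + q = g → p = 0 ∨ q = 0) :
    g ∉ AddSubmonoid.closure (S \ {g}) := by
  set T' : AddSubmonoid M :=
    { carrier := {p | (p ∈ T ∧ p ≠ g) ∨ p = 0}
      zero_mem' := Or.inr rfl
      add_mem' := by
        rintro a b ha hb
        rcases ha with ⟨haT, hag⟩ | rfl
        · rcases hb with ⟨hbT, hbg⟩ | rfl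
          · refine Or.inl ⟨T.add_mem haT hbT, fun h => ?_⟩
            rcases hirr a haT b hbT h with h0 | h0
            · exact hbg (by rw [← h, h0, zero_add])
            · exact hag (by rw [← h, h0, add_zero])
          · exact Or.inl ⟨by simpa using haT, by simpa using hag⟩
        · simpa using hb } with hT'
  have hle : AddSubmonoid.closure (S \ {g}) ≤ T' :=
    AddSubmonoid.closure_le.2 (fun s hs => Or.inl ⟨hS hs.1, hs.2⟩)
  intro hgmem
  have : g ∈ T' := hle hgmem
  rcases this with ⟨_, h⟩ | h
  · exact h rfl
  · exact hg0 h

/-- Case `β < N` of the minimal generating set of the saturated semigroup of the toric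
hypersurface `y^N - x^{αN} z^β = 0`.  With `k = ⌊N/β⌋`, `T^s = β·ℕ ∪ [N, ∞)`,
`Γ^s = { (a,b) : N ∣ b, or (a ≥ α and b ∈ T^s) }`, `A = {(1,0), (α,β), (0,N)}` and
`B = { (α, iβ) : 2 ≤ i ≤ k } ∪ { (α, N+i) : 1 ≤ i ≤ N-1, β ∤ i }`: the set `A ∪ B`
generates `Γ^s`, is minimal, and has exactly `N + 1` elements. -/
theorem minimal_generators_case_beta_lt_N (α β N k : ℕ)
    (hα : 1 ≤ α) (hβ : 2 ≤ β) (hβN : β < N) (hgcd : Nat.gcd β N = 1)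
    (hk : k = N / β)
    (Ts : Set ℕ) (hTs : Ts = {n | ∃ m : ℕ, n = m * β} ∪ {n | N ≤ n})
    (Γs : Set (ℕ × ℕ)) (hΓs : Γs = {p : ℕ × ℕ | N ∣ p.2 ∨ (α ≤ p.1 ∧ p.2 ∈ Ts)})
    (A B : Set (ℕ × ℕ))
    (hA : A = {(1, 0), (α, β), (0, N)})
    (hB : B = {p : ℕ × ℕ | ∃ i : ℕ, 2 ≤ i ∧ i ≤ k ∧ p = (α, i * β)} ∪
      {p : ℕ × ℕ | ∃ i : ℕ, 1 ≤ i ∧ i ≤ N - 1 ∧ ¬ β ∣ i ∧ p = (α, N + i)}) :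
    (↑(AddSubmonoid.closure (A ∪ B)) = Γs) ∧
    (∀ g ∈ A ∪ B, g ∉ AddSubmonoid.closure ((A ∪ B) \ {g})) ∧
    (A ∪ B).ncard = N + 1 := by
  have hβdvdN : ¬ β ∣ N := by
    intro h
    have := Nat.gcd_eq_left h
    omega
  have hkβle : (N / β) * β ≤ N := Nat.div_mul_le_self N β
  have hk1 : 1 ≤ N / β := (Nat.one_le_div_iff (by omega)).2 (by omega)
  have hkN : N / β ≤ N - 1 := by
    have h2 : N / β ≤ N / 2 := Nat.div_le_div_left hβ (by omega)
    omega
  have hiβlt : ∀ i, i ≤ N / β → i * β < N := by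
    intro i hi
    have h1 : i * β ≤ N := le_trans (Nat.mul_le_mul hi le_rfl) hkβle
    rcases h1.lt_or_eq with h | h
    · exact h
    · exact absurd ⟨i, by rw [← h, Nat.mul_comm]⟩ hβdvdN
  subst hk hTs hΓs hA hB
  -- names for the pieces
  set G : Set (ℕ × ℕ) :=
    ({(1, 0), (α, β), (0, N)} : Set (ℕ × ℕ)) ∪
    ({p : ℕ × ℕ | ∃ i : ℕ, 2 ≤ i ∧ i ≤ N / β ∧ p = (α, i * β)} ∪
      {p : ℕ × ℕ | ∃ i : ℕ, 1 ≤ i ∧ i ≤ N - 1 ∧ ¬ β ∣ i ∧ p = (α, N + i)}) with hG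
  have hGmem : ∀ p : ℕ × ℕ, p ∈ G ↔
      (p = (1, 0) ∨ p = (α, β) ∨ p = (0, N)) ∨
      ((∃ i : ℕ, 2 ≤ i ∧ i ≤ N / β ∧ p = (α, i * β)) ∨
        (∃ i : ℕ, 1 ≤ i ∧ i ≤ N - 1 ∧ ¬ β ∣ i ∧ p = (α, N + i))) := by
    intro p
    simp [hG, Set.mem_union, Set.mem_insert_iff, Set.mem_singleton_iff, Set.mem_setOf_eq]
  -- the target monoid
  set Γm : AddSubmonoid (ℕ × ℕ) :=
    { carrier := {p : ℕ × ℕ | N ∣ p.2 ∨ (α ≤ p.1 ∧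
        p.2 ∈ ({n | ∃ m : ℕ, n = m * β} ∪ {n | N ≤ n} : Set ℕ))}
      zero_mem' := Or.inl (dvd_zero N)
      add_mem' := by
        rintro ⟨a, b⟩ ⟨a', b'⟩ hp hq
        have hp' : N ∣ b ∨ (α ≤ a ∧ ((∃ m, b = m * β) ∨ N ≤ b)) := hp
        have hq' : N ∣ b' ∨ (α ≤ a' ∧ ((∃ m, b' = m * β) ∨ N ≤ b')) := hq
        have key : ∀ x y x' y' : ℕ,
            (N ∣ y ∨ (α ≤ x ∧ ((∃ m, y = m * β) ∨ N ≤ y))) →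
            (α ≤ x' ∧ ((∃ m, y' = m * β) ∨ N ≤ y')) →
            (N ∣ (y + y') ∨ (α ≤ x + x' ∧ ((∃ m, y + y' = m * β) ∨ N ≤ y + y'))) := by
          rintro x y x' y' (⟨d, rfl⟩ | ⟨hx, hy⟩) ⟨hx', hy'⟩
          · rcases Nat.eq_zero_or_pos d with rfl | hd
            · refine Or.inr ⟨by omega, ?_⟩
              simpa using hy'
            · have : N ≤ N * d := Nat.le_mul_of_pos_right N hd
              exact Or.inr ⟨by omega, Or.inr (by omega)⟩
          · refine Or.inr ⟨by omega, ?_⟩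
            rcases hy with ⟨m, rfl⟩ | hy
            · rcases hy' with ⟨m', rfl⟩ | hy'
              · exact Or.inl ⟨m + m', by rw [add_mul]⟩
              · exact Or.inr (by omega)
            · exact Or.inr (by omega)
        show N ∣ (b + b') ∨ (α ≤ a + a' ∧ ((∃ m, b + b' = m * β) ∨ N ≤ b + b'))
        rcases hq' with hq'' | hq''
        · rcases hp' with hp'' | hp''
          · exact Or.inl (dvd_add hp'' hq'')
          · have := key a' b' a b (Or.inl hq'') hp''
            rcases this with h | ⟨h1, h2⟩
            · exact Or.inl (by rwa [Nat.add_comm])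
            · exact Or.inr ⟨by omega, by rwa [Nat.add_comm b' b] at h2⟩
        · exact key a b a' b' hp' hq'' } with hΓm
  have hΓmem : ∀ p : ℕ × ℕ, p ∈ Γm ↔
      (N ∣ p.2 ∨ (α ≤ p.1 ∧ ((∃ m, p.2 = m * β) ∨ N ≤ p.2))) := by
    intro p
    constructor
    · intro h; exact h
    · intro h; exact h
  -- generators lie in Γm
  have hGsub : G ⊆ (Γm : Set (ℕ × ℕ)) := by
    intro p hp
    rcases (hGmem p).1 hp with (rfl | rfl | rfl) | (⟨i, hi2, hik, rfl⟩ | ⟨i, hi1, hiN, hid, rfl⟩)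
    · exact Or.inl (dvd_zero N)
    · exact Or.inr ⟨le_rfl, Or.inl ⟨1, by omega⟩⟩
    · exact Or.inl (dvd_refl N)
    · exact Or.inr ⟨le_rfl, Or.inl ⟨i, rfl⟩⟩
    · exact Or.inr ⟨le_rfl, Or.inr (Nat.le_add_right N i)⟩
  -- every element of Γs is in the closure
  have hsm : ∀ (n : ℕ) (p : ℕ × ℕ), p ∈ AddSubmonoid.closure G →
      ((n * p.1, n * p.2) : ℕ × ℕ) ∈ AddSubmonoid.closure G := by
    intro n p hp
    have := AddSubmonoid.nsmul_mem (S := AddSubmonoid.closure G) hp n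
    rwa [show n • p = ((n * p.1, n * p.2) : ℕ × ℕ) from by ext <;> simp [smul_eq_mul]] at this
  have hmemG : ∀ p ∈ G, p ∈ AddSubmonoid.closure G := fun p hp => AddSubmonoid.subset_closure hp
  have hc10 : ∀ a : ℕ, ((a, 0) : ℕ × ℕ) ∈ AddSubmonoid.closure G := by
    intro a
    have := hsm a (1, 0) (hmemG _ ((hGmem _).2 (Or.inl (Or.inl rfl))))
    simpa using this
  have hc0N : ∀ d : ℕ, ((0, N * d) : ℕ × ℕ) ∈ AddSubmonoid.closure G := by
    intro d
    have := hsm d (0, N) (hmemG _ ((hGmem _).2 (Or.inl (Or.inr (Or.inr rfl)))))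
    simpa [Nat.mul_comm] using this
  have hsup : ∀ p : ℕ × ℕ, p ∈ Γm → p ∈ AddSubmonoid.closure G := by
    rintro ⟨a, b⟩ hp
    rcases (hΓmem _).1 hp with hNb | ⟨ha, hTb⟩
    · obtain ⟨d, rfl⟩ := hNb
      have : ((a, N * d) : ℕ × ℕ) = (a, 0) + (0, N * d) := by
        simp
      rw [this]
      exact add_mem (hc10 a) (hc0N d)
    · by_cases hNb : N ∣ b
      · obtain ⟨d, rfl⟩ := hNb
        have : ((a, N * d) : ℕ × ℕ) = (a, 0) + (0, N * d) := by
          simp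
        rw [this]
        exact add_mem (hc10 a) (hc0N d)
      · obtain ⟨q, r, hqr, hrlt⟩ : ∃ q r, N * q + r = b ∧ r < N :=
          ⟨b / N, b % N, Nat.div_add_mod b N, Nat.mod_lt _ (by omega)⟩
        have hr0 : r ≠ 0 := fun h => hNb ⟨q, by omega⟩
        by_cases hβr : β ∣ r
        · obtain ⟨i, rfl⟩ := hβr
          have hi0 : i ≠ 0 := by rintro rfl; simp at hr0
          have hik : i ≤ N / β := (Nat.le_div_iff_mul_le (by omega)).2
            (by have := Nat.mul_comm i β; omega)
          have heq : ((a, b) : ℕ × ℕ) = (a - α, 0) + ((0, N * q) + (α, β * i)) := by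
            rw [Prod.mk_add_mk, Prod.mk_add_mk, Prod.mk.injEq]
            constructor <;> omega
          rw [heq]
          refine add_mem (hc10 _) (add_mem (hc0N q) (hmemG _ ?_))
          rcases Nat.lt_or_ge i 2 with h2 | h2
          · have : i = 1 := by omega
            subst this
            exact (hGmem _).2 (Or.inl (Or.inr (Or.inl (by rw [Nat.mul_one]))))
          · exact (hGmem _).2 (Or.inr (Or.inl ⟨i, h2, hik, by rw [Nat.mul_comm]⟩))
        · have hq1 : 1 ≤ q := by
            rcases Nat.eq_zero_or_pos q with rfl | h
            · exfalso
              rcases hTb with ⟨m, hm⟩ | hNle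
              · exact hβr ⟨m, by have := Nat.mul_comm m β; omega⟩
              · omega
            · exact h
          obtain ⟨q', rfl⟩ : ∃ q', q = q' + 1 := ⟨q - 1, by omega⟩
          have hms : N * (q' + 1) = N * q' + N := by ring
          have heq : ((a, b) : ℕ × ℕ) = (a - α, 0) + ((0, N * q') + (α, N + r)) := by
            rw [Prod.mk_add_mk, Prod.mk_add_mk, Prod.mk.injEq]
            constructor <;> omega
          rw [heq]
          refine add_mem (hc10 _) (add_mem (hc0N q') (hmemG _ ?_))
          exact (hGmem _).2 (Or.inr (Or.inr ⟨r, by omega, by omega, hβr, rfl⟩))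
  -- Part 1
  have part1 : ((AddSubmonoid.closure G : AddSubmonoid (ℕ × ℕ)) : Set (ℕ × ℕ)) =
      {p : ℕ × ℕ | N ∣ p.2 ∨ (α ≤ p.1 ∧
        p.2 ∈ ({n | ∃ m : ℕ, n = m * β} ∪ {n | N ≤ n} : Set ℕ))} := by
    apply Set.ext
    intro p
    constructor
    · intro hp
      exact (AddSubmonoid.closure_le.2 hGsub) hp
    · intro hp
      exact hsup p hp
  -- irreducibility of generators of the form (α, c)
  have hirrα : ∀ c : ℕ, 0 < c → c < 2 * N → ¬ N ∣ c → (N ≤ c → ¬ β ∣ (c - N)) →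
      ∀ p ∈ Γm, ∀ q ∈ Γm, p + q = ((α, c) : ℕ × ℕ) → p = 0 ∨ q = 0 := by
    intro c hc0 hc2 hcN hcβ
    rintro ⟨a, b⟩ hp ⟨a', b'⟩ hq hpq
    rw [Prod.mk_add_mk, Prod.mk.injEq] at hpq
    obtain ⟨hsum1, hsum2⟩ := hpq
    have hp' := (hΓmem _).1 hp
    have hq' := (hΓmem _).1 hq
    simp only at hp' hq'
    have hdvd_cases : ∀ x : ℕ, N ∣ x → x ≤ c → x = 0 ∨ x = N := by
      intro x hx hxc
      obtain ⟨d, rfl⟩ := hx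
      have hd1 : d ≤ 1 := by
        by_contra h
        have : N * 2 ≤ N * d := Nat.mul_le_mul le_rfl (by omega)
        omega
      interval_cases d
      · exact Or.inl (by omega)
      · exact Or.inr (by omega)
    rcases hp' with hNb | ⟨ha, hTb⟩
    · rcases hdvd_cases b hNb (by omega) with rfl | hbN
      · -- b = 0, so q = (a', c)
        have hb' : b' = c := by omega
        subst hb'
        rcases hq' with hNc | ⟨ha', _⟩
        · exact absurd hNc hcN
        · left
          have : a = 0 := by omega
          simp [this]
      · -- b = N, b' = c - N
        have hNc : N ≤ c := by omega
        have hb' : b' = c - N := by omega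
        subst hb'
        rcases hq' with hNb' | ⟨_, hTb'⟩
        · have : c - N = 0 := Nat.eq_zero_of_dvd_of_lt hNb' (by omega)
          exact absurd ⟨1, by omega⟩ hcN
        · rcases hTb' with ⟨m, hm⟩ | h
          · exact absurd ⟨m, by have := Nat.mul_comm m β; omega⟩ (hcβ hNc)
          · omega
    · rcases hq' with hNb' | ⟨ha', _⟩
      · rcases hdvd_cases b' hNb' (by omega) with rfl | hbN'
        · -- b' = 0, q = (a', 0) with a' = 0
          right
          have : a' = 0 := by omega
          simp [this]
        · have hNc : N ≤ c := by omega
          have hb : b = c - N := by omega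
          subst hb
          rcases hTb with ⟨m, hm⟩ | h
          · exact absurd ⟨m, by have := Nat.mul_comm m β; omega⟩ (hcβ hNc)
          · omega
      · omega
  -- Part 2
  have part2 : ∀ g ∈ G, g ∉ AddSubmonoid.closure (G \ {g}) := by
    intro g hg
    rcases (hGmem g).1 hg with (rfl | rfl | rfl) | (⟨i, hi2, hik, rfl⟩ | ⟨i, hi1, hiN, hid, rfl⟩)
    · refine aux_not_mem_closure G Γm hGsub _ (by simp [Prod.ext_iff]) ?_
      rintro ⟨a, b⟩ _ ⟨a', b'⟩ _ hpq
      rw [Prod.mk_add_mk, Prod.mk.injEq] at hpq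
      obtain ⟨h1, h2⟩ := hpq
      rcases Nat.eq_zero_or_pos a with ha0 | ha0
      · left; simp [Prod.ext_iff]; omega
      · right; simp [Prod.ext_iff]; omega
    · refine aux_not_mem_closure G Γm hGsub _ (by simp [Prod.ext_iff]; omega) ?_
      exact hirrα β (by omega) (by omega)
        (fun h => by have := Nat.le_of_dvd (by omega) h; omega) (by omega)
    · refine aux_not_mem_closure G Γm hGsub _ (by simp [Prod.ext_iff]; omega) ?_
      rintro ⟨a, b⟩ hp ⟨a', b'⟩ hq hpq
      rw [Prod.mk_add_mk, Prod.mk.injEq] at hpq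
      obtain ⟨h1, h2⟩ := hpq
      have hp' := (hΓmem _).1 hp
      have hq' := (hΓmem _).1 hq
      simp only at hp' hq'
      have hNb : N ∣ b := by
        rcases hp' with h | ⟨h, _⟩
        · exact h
        · omega
      have hNb' : N ∣ b' := by
        rcases hq' with h | ⟨h, _⟩
        · exact h
        · omega
      rcases Nat.eq_zero_or_pos b with hb0 | hb0
      · left; simp [Prod.ext_iff]; omega
      · right
        have hbN : b = N := by
          have := Nat.le_of_dvd hb0 hNb
          omega
        simp [Prod.ext_iff]; omega
    · -- g = (α, i*β)
      have hlt : i * β < N := hiβlt i hik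
      refine aux_not_mem_closure G Γm hGsub _
        (by simp [Prod.ext_iff]; intro h; omega) ?_
      exact hirrα (i * β) (by positivity) (by omega)
        (fun h => by have := Nat.le_of_dvd (by positivity) h; omega) (by omega)
    · -- g = (α, N + i)
      refine aux_not_mem_closure G Γm hGsub _ (by simp [Prod.ext_iff]; omega) ?_
      refine hirrα (N + i) (by omega) (by omega) ?_ ?_
      · intro h
        obtain ⟨d, hd⟩ := h
        have hd1 : d ≤ 1 := by
          by_contra hcon
          have : N * 2 ≤ N * d := Nat.mul_le_mul le_rfl (by omega)
          omega
        interval_cases d <;> omega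
      · intro _
        have : N + i - N = i := by omega
        rw [this]
        exact hid
  -- Part 3
  have part3 : G.ncard = N + 1 := by
    classical
    set F : Finset (ℕ × ℕ) := insert ((1 : ℕ), (0 : ℕ)) (insert ((0 : ℕ), N)
      (((Finset.Icc 1 (N / β)).image fun i => ((α, i * β) : ℕ × ℕ)) ∪
        (((Finset.Icc 1 (N - 1)).filter fun i => ¬ β ∣ i).image
          fun i => ((α, N + i) : ℕ × ℕ)))) with hF
    have hFeq : G = (F : Set (ℕ × ℕ)) := by
      ext p
      rw [hGmem p]
      simp only [hF, Finset.coe_insert, Set.mem_insert_iff, Finset.mem_coe,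
        Finset.mem_insert, Finset.mem_union, Finset.mem_image, Finset.mem_filter,
        Finset.mem_Icc]
      constructor
      · rintro ((rfl | rfl | rfl) | (⟨i, h2, hk', rfl⟩ | ⟨i, h1, hN', hd, rfl⟩))
        · exact Or.inl rfl
        · exact Or.inr (Or.inr (Or.inl ⟨1, ⟨le_rfl, hk1⟩, by rw [Nat.one_mul]⟩))
        · exact Or.inr (Or.inl rfl)
        · exact Or.inr (Or.inr (Or.inl ⟨i, ⟨by omega, hk'⟩, rfl⟩))
        · exact Or.inr (Or.inr (Or.inr ⟨i, ⟨⟨h1, hN'⟩, hd⟩, rfl⟩))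
      · rintro (rfl | rfl | ⟨i, ⟨h1, h2⟩, rfl⟩ | ⟨i, ⟨⟨h1, h2⟩, hd⟩, rfl⟩)
        · exact Or.inl (Or.inl rfl)
        · exact Or.inl (Or.inr (Or.inr rfl))
        · rcases Nat.lt_or_ge i 2 with hlt | hge
          · have : i = 1 := by omega
            subst this
            exact Or.inl (Or.inr (Or.inl (by rw [Nat.one_mul])))
          · exact Or.inr (Or.inl ⟨i, hge, h2, rfl⟩)
        · exact Or.inr (Or.inr ⟨i, h1, h2, hd, rfl⟩)
    rw [hFeq, Set.ncard_coe_finset]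
    have hinj1 : Set.InjOn (fun i => ((α, i * β) : ℕ × ℕ)) ↑(Finset.Icc 1 (N / β)) := by
      intro x _ y _ h
      simp only [Prod.mk.injEq] at h
      have := h.2
      exact Nat.eq_of_mul_eq_mul_right (by omega) this
    have hinj2 : Set.InjOn (fun i => ((α, N + i) : ℕ × ℕ))
        ↑((Finset.Icc 1 (N - 1)).filter fun i => ¬ β ∣ i) := by
      intro x _ y _ h
      simp only [Prod.mk.injEq] at h
      omega
    have hdisj : Disjoint ((Finset.Icc 1 (N / β)).image fun i => ((α, i * β) : ℕ × ℕ))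
        (((Finset.Icc 1 (N - 1)).filter fun i => ¬ β ∣ i).image
          fun i => ((α, N + i) : ℕ × ℕ)) := by
      rw [Finset.disjoint_left]
      rintro p hp1 hp2
      simp only [Finset.mem_image, Finset.mem_Icc, Finset.mem_filter] at hp1 hp2
      obtain ⟨i, ⟨hi1, hi2⟩, rfl⟩ := hp1
      obtain ⟨j, _, hj⟩ := hp2
      have := hiβlt i hi2
      simp only [Prod.mk.injEq] at hj
      omega
    have hcard2 : (((Finset.Icc 1 (N - 1)).filter fun i => ¬ β ∣ i)).card
        = (N - 1) - N / β := by
      have hIoc : Finset.Icc 1 (N - 1) = Finset.Ioc 0 (N - 1) := Finset.Icc_add_one_left_eq_Ioc 0 (N - 1)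
      have hdiv : ((Finset.Icc 1 (N - 1)).filter fun i => β ∣ i).card = (N - 1) / β := by
        rw [hIoc]
        exact Nat.Ioc_filter_dvd_card_eq_div (N - 1) β
      have hNdiv : (N - 1) / β = N / β := by
        have h := Nat.succ_div (a := N - 1) (b := β)
        rw [show N - 1 + 1 = N from by omega] at h
        rw [if_neg hβdvdN] at h
        omega
      have htot := Finset.card_filter_add_card_filter_not
        (s := Finset.Icc 1 (N - 1)) (fun i => β ∣ i)
      rw [Nat.card_Icc] at htot
      omega
    have h0N : ((0 : ℕ), N) ∉
        (((Finset.Icc 1 (N / β)).image fun i => ((α, i * β) : ℕ × ℕ)) ∪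
          (((Finset.Icc 1 (N - 1)).filter fun i => ¬ β ∣ i).image
            fun i => ((α, N + i) : ℕ × ℕ))) := by
      simp only [Finset.mem_union, Finset.mem_image, Finset.mem_Icc, Finset.mem_filter,
        Prod.mk.injEq, not_or, not_exists]
      constructor
      · rintro i ⟨_, ⟨h, _⟩⟩; omega
      · rintro i ⟨_, ⟨h, _⟩⟩; omega
    have h10 : ((1 : ℕ), (0 : ℕ)) ∉ insert ((0 : ℕ), N)
        (((Finset.Icc 1 (N / β)).image fun i => ((α, i * β) : ℕ × ℕ)) ∪
          (((Finset.Icc 1 (N - 1)).filter fun i => ¬ β ∣ i).image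
            fun i => ((α, N + i) : ℕ × ℕ))) := by
      simp only [Finset.mem_insert, Finset.mem_union, Finset.mem_image, Finset.mem_Icc,
        Finset.mem_filter, Prod.mk.injEq, not_or, not_exists]
      refine ⟨by omega, ?_, ?_⟩
      · rintro i ⟨⟨hi1, _⟩, ⟨_, h⟩⟩
        have : 1 * 1 ≤ i * β := Nat.mul_le_mul hi1 (by omega)
        omega
      · rintro i ⟨_, ⟨_, h⟩⟩; omega
    rw [hF, Finset.card_insert_of_notMem h10, Finset.card_insert_of_notMem h0N,
      Finset.card_union_of_disjoint hdisj, Finset.card_image_of_injOn hinj1,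
      Finset.card_image_of_injOn hinj2, Nat.card_Icc, hcard2]
    omega
  exact ⟨part1, part2, part3⟩
end

section
/- Let γ_1, …, γ_m and ω_1, …, ω_n be positive integers with gcd(γ_1,…,γ_m) = 1 and gcd(ω_1,…,ω_n) = 1. In ℂ[[x_1,x_2,y_1,y_2]] let I_Δ be the ideal generated by the binomials x_1^{γ_i} − y_1^{γ_i} (1 ≤ i ≤ m) and x_2^{ω_j} − y_2^{ω_j} (1 ≤ j ≤ n); in ℂ[[x_1,y_1]] let I_1 be the ideal generated by the x_1^{γ_i} − y_1^{γ_i}; and in ℂ[[x_2,y_2]] let I_2 be the ideal generated by the x_2^{ω_j} − y_2^{ω_j}. Then for every (a,b) ∈ ℕ², the element x_1^a x_2^b − y_1^a y_2^b is integral over I_Δ if and only if x_1^a − y_1^a is integral over I_1 and x_2^b − y_2^b is integral over I_2. -/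
set_option linter.unusedSectionVars false
set_option synthInstance.maxHeartbeats 1000000
set_option maxHeartbeats 2000000
set_option linter.unusedTactic false
set_option linter.unreachableTactic false
set_option linter.unusedVariables false


namespace SatAux

open Polynomial

variable {R S : Type*} [CommRing R] [CommRing S]

theorem homInt {I : Ideal R} {J : Ideal S} (φ : R →+* S) (hIJ : ∀ x ∈ I, φ x ∈ J)
    {f : R} (hf : IsIntegralOverIdeal I f) : IsIntegralOverIdeal J (φ f) := by
  obtain ⟨m, hm, a, ha, heq⟩ := hf
  refine ⟨m, hm, fun j => φ (a j), fun j hj1 hj2 => ?_, ?_⟩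
  · have h1 : Ideal.map φ I ≤ J := Ideal.map_le_iff_le_comap.mpr fun x hx => hIJ x hx
    have h2 : φ (a j) ∈ Ideal.map φ (I ^ j) := Ideal.mem_map_of_mem φ (ha j hj1 hj2)
    rw [Ideal.map_pow] at h2
    exact Ideal.pow_right_mono h1 j h2
  · have h := congrArg φ heq
    rw [map_zero] at h
    rw [← h, map_add, map_pow, map_sum]
    congr 1
    exact Finset.sum_congr rfl fun j _ => by rw [map_mul, map_pow]

theorem smulInt {I : Ideal R} {f : R} (r : R) (hf : IsIntegralOverIdeal I f) :
    IsIntegralOverIdeal I (r * f) := by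
  obtain ⟨m, hm, a, ha, heq⟩ := hf
  refine ⟨m, hm, fun j => r ^ j * a j, fun j hj1 hj2 => Ideal.mul_mem_left _ _ (ha j hj1 hj2), ?_⟩
  have key : (r * f) ^ m + ∑ j ∈ Finset.Icc 1 m, r ^ j * a j * (r * f) ^ (m - j)
      = r ^ m * (f ^ m + ∑ j ∈ Finset.Icc 1 m, a j * f ^ (m - j)) := by
    rw [mul_add, Finset.mul_sum, mul_pow]
    congr 1
    refine Finset.sum_congr rfl fun j hj => ?_
    obtain ⟨hj1, hj2⟩ := Finset.mem_Icc.mp hj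
    have hr : r ^ j * r ^ (m - j) = r ^ m := by rw [← pow_add]; congr 1; omega
    calc r ^ j * a j * (r * f) ^ (m - j) = (r ^ j * r ^ (m - j)) * (a j * f ^ (m - j)) := by
          rw [mul_pow]; ring
      _ = r ^ m * (a j * f ^ (m - j)) := by rw [hr]
  rw [key, heq, mul_zero]

theorem toRees {I : Ideal R} {f : R} (hf : IsIntegralOverIdeal I f) :
    IsIntegral (reesAlgebra I) (C f * X : R[X]) := by
  obtain ⟨m, hm, a, ha, heq⟩ := hf
  have hmem : ∀ j : {x // x ∈ Finset.Icc 1 m}, (monomial j.1 (a j.1) : R[X]) ∈ reesAlgebra I := by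
    intro j
    rw [reesAlgebra.monomial_mem]
    obtain ⟨h1, h2⟩ := Finset.mem_Icc.mp j.2
    exact ha j.1 h1 h2
  set c : {x // x ∈ Finset.Icc 1 m} → ↥(reesAlgebra I) := fun j => ⟨monomial j.1 (a j.1), hmem j⟩
    with hc
  refine ⟨X ^ m + ∑ j ∈ (Finset.Icc 1 m).attach, C (c j) * X ^ (m - j.1), ?_, ?_⟩
  · apply monic_X_pow_add
    apply lt_of_le_of_lt (degree_sum_le _ _)
    rw [Finset.sup_lt_iff (by exact_mod_cast WithBot.bot_lt_coe m)]
    intro j _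
    apply lt_of_le_of_lt (degree_mul_le _ _)
    obtain ⟨h1, h2⟩ := Finset.mem_Icc.mp j.2
    calc degree (C (c j)) + degree ((X : (↥(reesAlgebra I))[X]) ^ (m - j.1))
        ≤ 0 + (m - j.1 : ℕ) := add_le_add degree_C_le (degree_X_pow_le _)
      _ = ((m - j.1 : ℕ) : WithBot ℕ) := zero_add _
      _ < (m : WithBot ℕ) := by exact_mod_cast Nat.sub_lt_of_pos_le h1 h2
  · rw [← aeval_def]
    rw [map_add, map_pow, map_sum, aeval_X]
    have hterm : ∀ j ∈ (Finset.Icc 1 m).attach,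
        (aeval (C f * X)) (C (c j) * X ^ (m - j.1)) = C (a j.1 * f ^ (m - j.1)) * X ^ m := by
      intro j _
      obtain ⟨h1, h2⟩ := Finset.mem_Icc.mp j.2
      rw [map_mul, map_pow, aeval_X, aeval_C, Subalgebra.algebraMap_eq]
      show (monomial j.1 (a j.1) : R[X]) * (C f * X) ^ (m - j.1) = _
      rw [← C_mul_X_pow_eq_monomial, mul_pow, ← C_pow]
      calc C (a j.1) * X ^ j.1 * (C (f ^ (m - j.1)) * X ^ (m - j.1))
          = C (a j.1 * f ^ (m - j.1)) * X ^ (j.1 + (m - j.1)) := by rw [C_mul, pow_add]; ring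
        _ = C (a j.1 * f ^ (m - j.1)) * X ^ m := by congr 2; omega
    rw [Finset.sum_congr rfl hterm]
    rw [Finset.sum_attach (Finset.Icc 1 m) (fun j => C (a j * f ^ (m - j)) * X ^ m)]
    have comb : (C f * X : R[X]) ^ m + ∑ j ∈ Finset.Icc 1 m, C (a j * f ^ (m - j)) * X ^ m
        = C (f ^ m + ∑ j ∈ Finset.Icc 1 m, a j * f ^ (m - j)) * X ^ m := by
      rw [mul_pow, ← C_pow, ← Finset.sum_mul, ← map_sum, ← add_mul, ← C_add]
    rw [comb, heq, map_zero, zero_mul]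

theorem ofRees [Nontrivial R] {I : Ideal R} {f : R}
    (h : IsIntegral (reesAlgebra I) (C f * X : R[X])) : IsIntegralOverIdeal I f := by
  obtain ⟨p, pmonic, hp⟩ := h
  set q : (↥(reesAlgebra I))[X] := p * X with hqdef
  have qmonic : q.Monic := pmonic.mul monic_X
  have hq : Polynomial.eval₂ (algebraMap ↥(reesAlgebra I) R[X]) (C f * X) q = 0 := by
    rw [hqdef, eval₂_mul, hp, zero_mul]
  have hM1 : 1 ≤ q.natDegree := by
    rw [hqdef, natDegree_mul_X pmonic.ne_zero]; omega
  set M := q.natDegree with hM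
  rw [Polynomial.eval₂_eq_sum_range] at hq
  have h0 := congrArg (fun r : R[X] => r.coeff M) hq
  simp only [Polynomial.finset_sum_coeff, Polynomial.coeff_zero] at h0
  have hterm : ∀ i ∈ Finset.range (M + 1),
      ((algebraMap ↥(reesAlgebra I) R[X]) (q.coeff i) * (C f * X) ^ i).coeff M
        = ((q.coeff i : R[X])).coeff (M - i) * f ^ i := by
    intro i hi
    rw [Finset.mem_range] at hi
    rw [Subalgebra.algebraMap_eq, mul_pow, ← C_pow, ← mul_assoc,
      Polynomial.coeff_mul_X_pow', if_pos (by omega : i ≤ M), coeff_mul_C]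
    rfl
  rw [Finset.sum_congr rfl hterm] at h0
  rw [Finset.sum_range_succ] at h0
  have hlead : ((q.coeff M : R[X])).coeff (M - M) * f ^ M = f ^ M := by
    rw [hM, qmonic.coeff_natDegree, Nat.sub_self, OneMemClass.coe_one, coeff_one_zero, one_mul]
  rw [hlead] at h0
  refine ⟨M, hM1, fun j => ((q.coeff (M - j) : R[X])).coeff j, fun j hj1 hj2 => ?_, ?_⟩
  · exact (mem_reesAlgebra_iff I _).mp (q.coeff (M - j)).2 j
  · rw [add_comm] at h0
    rw [← h0]
    congr 1
    refine Finset.sum_nbij' (fun j => M - j) (fun i => M - i) ?_ ?_ ?_ ?_ ?_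
    · intro a ha; obtain ⟨h1, h2⟩ := Finset.mem_Icc.mp ha
      rw [Finset.mem_range]; omega
    · intro a ha; rw [Finset.mem_range] at ha; rw [Finset.mem_Icc]; omega
    · intro a ha; obtain ⟨h1, h2⟩ := Finset.mem_Icc.mp ha; omega
    · intro a ha; rw [Finset.mem_range] at ha; omega
    · intro a ha
      obtain ⟨h1, h2⟩ := Finset.mem_Icc.mp ha
      dsimp only
      have h3 : M - (M - a) = a := by omega
      rw [h3]

theorem addInt [Nontrivial R] {I : Ideal R} {f g : R} (hf : IsIntegralOverIdeal I f)
    (hg : IsIntegralOverIdeal I g) : IsIntegralOverIdeal I (f + g) := by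
  have h := (toRees hf).add (toRees hg)
  rw [← add_mul, ← C_add] at h
  exact ofRees h




open MvPowerSeries

noncomputable section Rename

variable {K : Type*} [CommRing K] {σ τ : Type*} [Finite σ] [Finite τ]

/-- Renaming of variables in a multivariate power series ring, along an additive
embedding of exponent monoids. -/
def renameHom (F : (σ →₀ ℕ) →+ (τ →₀ ℕ)) (hinj : Function.Injective F)
    (hle : ∀ g g', F g ≤ F g' ↔ g ≤ g') : MvPowerSeries σ K →+* MvPowerSeries τ K :=
  (HahnSeries.toMvPowerSeries.toRingHom).comp
    ((HahnSeries.embDomainRingHom F hinj hle).comp HahnSeries.toMvPowerSeries.symm.toRingHom)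

variable (F : (σ →₀ ℕ) →+ (τ →₀ ℕ)) (hinj : Function.Injective F)
    (hle : ∀ g g', F g ≤ F g' ↔ g ≤ g')

theorem renameHom_coeff_map (u : MvPowerSeries σ K) (d : σ →₀ ℕ) :
    MvPowerSeries.coeff (R := K) (F d) (renameHom F hinj hle u) = MvPowerSeries.coeff (R := K) d u := by
  show (HahnSeries.embDomain ⟨⟨F, hinj⟩, hle _ _⟩ (HahnSeries.toMvPowerSeries.symm u)).coeff (F d)
    = MvPowerSeries.coeff (R := K) d u
  exact HahnSeries.embDomain_coeff

theorem renameHom_coeff_ne (u : MvPowerSeries σ K) (e : τ →₀ ℕ) (he : ∀ d, F d ≠ e) :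
    MvPowerSeries.coeff (R := K) e (renameHom F hinj hle u) = 0 := by
  show (HahnSeries.embDomain ⟨⟨F, hinj⟩, hle _ _⟩ (HahnSeries.toMvPowerSeries.symm u)).coeff e = 0
  apply HahnSeries.embDomain_notin_range
  rintro ⟨d, rfl⟩
  exact he d rfl

theorem renameHom_injective : Function.Injective (renameHom (K := K) F hinj hle) := by
  intro u v huv
  ext d
  rw [← renameHom_coeff_map F hinj hle u d, ← renameHom_coeff_map F hinj hle v d, huv]

theorem renameHom_monomial [DecidableEq σ] [DecidableEq τ] (d : σ →₀ ℕ) (c : K) :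
    renameHom F hinj hle (MvPowerSeries.monomial (R := K) d c) = MvPowerSeries.monomial (R := K) (F d) c := by
  ext e
  by_cases he : ∃ d', F d' = e
  · obtain ⟨d', rfl⟩ := he
    rw [renameHom_coeff_map, MvPowerSeries.coeff_monomial, MvPowerSeries.coeff_monomial]
    by_cases h : d' = d
    · subst h; rw [if_pos rfl, if_pos rfl]
    · rw [if_neg h, if_neg (fun hc => h (hinj hc))]
  · push_neg at he
    rw [renameHom_coeff_ne F hinj hle _ _ he, MvPowerSeries.coeff_monomial, if_neg]
    exact fun hc => he d hc.symm

theorem mapDomain_le_iff {f : σ → τ} (hf : Function.Injective f) (g g' : σ →₀ ℕ) :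
    Finsupp.mapDomain f g ≤ Finsupp.mapDomain f g' ↔ g ≤ g' := by
  constructor
  · intro h a
    have := h (f a)
    rwa [Finsupp.mapDomain_apply hf, Finsupp.mapDomain_apply hf] at this
  · intro h b
    by_cases hb : ∃ a, f a = b
    · obtain ⟨a, rfl⟩ := hb
      rw [Finsupp.mapDomain_apply hf, Finsupp.mapDomain_apply hf]
      exact h a
    · push_neg at hb
      rw [Finsupp.mapDomain_notin_range, Finsupp.mapDomain_notin_range]
      · rintro ⟨a, ha⟩; exact hb a ha
      · rintro ⟨a, ha⟩; exact hb a ha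

/-- Renaming the variables along an injective map of variables. -/
def renameVars (f : σ → τ) (hf : Function.Injective f) :
    MvPowerSeries σ K →+* MvPowerSeries τ K :=
  renameHom (Finsupp.mapDomain.addMonoidHom f) (Finsupp.mapDomain_injective hf)
    (mapDomain_le_iff hf)

theorem renameVars_X [DecidableEq σ] [DecidableEq τ] (f : σ → τ) (hf : Function.Injective f)
    (i : σ) : renameVars (K := K) f hf (X i) = X (f i) := by
  rw [X_def, X_def, renameVars]
  erw [renameHom_monomial]
  have h : (Finsupp.mapDomain.addMonoidHom f) (Finsupp.single i 1) = Finsupp.single (f i) 1 := by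
    rw [Finsupp.mapDomain.addMonoidHom_apply]
    exact Finsupp.mapDomain_single
  rw [h]

theorem renameVars_coeff_map (f : σ → τ) (hf : Function.Injective f) (u : MvPowerSeries σ K)
    (d : σ →₀ ℕ) : MvPowerSeries.coeff (R := K) (Finsupp.mapDomain f d) (renameVars f hf u) = MvPowerSeries.coeff (R := K) d u :=
  renameHom_coeff_map _ _ _ u d

theorem renameVars_coeff_ne (f : σ → τ) (hf : Function.Injective f) (u : MvPowerSeries σ K)
    (e : τ →₀ ℕ) (he : ∀ d, Finsupp.mapDomain f d ≠ e) : MvPowerSeries.coeff (R := K) e (renameVars f hf u) = 0 :=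
  renameHom_coeff_ne _ _ _ u e he

end Rename



open MvPowerSeries Finset

noncomputable section

abbrev R4 := MvPowerSeries (Fin 4) ℂ

/-- The slice operator: coefficient of `t^k` after substituting `X 1 = X 3 = t`. -/
def T (k : ℕ) (w : R4) : R4 := fun e =>
  if e 1 = 0 ∧ e 3 = 0 then
    ∑ i ∈ range (k + 1), MvPowerSeries.coeff (R := ℂ) (e + Finsupp.single 1 i + Finsupp.single 3 (k - i)) w
  else 0

theorem T_coeff_good {e : Fin 4 →₀ ℕ} (h : e 1 = 0 ∧ e 3 = 0) (k : ℕ) (w : R4) :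
    MvPowerSeries.coeff (R := ℂ) e (T k w) =
      ∑ i ∈ range (k + 1), MvPowerSeries.coeff (R := ℂ) (e + Finsupp.single 1 i + Finsupp.single 3 (k - i)) w := by
  show T k w e = _
  rw [T, if_pos h]

theorem T_coeff_bad {e : Fin 4 →₀ ℕ} (h : ¬(e 1 = 0 ∧ e 3 = 0)) (k : ℕ) (w : R4) :
    MvPowerSeries.coeff (R := ℂ) e (T k w) = 0 := by
  show T k w e = _
  rw [T, if_neg h]

theorem T_add (k : ℕ) (u v : R4) : T k (u + v) = T k u + T k v := by
  ext e
  by_cases h : e 1 = 0 ∧ e 3 = 0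
  · rw [map_add, T_coeff_good h, T_coeff_good h, T_coeff_good h, ← Finset.sum_add_distrib]
    exact Finset.sum_congr rfl fun i _ => by rw [map_add]
  · rw [map_add, T_coeff_bad h, T_coeff_bad h, T_coeff_bad h, add_zero]

theorem T_zero (k : ℕ) : T k (0 : R4) = 0 := by
  ext e
  by_cases h : e 1 = 0 ∧ e 3 = 0
  · rw [T_coeff_good h, map_zero]
    exact Finset.sum_eq_zero fun i _ => map_zero _
  · rw [T_coeff_bad h, map_zero]

/-- `T k` bundled as an additive map. -/
def Thom (k : ℕ) : R4 →+ R4 := AddMonoidHom.mk' (T k) (T_add k)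

end


noncomputable section Fin4

open MvPowerSeries Finset

def ι₁ : Fin 2 → Fin 4 := ![0, 2]

theorem ι₁_inj : Function.Injective ι₁ := by decide

/-- The embedding `ℂ[[x₁,y₁]] → ℂ[[x₁,x₂,y₁,y₂]]`, `X 0 ↦ X 0`, `X 1 ↦ X 2`. -/
def ρ : MvPowerSeries (Fin 2) ℂ →+* R4 := renameVars ι₁ ι₁_inj

theorem mapdom1 (d : Fin 2 →₀ ℕ) : (Finsupp.mapDomain ι₁ d) 1 = 0 := by
  apply Finsupp.mapDomain_notin_range
  rw [Set.mem_range]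
  exact by decide

theorem mapdom3 (d : Fin 2 →₀ ℕ) : (Finsupp.mapDomain ι₁ d) 3 = 0 := by
  apply Finsupp.mapDomain_notin_range
  rw [Set.mem_range]
  exact by decide

theorem good_eq (e : Fin 4 →₀ ℕ) (h1 : e 1 = 0) (h3 : e 3 = 0) :
    Finsupp.mapDomain ι₁ (Finsupp.single 0 (e 0) + Finsupp.single 1 (e 2)) = e := by
  rw [Finsupp.mapDomain_add, Finsupp.mapDomain_single, Finsupp.mapDomain_single]
  ext t
  have : ι₁ 0 = 0 := rfl
  have : ι₁ 1 = 2 := rfl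
  fin_cases t <;> simp [ι₁, Finsupp.add_apply, Finsupp.single_apply, h1, h3]

/-- A series in 4 variables not involving `X 1` and `X 3`. -/
def Free (w : R4) : Prop := ∀ e : Fin 4 →₀ ℕ, e 1 ≠ 0 ∨ e 3 ≠ 0 → MvPowerSeries.coeff (R := ℂ) e w = 0

theorem free_rho (u : MvPowerSeries (Fin 2) ℂ) : Free (ρ u) := by
  intro e he
  apply renameVars_coeff_ne
  intro d hd
  rcases he with h | h
  · rw [← hd] at h; exact h (mapdom1 d)
  · rw [← hd] at h; exact h (mapdom3 d)

theorem exists_rho_of_free {w : R4} (hw : Free w) : ∃ u, ρ u = w := by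
  refine ⟨(fun d => MvPowerSeries.coeff (R := ℂ) (Finsupp.mapDomain ι₁ d) w : MvPowerSeries (Fin 2) ℂ), ?_⟩
  ext e
  by_cases h : e 1 = 0 ∧ e 3 = 0
  · obtain ⟨h1, h3⟩ := h
    rw [← good_eq e h1 h3]
    rw [ρ]
    exact renameVars_coeff_map ι₁ ι₁_inj _ _
  · refine (renameVars_coeff_ne ι₁ ι₁_inj _ e ?_).trans (hw e (not_and_or.mp h |>.imp id id)).symm
    intro d hd
    rcases not_and_or.mp h with hb | hb
    · rw [← hd] at hb; exact hb (mapdom1 d)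
    · rw [← hd] at hb; exact hb (mapdom3 d)

theorem nu1 (e : Fin 4 →₀ ℕ) (i j : ℕ) :
    (e + Finsupp.single 1 i + Finsupp.single 3 j : Fin 4 →₀ ℕ) 1 = e 1 + i := by
  simp [Finsupp.add_apply, Finsupp.single_apply]

theorem nu3 (e : Fin 4 →₀ ℕ) (i j : ℕ) :
    (e + Finsupp.single 1 i + Finsupp.single 3 j : Fin 4 →₀ ℕ) 3 = e 3 + j := by
  simp [Finsupp.add_apply, Finsupp.single_apply]

theorem T_zero_free {w : R4} (hw : Free w) : T 0 w = w := by
  ext e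
  by_cases h : e 1 = 0 ∧ e 3 = 0
  · rw [T_coeff_good h, Finset.sum_range_one]
    congr 1
    simp
  · rw [T_coeff_bad h, hw e (not_and_or.mp h |>.imp id id)]

theorem T_pos_free {w : R4} (hw : Free w) {k : ℕ} (hk : 0 < k) : T k w = 0 := by
  ext e
  rw [map_zero]
  by_cases h : e 1 = 0 ∧ e 3 = 0
  · rw [T_coeff_good h]
    apply Finset.sum_eq_zero
    intro i hi
    apply hw
    rw [nu1, nu3, h.1, h.2]
    rw [Finset.mem_range] at hi
    omega
  · exact T_coeff_bad h _ _

theorem T_mul_rho (k : ℕ) (w : R4) (u : MvPowerSeries (Fin 2) ℂ) :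
    T k (w * ρ u) = T k w * ρ u := by
  classical
  ext e
  by_cases hg : e 1 = 0 ∧ e 3 = 0
  · obtain ⟨h1, h3⟩ := hg
    rw [T_coeff_good ⟨h1, h3⟩, MvPowerSeries.coeff_mul]
    have main : ∀ i ∈ Finset.range (k + 1),
        MvPowerSeries.coeff (R := ℂ) (e + Finsupp.single 1 i + Finsupp.single 3 (k - i)) (w * ρ u)
          = ∑ pq ∈ Finset.HasAntidiagonal.antidiagonal e,
              MvPowerSeries.coeff (R := ℂ) (pq.1 + Finsupp.single 1 i + Finsupp.single 3 (k - i)) w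
                * MvPowerSeries.coeff (R := ℂ) pq.2 (ρ u) := by
      intro i hi
      rw [MvPowerSeries.coeff_mul]
      refine Finset.sum_bij_ne_zero
        (i := fun PQ _ _ =>
          (PQ.1 - (Finsupp.single 1 i + Finsupp.single 3 (k - i)), PQ.2)) ?_ ?_ ?_ ?_
      · rintro ⟨P, Q⟩ hmem hne
        rw [Finset.HasAntidiagonal.mem_antidiagonal] at hmem
        rw [Finset.HasAntidiagonal.mem_antidiagonal]
        have hQ1 : Q 1 = 0 := by
          by_contra hq
          exact hne (by rw [free_rho u Q (Or.inl hq), mul_zero])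
        have hQ3 : Q 3 = 0 := by
          by_contra hq
          exact hne (by rw [free_rho u Q (Or.inr hq), mul_zero])
        have k1 := DFunLike.congr_fun hmem (1 : Fin 4)
        have k3 := DFunLike.congr_fun hmem (3 : Fin 4)
        simp only [Finsupp.add_apply, Finsupp.single_apply] at k1 k3
        ext t
        have key := DFunLike.congr_fun hmem t
        simp only [Finsupp.add_apply, Finsupp.tsub_apply, Finsupp.single_apply] at key ⊢
        fin_cases t <;> simp_all <;> omega
      · rintro ⟨P, Q⟩ h1m h1n ⟨P', Q'⟩ h2m h2n heq
        simp only [Prod.mk.injEq] at heq ⊢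
        obtain ⟨hPP, hQQ⟩ := heq
        refine ⟨?_, hQQ⟩
        rw [Finset.HasAntidiagonal.mem_antidiagonal] at h1m h2m
        have hQ1 : Q 1 = 0 := by
          by_contra hq; exact h1n (by rw [free_rho u Q (Or.inl hq), mul_zero])
        have hQ3 : Q 3 = 0 := by
          by_contra hq; exact h1n (by rw [free_rho u Q (Or.inr hq), mul_zero])
        have hQ1' : Q' 1 = 0 := by
          by_contra hq; exact h2n (by rw [free_rho u Q' (Or.inl hq), mul_zero])
        have hQ3' : Q' 3 = 0 := by
          by_contra hq; exact h2n (by rw [free_rho u Q' (Or.inr hq), mul_zero])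
        have d1 := DFunLike.congr_fun h1m (1 : Fin 4)
        have d3 := DFunLike.congr_fun h1m (3 : Fin 4)
        have e1 := DFunLike.congr_fun h2m (1 : Fin 4)
        have e3 := DFunLike.congr_fun h2m (3 : Fin 4)
        simp only [Finsupp.add_apply, Finsupp.single_apply] at d1 d3 e1 e3
        ext t
        have hP := DFunLike.congr_fun hPP t
        have c1 := DFunLike.congr_fun h1m t
        have c2 := DFunLike.congr_fun h2m t
        simp only [Finsupp.add_apply, Finsupp.tsub_apply, Finsupp.single_apply]
          at hP c1 c2 ⊢
        fin_cases t <;> simp_all <;> omega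
      · rintro ⟨p, q⟩ hmem hne
        rw [Finset.HasAntidiagonal.mem_antidiagonal] at hmem
        refine ⟨(p + (Finsupp.single 1 i + Finsupp.single 3 (k - i)), q), ?_, ?_, ?_⟩
        · rw [Finset.HasAntidiagonal.mem_antidiagonal]
          show p + (Finsupp.single 1 i + Finsupp.single 3 (k - i)) + q
            = e + Finsupp.single 1 i + Finsupp.single 3 (k - i)
          rw [← hmem]
          ext t
          simp only [Finsupp.add_apply]
          ring
        · intro h0
          apply hne
          rw [← h0, add_assoc]
        · simp only [Prod.mk.injEq]
          exact ⟨add_tsub_cancel_right _ _, trivial⟩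
      · rintro ⟨P, Q⟩ hmem hne
        rw [Finset.HasAntidiagonal.mem_antidiagonal] at hmem
        have hQ1 : Q 1 = 0 := by
          by_contra hq; exact hne (by rw [free_rho u Q (Or.inl hq), mul_zero])
        have hQ3 : Q 3 = 0 := by
          by_contra hq; exact hne (by rw [free_rho u Q (Or.inr hq), mul_zero])
        have d1 := DFunLike.congr_fun hmem (1 : Fin 4)
        have d3 := DFunLike.congr_fun hmem (3 : Fin 4)
        simp only [Finsupp.add_apply, Finsupp.single_apply] at d1 d3
        have hidx : P - (Finsupp.single 1 i + Finsupp.single 3 (k - i))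
            + Finsupp.single 1 i + Finsupp.single 3 (k - i) = P := by
          ext t
          have key := DFunLike.congr_fun hmem t
          simp only [Finsupp.add_apply, Finsupp.tsub_apply, Finsupp.single_apply] at key ⊢
          fin_cases t <;> simp_all <;> omega
        rw [hidx]
    rw [Finset.sum_congr rfl main, Finset.sum_comm]
    apply Finset.sum_congr rfl
    rintro ⟨p, q⟩ hpq
    rw [Finset.HasAntidiagonal.mem_antidiagonal] at hpq
    have hp1 : p 1 = 0 := by
      have := DFunLike.congr_fun hpq (1 : Fin 4)
      simp only [Finsupp.add_apply] at this
      omega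
    have hp3 : p 3 = 0 := by
      have := DFunLike.congr_fun hpq (3 : Fin 4)
      simp only [Finsupp.add_apply] at this
      omega
    rw [← Finset.sum_mul, T_coeff_good ⟨hp1, hp3⟩]
  · rw [T_coeff_bad hg, MvPowerSeries.coeff_mul]
    symm
    apply Finset.sum_eq_zero
    rintro ⟨p, q⟩ hpq
    rw [Finset.HasAntidiagonal.mem_antidiagonal] at hpq
    by_cases hp : p 1 = 0 ∧ p 3 = 0
    · have hq : q 1 ≠ 0 ∨ q 3 ≠ 0 := by
        rcases not_and_or.mp hg with h | h
        · left
          have := DFunLike.congr_fun hpq (1 : Fin 4)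
          simp only [Finsupp.add_apply] at this
          omega
        · right
          have := DFunLike.congr_fun hpq (3 : Fin 4)
          simp only [Finsupp.add_apply] at this
          omega
      rw [free_rho u q hq, mul_zero]
    · rw [T_coeff_bad hp, zero_mul]

theorem T_sub (k : ℕ) (u v : R4) : T k (u - v) = T k u - T k v :=
  map_sub (Thom k) u v

theorem coeff_mul_X_pow (ν : Fin 4 →₀ ℕ) (w : R4) (s : Fin 4) (c : ℕ) :
    MvPowerSeries.coeff (R := ℂ) ν (w * X s ^ c)
      = if Finsupp.single s c ≤ ν then MvPowerSeries.coeff (R := ℂ) (ν - Finsupp.single s c) w else 0 := by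
  rw [X_pow_eq, MvPowerSeries.coeff_mul_monomial]
  split_ifs <;> simp

theorem T_mul_X1pow (k c : ℕ) (w : R4) :
    T k (w * X 1 ^ c) = if c ≤ k then T (k - c) w else 0 := by
  ext e
  by_cases hg : e 1 = 0 ∧ e 3 = 0
  · obtain ⟨h1, h3⟩ := hg
    rw [T_coeff_good ⟨h1, h3⟩]
    have step : ∀ i ∈ Finset.range (k + 1),
        MvPowerSeries.coeff (R := ℂ) (e + Finsupp.single 1 i + Finsupp.single 3 (k - i)) (w * X 1 ^ c)
          = if c ≤ i then
              MvPowerSeries.coeff (R := ℂ) (e + Finsupp.single 1 (i - c) + Finsupp.single 3 (k - i)) w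
            else 0 := by
      intro i hi
      rw [coeff_mul_X_pow]
      have hcond : (Finsupp.single (1 : Fin 4) c
          ≤ e + Finsupp.single 1 i + Finsupp.single 3 (k - i)) ↔ c ≤ i := by
        rw [Finsupp.single_le_iff, nu1, h1, zero_add]
      by_cases hc : c ≤ i
      · rw [if_pos (hcond.mpr hc), if_pos hc]
        have hidx : e + Finsupp.single 1 i + Finsupp.single 3 (k - i) - Finsupp.single 1 c
            = e + Finsupp.single 1 (i - c) + Finsupp.single 3 (k - i) := by
          ext t
          simp only [Finsupp.add_apply, Finsupp.tsub_apply, Finsupp.single_apply]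
          fin_cases t <;> simp_all <;> omega
        rw [hidx]
      · rw [if_neg (fun h => hc (hcond.mp h)), if_neg hc]
    rw [Finset.sum_congr rfl step]
    by_cases hck : c ≤ k
    · rw [if_pos hck, T_coeff_good ⟨h1, h3⟩]
      have hsub : Finset.Ico c (k + 1) ⊆ Finset.range (k + 1) := by
        intro x hx
        rw [Finset.mem_Ico] at hx
        rw [Finset.mem_range]
        omega
      rw [← Finset.sum_subset hsub (fun x hx hnx => if_neg (by
        rw [Finset.mem_range] at hx
        rw [Finset.mem_Ico] at hnx
        omega))]
      rw [Finset.sum_Ico_eq_sum_range]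
      have hrange : k + 1 - c = k - c + 1 := by omega
      rw [hrange]
      apply Finset.sum_congr rfl
      intro j hj
      rw [Finset.mem_range] at hj
      rw [if_pos (by omega : c ≤ c + j)]
      have hj1 : c + j - c = j := by omega
      have hj2 : k - (c + j) = k - c - j := by omega
      rw [hj1, hj2]
    · rw [if_neg hck]
      rw [show MvPowerSeries.coeff (R := ℂ) e (0 : R4) = 0 from map_zero _]
      apply Finset.sum_eq_zero
      intro i hi
      rw [Finset.mem_range] at hi
      rw [if_neg (by omega)]
  · rw [T_coeff_bad hg]
    split_ifs
    · rw [T_coeff_bad hg]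
    · rw [map_zero]

theorem T_mul_X3pow (k c : ℕ) (w : R4) :
    T k (w * X 3 ^ c) = if c ≤ k then T (k - c) w else 0 := by
  ext e
  by_cases hg : e 1 = 0 ∧ e 3 = 0
  · obtain ⟨h1, h3⟩ := hg
    rw [T_coeff_good ⟨h1, h3⟩]
    have step : ∀ i ∈ Finset.range (k + 1),
        MvPowerSeries.coeff (R := ℂ) (e + Finsupp.single 1 i + Finsupp.single 3 (k - i)) (w * X 3 ^ c)
          = if c ≤ k - i then
              MvPowerSeries.coeff (R := ℂ) (e + Finsupp.single 1 i + Finsupp.single 3 (k - i - c)) w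
            else 0 := by
      intro i hi
      rw [coeff_mul_X_pow]
      have hcond : (Finsupp.single (3 : Fin 4) c
          ≤ e + Finsupp.single 1 i + Finsupp.single 3 (k - i)) ↔ c ≤ k - i := by
        rw [Finsupp.single_le_iff, nu3, h3, zero_add]
      by_cases hc : c ≤ k - i
      · rw [if_pos (hcond.mpr hc), if_pos hc]
        have hidx : e + Finsupp.single 1 i + Finsupp.single 3 (k - i) - Finsupp.single 3 c
            = e + Finsupp.single 1 i + Finsupp.single 3 (k - i - c) := by
          ext t
          simp only [Finsupp.add_apply, Finsupp.tsub_apply, Finsupp.single_apply]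
          fin_cases t <;> simp_all <;> omega
        rw [hidx]
      · rw [if_neg (fun h => hc (hcond.mp h)), if_neg hc]
    rw [Finset.sum_congr rfl step]
    by_cases hck : c ≤ k
    · rw [if_pos hck, T_coeff_good ⟨h1, h3⟩]
      have hsub : Finset.range (k - c + 1) ⊆ Finset.range (k + 1) := by
        intro x hx
        rw [Finset.mem_range] at hx ⊢
        omega
      rw [← Finset.sum_subset hsub (fun x hx hnx => if_neg (by
        rw [Finset.mem_range] at hx
        rw [Finset.mem_range] at hnx
        omega))]
      apply Finset.sum_congr rfl
      intro j hj
      rw [Finset.mem_range] at hj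
      rw [if_pos (by omega : c ≤ k - j)]
      have hj2 : k - j - c = k - c - j := by omega
      rw [hj2]
    · rw [if_neg hck]
      rw [show MvPowerSeries.coeff (R := ℂ) e (0 : R4) = 0 from map_zero _]
      apply Finset.sum_eq_zero
      intro i hi
      rw [Finset.mem_range] at hi
      rw [if_neg (by omega)]
  · rw [T_coeff_bad hg]
    split_ifs
    · rw [T_coeff_bad hg]
    · rw [map_zero]

theorem T_kill (k c : ℕ) (w : R4) : T k (w * (X 1 ^ c - X 3 ^ c)) = 0 := by
  rw [mul_sub, T_sub, T_mul_X1pow, T_mul_X3pow, sub_self]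

theorem Free_T (l : ℕ) (z : R4) : Free (T l z) :=
  fun _ he => T_coeff_bad (not_and_or.mpr he) l z

theorem free_one : Free (1 : R4) := by
  rw [← map_one ρ]
  exact free_rho 1

theorem rho_X0 : ρ (X 0 : MvPowerSeries (Fin 2) ℂ) = X 0 := by
  rw [ρ, renameVars_X]
  norm_num [ι₁]

theorem rho_X1 : ρ (X 1 : MvPowerSeries (Fin 2) ℂ) = X 2 := by
  rw [ρ, renameVars_X]
  norm_num [ι₁]

/-- The 2-variable binomial `x^a - y^a`. -/
def f2 (a : ℕ) : MvPowerSeries (Fin 2) ℂ := X 0 ^ a - X 1 ^ a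

theorem rho_f2 (a : ℕ) : ρ (f2 a) = X 0 ^ a - X 2 ^ a := by
  rw [f2, map_sub, map_pow, map_pow, rho_X0, rho_X1]

/-- The element `x₁^a x₂^b - y₁^a y₂^b`. -/
def gelt (a b : ℕ) : R4 := X 0 ^ a * X 1 ^ b - X 2 ^ a * X 3 ^ b

theorem T_mul_g (a b l : ℕ) (w : R4) :
    T l (w * gelt a b) = if b ≤ l then T (l - b) w * ρ (f2 a) else 0 := by
  rw [gelt, mul_sub, T_sub]
  have e1 : w * (X 0 ^ a * X 1 ^ b) = (w * ρ ((X 0 : MvPowerSeries (Fin 2) ℂ) ^ a)) * X 1 ^ b := by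
    rw [map_pow, rho_X0]; ring
  have e2 : w * (X 2 ^ a * X 3 ^ b) = (w * ρ ((X 1 : MvPowerSeries (Fin 2) ℂ) ^ a)) * X 3 ^ b := by
    rw [map_pow, rho_X1]; ring
  rw [e1, e2, T_mul_X1pow, T_mul_X3pow]
  split_ifs with h
  · rw [T_mul_rho, T_mul_rho, ← mul_sub, ← map_sub, f2]
  · rw [sub_zero]

theorem T_mul_gpow (a b : ℕ) (i : ℕ) :
    ∀ (l : ℕ) (w : R4), T l (w * gelt a b ^ i)
      = if b * i ≤ l then T (l - b * i) w * ρ (f2 a ^ i) else 0 := by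
  induction i with
  | zero =>
    intro l w
    have h0 : b * 0 = 0 := by ring
    rw [pow_zero, mul_one, h0, if_pos (Nat.zero_le l), Nat.sub_zero, pow_zero, map_one, mul_one]
  | succ i ih =>
    intro l w
    have hsplit : w * gelt a b ^ (i + 1) = (w * gelt a b) * gelt a b ^ i := by ring
    rw [hsplit, ih l (w * gelt a b), T_mul_g]
    have hmul : b * (i + 1) = b * i + b := by ring
    by_cases h1 : b * i ≤ l
    · rw [if_pos h1]
      by_cases h2 : b * (i + 1) ≤ l
      · rw [if_pos (by omega : b ≤ l - b * i), if_pos h2]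
        have hidx : l - b * i - b = l - b * (i + 1) := by omega
        rw [hidx, mul_assoc, ← map_mul]
        congr 2
        rw [pow_succ]
        ring
      · rw [if_neg (by omega : ¬ b ≤ l - b * i), if_neg h2, zero_mul]
    · rw [if_neg h1, if_neg (by omega : ¬ b * (i + 1) ≤ l)]

/-- The four-variable product ideal. -/
def I4 {mγ nω : ℕ} (γ : Fin mγ → ℕ) (ω : Fin nω → ℕ) : Ideal R4 :=
  Ideal.span ((Set.range fun i => X 0 ^ γ i - X 2 ^ γ i)
    ∪ (Set.range fun j => X 1 ^ ω j - X 3 ^ ω j))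

/-- The two-variable curve ideal. -/
def I2γ {mγ : ℕ} (γ : Fin mγ → ℕ) : Ideal (MvPowerSeries (Fin 2) ℂ) :=
  Ideal.span (Set.range fun i => (X 0 : MvPowerSeries (Fin 2) ℂ) ^ γ i - X 1 ^ γ i)

theorem slice_mem_aux {mγ nω : ℕ} (γ : Fin mγ → ℕ) (ω : Fin nω → ℕ) (j : ℕ)
    (ih : ∀ z ∈ I4 γ ω ^ j, ∀ l, ∃ α ∈ I2γ γ ^ j, T l z = ρ α) :
    ∀ y ∈ I4 γ ω, ∀ x ∈ I4 γ ω ^ j, ∀ l, ∃ α ∈ I2γ γ ^ (j + 1), T l (x * y) = ρ α := by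
  intro y hy
  refine Submodule.span_induction (p := fun y _ => ∀ x ∈ I4 γ ω ^ j, ∀ l,
      ∃ α ∈ I2γ γ ^ (j + 1), T l (x * y) = ρ α) ?_ ?_ ?_ ?_ hy
  · rintro s (⟨i, rfl⟩ | ⟨i, rfl⟩) x hx l
    · dsimp only
      obtain ⟨α, hα, hT⟩ := ih x hx l
      refine ⟨α * f2 (γ i), ?_, ?_⟩
      · rw [pow_succ]
        exact Ideal.mul_mem_mul hα (Ideal.subset_span ⟨i, rfl⟩)
      · rw [show (X 0 ^ γ i - X 2 ^ γ i : R4) = ρ (f2 (γ i)) from (rho_f2 (γ i)).symm,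
          T_mul_rho, hT, ← map_mul]
    · exact ⟨0, zero_mem _, by dsimp only; rw [T_kill, map_zero]⟩
  · intro x _ l
    exact ⟨0, zero_mem _, by rw [mul_zero, T_zero, map_zero]⟩
  · intro y1 y2 _ _ p1 p2 x hx l
    obtain ⟨α1, hα1, h1⟩ := p1 x hx l
    obtain ⟨α2, hα2, h2⟩ := p2 x hx l
    exact ⟨α1 + α2, add_mem hα1 hα2, by rw [mul_add, T_add, h1, h2, map_add]⟩
  · intro r y' _ p x hx l
    obtain ⟨α, hα, h⟩ := p (r * x) (Ideal.mul_mem_left _ r hx) l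
    refine ⟨α, hα, ?_⟩
    rw [smul_eq_mul, show x * (r * y') = r * x * y' by ring, h]

theorem slice_mem {mγ nω : ℕ} (γ : Fin mγ → ℕ) (ω : Fin nω → ℕ) :
    ∀ (j : ℕ), ∀ z ∈ I4 γ ω ^ j, ∀ l, ∃ α ∈ I2γ γ ^ j, T l z = ρ α := by
  intro j
  induction j with
  | zero =>
    intro z _ l
    obtain ⟨u, hu⟩ := exists_rho_of_free (Free_T l z)
    exact ⟨u, by rw [pow_zero, Ideal.one_eq_top]; trivial, hu.symm⟩
  | succ j ih =>
    intro z hz l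
    rw [pow_succ] at hz
    exact Submodule.mul_induction_on hz
      (fun x hx y hy => slice_mem_aux γ ω j ih y hy x hx l)
      (fun x y ⟨α1, hα1, h1⟩ ⟨α2, hα2, h2⟩ =>
        ⟨α1 + α2, add_mem hα1 hα2, by rw [T_add, h1, h2, map_add]⟩)

theorem rho_injective : Function.Injective ρ :=
  renameHom_injective _ _ _

theorem master {mγ nω : ℕ} (γ : Fin mγ → ℕ) (ω : Fin nω → ℕ) (a b : ℕ)
    (h : IsIntegralOverIdeal (I4 γ ω) (X 0 ^ a * X 1 ^ b - X 2 ^ a * X 3 ^ b)) :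
    IsIntegralOverIdeal (I2γ γ) ((X 0 : MvPowerSeries (Fin 2) ℂ) ^ a - X 1 ^ a) := by
  obtain ⟨m, hm, A, hA, heq⟩ := h
  have choice : ∀ j, 1 ≤ j → j ≤ m → ∃ α ∈ I2γ γ ^ j, T (b * j) (A j) = ρ α :=
    fun j h1 h2 => slice_mem γ ω j (A j) (hA j h1 h2) (b * j)
  choose! α hα1 hα2 using choice
  refine ⟨m, hm, α, hα1, ?_⟩
  apply rho_injective
  rw [map_zero]
  have happ := congrArg (T (b * m)) heq
  rw [T_zero] at happ
  rw [show (X 0 ^ a * X 1 ^ b - X 2 ^ a * X 3 ^ b : R4) = gelt a b from rfl] at happ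
  rw [T_add] at happ
  have hsum := map_sum (Thom (b * m)) (fun j => A j * gelt a b ^ (m - j)) (Finset.Icc 1 m)
  rw [show ((Thom (b * m)) (∑ j ∈ Finset.Icc 1 m, A j * gelt a b ^ (m - j)))
      = T (b * m) (∑ j ∈ Finset.Icc 1 m, A j * gelt a b ^ (m - j)) from rfl] at hsum
  rw [hsum] at happ
  have hlead : T (b * m) (gelt a b ^ m) = ρ (f2 a ^ m) := by
    rw [← one_mul (gelt a b ^ m), T_mul_gpow, if_pos (le_refl _), Nat.sub_self,
      T_zero_free free_one, one_mul]
  have hterm : ∀ j ∈ Finset.Icc 1 m,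
      (Thom (b * m)) (A j * gelt a b ^ (m - j)) = ρ (α j * f2 a ^ (m - j)) := by
    intro j hj
    obtain ⟨hj1, hj2⟩ := Finset.mem_Icc.mp hj
    have hle : b * (m - j) ≤ b * m := Nat.mul_le_mul_left b (Nat.sub_le m j)
    have hbj : b * m - b * (m - j) = b * j := by
      have hd : b * m = b * (m - j) + b * j := by
        rw [← Nat.mul_add]
        congr 1
        omega
      omega
    rw [show ((Thom (b * m)) (A j * gelt a b ^ (m - j)))
        = T (b * m) (A j * gelt a b ^ (m - j)) from rfl]
    rw [T_mul_gpow, if_pos hle, hbj, hα2 j hj1 hj2, ← map_mul]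
  rw [Finset.sum_congr rfl hterm, hlead, ← map_sum, ← map_add] at happ
  rw [← happ]
  rw [f2]

def swFun : Fin 4 → Fin 4 := ![1, 0, 3, 2]

theorem swFun_inj : Function.Injective swFun := by decide

/-- The swap automorphism exchanging the two factors. -/
def Sw : R4 →+* R4 := renameVars swFun swFun_inj

theorem sw_X (i : Fin 4) : Sw (X i) = X (swFun i) := by
  rw [Sw, renameVars_X]

def ι₂ : Fin 2 → Fin 4 := ![1, 3]

theorem ι₂_inj : Function.Injective ι₂ := by decide

/-- The embedding `ℂ[[x₂,y₂]] → ℂ[[x₁,x₂,y₁,y₂]]`, `X 0 ↦ X 1`, `X 1 ↦ X 3`. -/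
def ρ₂ : MvPowerSeries (Fin 2) ℂ →+* R4 := renameVars ι₂ ι₂_inj

theorem rho2_X0 : ρ₂ (X 0 : MvPowerSeries (Fin 2) ℂ) = X 1 := by
  rw [ρ₂, renameVars_X]
  norm_num [ι₂]

theorem rho2_X1 : ρ₂ (X 1 : MvPowerSeries (Fin 2) ℂ) = X 3 := by
  rw [ρ₂, renameVars_X]
  norm_num [ι₂]

end Fin4

end SatAux


open MvPowerSeries in
/-- Lipschitz saturation of a product of two toric curves.  In `ℂ[[x_1,x_2,y_1,y_2]]`
(variables `x_1 = X 0`, `x_2 = X 1`, `y_1 = X 2`, `y_2 = X 3`) let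
`I_Δ = ⟨x_1^{γ_i} - y_1^{γ_i}, x_2^{ω_j} - y_2^{ω_j}⟩`; in `ℂ[[x_1,y_1]]` (variables
`X 0, X 1` of `Fin 2`) let `I_1 = ⟨x_1^{γ_i} - y_1^{γ_i}⟩`, and in `ℂ[[x_2,y_2]]` let
`I_2 = ⟨x_2^{ω_j} - y_2^{ω_j}⟩`.  Then `x_1^a x_2^b - y_1^a y_2^b` is integral over `I_Δ`
iff `x_1^a - y_1^a` is integral over `I_1` and `x_2^b - y_2^b` is integral over `I_2`. -/
theorem saturation_of_product_of_curves (m n : ℕ) (hm : 1 ≤ m) (hn : 1 ≤ n)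
    (γ : Fin m → ℕ) (ω : Fin n → ℕ)
    (hγ : ∀ i, 0 < γ i) (hω : ∀ j, 0 < ω j)
    (hγgcd : Finset.univ.gcd γ = 1) (hωgcd : Finset.univ.gcd ω = 1)
    (IΔ : Ideal (MvPowerSeries (Fin 4) ℂ))
    (hIΔ : IΔ = Ideal.span
      ((Set.range fun i => X 0 ^ γ i - X 2 ^ γ i) ∪
       (Set.range fun j => X 1 ^ ω j - X 3 ^ ω j)))
    (I₁ I₂ : Ideal (MvPowerSeries (Fin 2) ℂ))
    (hI₁ : I₁ = Ideal.span (Set.range fun i => X 0 ^ γ i - X 1 ^ γ i))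
    (hI₂ : I₂ = Ideal.span (Set.range fun j => X 0 ^ ω j - X 1 ^ ω j)) :
    ∀ a b : ℕ,
      IsIntegralOverIdeal IΔ (X 0 ^ a * X 1 ^ b - X 2 ^ a * X 3 ^ b) ↔
        (IsIntegralOverIdeal I₁ (X 0 ^ a - X 1 ^ a) ∧
         IsIntegralOverIdeal I₂ (X 0 ^ b - X 1 ^ b)) := by
  subst hIΔ hI₁ hI₂
  intro a b
  constructor
  · intro h
    constructor
    · exact SatAux.master γ ω a b h
    · have hcond : ∀ x ∈ SatAux.I4 γ ω, SatAux.Sw x ∈ SatAux.I4 ω γ := by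
        intro x hx
        have hle : SatAux.I4 γ ω ≤ Ideal.comap SatAux.Sw (SatAux.I4 ω γ) := by
          rw [SatAux.I4, Ideal.span_le]
          rintro s (⟨i, rfl⟩ | ⟨i, rfl⟩)
          · show SatAux.Sw (X 0 ^ γ i - X 2 ^ γ i) ∈ SatAux.I4 ω γ
            have : SatAux.Sw (X 0 ^ γ i - X 2 ^ γ i) = X 1 ^ γ i - X 3 ^ γ i := by
              rw [map_sub, map_pow, map_pow, SatAux.sw_X, SatAux.sw_X]
              rw [show SatAux.swFun 0 = 1 by decide, show SatAux.swFun 2 = 3 by decide]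
            rw [this]
            exact Ideal.subset_span (Or.inr ⟨i, rfl⟩)
          · show SatAux.Sw (X 1 ^ ω i - X 3 ^ ω i) ∈ SatAux.I4 ω γ
            have : SatAux.Sw (X 1 ^ ω i - X 3 ^ ω i) = X 0 ^ ω i - X 2 ^ ω i := by
              rw [map_sub, map_pow, map_pow, SatAux.sw_X, SatAux.sw_X]
              rw [show SatAux.swFun 1 = 0 by decide, show SatAux.swFun 3 = 2 by decide]
            rw [this]
            exact Ideal.subset_span (Or.inl ⟨i, rfl⟩)
        exact hle hx
      have hsw := SatAux.homInt SatAux.Sw hcond h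
      have helt : SatAux.Sw (X 0 ^ a * X 1 ^ b - X 2 ^ a * X 3 ^ b)
          = X 0 ^ b * X 1 ^ a - X 2 ^ b * X 3 ^ a := by
        rw [map_sub, map_mul, map_mul, map_pow, map_pow, map_pow, map_pow,
          SatAux.sw_X, SatAux.sw_X, SatAux.sw_X, SatAux.sw_X]
        rw [show SatAux.swFun 0 = 1 by decide, show SatAux.swFun 1 = 0 by decide, show SatAux.swFun 2 = 3 by decide, show SatAux.swFun 3 = 2 by decide]
        ring
      rw [helt] at hsw
      exact SatAux.master ω γ b a hsw
  · rintro ⟨h1, h2⟩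
    have hc1 : ∀ x ∈ SatAux.I2γ γ, SatAux.ρ x ∈ SatAux.I4 γ ω := by
      intro x hx
      have hle : SatAux.I2γ γ ≤ Ideal.comap SatAux.ρ (SatAux.I4 γ ω) := by
        rw [SatAux.I2γ, Ideal.span_le]
        rintro s ⟨i, rfl⟩
        show SatAux.ρ (X 0 ^ γ i - X 1 ^ γ i) ∈ SatAux.I4 γ ω
        have : SatAux.ρ (X 0 ^ γ i - X 1 ^ γ i) = X 0 ^ γ i - X 2 ^ γ i := by
          rw [map_sub, map_pow, map_pow, SatAux.rho_X0, SatAux.rho_X1]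
        rw [this]
        exact Ideal.subset_span (Or.inl ⟨i, rfl⟩)
      exact hle hx
    have hc2 : ∀ x ∈ SatAux.I2γ ω, SatAux.ρ₂ x ∈ SatAux.I4 γ ω := by
      intro x hx
      have hle : SatAux.I2γ ω ≤ Ideal.comap SatAux.ρ₂ (SatAux.I4 γ ω) := by
        rw [SatAux.I2γ, Ideal.span_le]
        rintro s ⟨i, rfl⟩
        show SatAux.ρ₂ (X 0 ^ ω i - X 1 ^ ω i) ∈ SatAux.I4 γ ω
        have : SatAux.ρ₂ (X 0 ^ ω i - X 1 ^ ω i) = X 1 ^ ω i - X 3 ^ ω i := by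
          rw [map_sub, map_pow, map_pow, SatAux.rho2_X0, SatAux.rho2_X1]
        rw [this]
        exact Ideal.subset_span (Or.inr ⟨i, rfl⟩)
      exact hle hx
    have t1 := SatAux.homInt SatAux.ρ hc1 h1
    have t2 := SatAux.homInt SatAux.ρ₂ hc2 h2
    rw [show SatAux.ρ (X 0 ^ a - X 1 ^ a) = X 0 ^ a - X 2 ^ a by
      rw [map_sub, map_pow, map_pow, SatAux.rho_X0, SatAux.rho_X1]] at t1
    rw [show SatAux.ρ₂ (X 0 ^ b - X 1 ^ b) = X 1 ^ b - X 3 ^ b by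
      rw [map_sub, map_pow, map_pow, SatAux.rho2_X0, SatAux.rho2_X1]] at t2
    have s1 := SatAux.smulInt (X 1 ^ b) t1
    have s2 := SatAux.smulInt (X 2 ^ a) t2
    have sum := SatAux.addInt s1 s2
    have hfinal : X 1 ^ b * (X 0 ^ a - X 2 ^ a) + X 2 ^ a * (X 1 ^ b - X 3 ^ b)
        = (X 0 ^ a * X 1 ^ b - X 2 ^ a * X 3 ^ b : MvPowerSeries (Fin 4) ℂ) := by
      ring
    rwa [hfinal] at sum
end

section
/- Let Γ be the additive submonoid of ℕ² generated by {(1,0), (1,1), (0,2)}, and in ℂ[[x_1,x_2,y_1,y_2]] let I_Δ be the ideal generated by x_1 − y_1, x_1 x_2 − y_1 y_2 and x_2² − y_2². Then for every (a,b) ∈ ℕ², the element x_1^a x_2^b − y_1^a y_2^b is integral over I_Δ if and only if (a,b) ∈ Γ. -/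
namespace WhitneyAux
open Finset

noncomputable section

def Dm (p : ℕ × ℕ) : Fin 4 →₀ ℕ := Finsupp.single 1 p.1 + Finsupp.single 3 p.2

lemma Dm_apply0 (p : ℕ × ℕ) : Dm p 0 = 0 := by simp [Dm, Finsupp.single_apply]
lemma Dm_apply1 (p : ℕ × ℕ) : Dm p 1 = p.1 := by simp [Dm, Finsupp.single_apply]
lemma Dm_apply2 (p : ℕ × ℕ) : Dm p 2 = 0 := by simp [Dm, Finsupp.single_apply]
lemma Dm_apply3 (p : ℕ × ℕ) : Dm p 3 = p.2 := by simp [Dm, Finsupp.single_apply]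

lemma eq_Dm_of (u : Fin 4 →₀ ℕ) (h0 : u 0 = 0) (h2 : u 2 = 0) : u = Dm (u 1, u 3) := by
  ext i
  fin_cases i <;> simp [Dm, Finsupp.single_apply, h0, h2]

lemma Dm_add_Dm (a b c d : ℕ) : Dm (a, b) + Dm (c, d) = Dm (a + c, b + d) := by
  ext i
  fin_cases i <;> simp [Dm, Finsupp.single_apply]

lemma Dm_eq_zero_iff (p : ℕ × ℕ) : Dm p = 0 ↔ p = (0, 0) := by
  constructor
  · intro h
    have h1 := Dm_apply1 p
    have h3 := Dm_apply3 p
    rw [h] at h1 h3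
    simp at h1 h3
    ext <;> simp [h1.symm, h3.symm]
  · rintro rfl; ext i; fin_cases i <;> simp [Dm, Finsupp.single_apply]

lemma coeff_mul_Dm (F G : MvPowerSeries (Fin 4) ℂ) (p : ℕ × ℕ) :
    MvPowerSeries.coeff (Dm p) (F * G) =
      ∑ y ∈ antidiagonal p.1 ×ˢ antidiagonal p.2,
        MvPowerSeries.coeff (Dm (y.1.1, y.2.1)) F *
          MvPowerSeries.coeff (Dm (y.1.2, y.2.2)) G := by
  rw [MvPowerSeries.coeff_mul]
  refine Finset.sum_nbij' (fun x => ((x.1 1, x.2 1), (x.1 3, x.2 3)))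
    (fun y => (Dm (y.1.1, y.2.1), Dm (y.1.2, y.2.2))) ?_ ?_ ?_ ?_ ?_
  · rintro ⟨u, v⟩ hx
    rw [Finset.HasAntidiagonal.mem_antidiagonal] at hx
    have h1 : u 1 + v 1 = p.1 := by
      have := DFunLike.congr_fun hx 1; simpa [Dm_apply1] using this
    have h3 : u 3 + v 3 = p.2 := by
      have := DFunLike.congr_fun hx 3; simpa [Dm_apply3] using this
    simp [Finset.mem_product, Finset.HasAntidiagonal.mem_antidiagonal, h1, h3]
  · rintro ⟨⟨a, c⟩, b, d⟩ hy
    simp only [Finset.mem_product, Finset.HasAntidiagonal.mem_antidiagonal] at hy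
    rw [Finset.HasAntidiagonal.mem_antidiagonal]
    simp only
    rw [Dm_add_Dm]
    rw [show a + c = p.1 from hy.1, show b + d = p.2 from hy.2]
  · rintro ⟨u, v⟩ hx
    rw [Finset.HasAntidiagonal.mem_antidiagonal] at hx
    have h0u : u 0 = 0 := by
      have := DFunLike.congr_fun hx 0; simp [Dm_apply0] at this; omega
    have h0v : v 0 = 0 := by
      have := DFunLike.congr_fun hx 0; simp [Dm_apply0] at this; omega
    have h2u : u 2 = 0 := by
      have := DFunLike.congr_fun hx 2; simp [Dm_apply2] at this; omega
    have h2v : v 2 = 0 := by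
      have := DFunLike.congr_fun hx 2; simp [Dm_apply2] at this; omega
    simp only [Prod.mk.injEq]
    exact ⟨(eq_Dm_of u h0u h2u).symm, (eq_Dm_of v h0v h2v).symm⟩
  · rintro ⟨⟨a, c⟩, b, d⟩ hy
    simp [Dm_apply1, Dm_apply3]
  · rintro ⟨u, v⟩ hx
    rw [Finset.HasAntidiagonal.mem_antidiagonal] at hx
    have h0u : u 0 = 0 := by
      have := DFunLike.congr_fun hx 0; simp [Dm_apply0] at this; omega
    have h0v : v 0 = 0 := by
      have := DFunLike.congr_fun hx 0; simp [Dm_apply0] at this; omega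
    have h2u : u 2 = 0 := by
      have := DFunLike.congr_fun hx 2; simp [Dm_apply2] at this; omega
    have h2v : v 2 = 0 := by
      have := DFunLike.congr_fun hx 2; simp [Dm_apply2] at this; omega
    simp only
    rw [← eq_Dm_of u h0u h2u, ← eq_Dm_of v h0v h2v]

/-- The substitution `x₁ ↦ 0, x₂ ↦ T, y₁ ↦ 0, y₂ ↦ -T`. -/
def phi : MvPowerSeries (Fin 4) ℂ →+* PowerSeries ℂ where
  toFun F := PowerSeries.mk fun n =>
    ∑ p ∈ antidiagonal n, (-1 : ℂ) ^ p.2 * MvPowerSeries.coeff (Dm p) F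
  map_zero' := by ext n; simp
  map_add' F G := by ext n; simp [mul_add, Finset.sum_add_distrib]
  map_one' := by
    ext n
    simp only [PowerSeries.coeff_mk, MvPowerSeries.coeff_one]
    rw [Finset.sum_congr rfl (fun p _ => show
        (-1 : ℂ) ^ p.2 * (if Dm p = 0 then 1 else 0) = if p = ((0:ℕ),(0:ℕ)) then 1 else 0 by
      simp only [Dm_eq_zero_iff]
      split_ifs with h
      · subst h; norm_num
      · ring)]
    rw [Finset.sum_ite_eq' (antidiagonal n) ((0:ℕ),(0:ℕ)) (fun _ => (1:ℂ))]
    simp [PowerSeries.coeff_one, Finset.HasAntidiagonal.mem_antidiagonal, eq_comm]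
  map_mul' F G := by
    ext n
    simp only [PowerSeries.coeff_mk, PowerSeries.coeff_mul]
    calc
      ∑ p ∈ antidiagonal n, (-1 : ℂ) ^ p.2 * MvPowerSeries.coeff (Dm p) (F * G)
          = ∑ p ∈ antidiagonal n, ∑ y ∈ antidiagonal p.1 ×ˢ antidiagonal p.2,
              (-1 : ℂ) ^ p.2 * (MvPowerSeries.coeff (Dm (y.1.1, y.2.1)) F *
                MvPowerSeries.coeff (Dm (y.1.2, y.2.2)) G) := by
        refine Finset.sum_congr rfl fun p _ => ?_
        rw [coeff_mul_Dm, Finset.mul_sum]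
      _ = ∑ x ∈ (antidiagonal n).sigma (fun p => antidiagonal p.1 ×ˢ antidiagonal p.2),
              (-1 : ℂ) ^ x.1.2 * (MvPowerSeries.coeff (Dm (x.2.1.1, x.2.2.1)) F *
                MvPowerSeries.coeff (Dm (x.2.1.2, x.2.2.2)) G) := by
        rw [Finset.sum_sigma']
      _ = ∑ x ∈ (antidiagonal n).sigma (fun ij => antidiagonal ij.1 ×ˢ antidiagonal ij.2),
              ((-1 : ℂ) ^ x.2.1.2 * MvPowerSeries.coeff (Dm x.2.1) F) *
                ((-1 : ℂ) ^ x.2.2.2 * MvPowerSeries.coeff (Dm x.2.2) G) := by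
        refine Finset.sum_nbij'
          (fun x => ⟨(x.2.1.1 + x.2.2.1, x.2.1.2 + x.2.2.2), ((x.2.1.1, x.2.2.1), (x.2.1.2, x.2.2.2))⟩)
          (fun x => ⟨(x.2.1.1 + x.2.2.1, x.2.1.2 + x.2.2.2), ((x.2.1.1, x.2.2.1), (x.2.1.2, x.2.2.2))⟩)
          ?_ ?_ ?_ ?_ ?_
        · rintro ⟨⟨p1, p2⟩, ⟨⟨a, c⟩, ⟨b, d⟩⟩⟩ hx
          simp only [Finset.mem_sigma, Finset.mem_product, Finset.HasAntidiagonal.mem_antidiagonal, and_true] at hx ⊢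
          omega
        · rintro ⟨⟨i1, i2⟩, ⟨⟨a, b⟩, ⟨c, d⟩⟩⟩ hx
          simp only [Finset.mem_sigma, Finset.mem_product, Finset.HasAntidiagonal.mem_antidiagonal, and_true] at hx ⊢
          omega
        · rintro ⟨⟨p1, p2⟩, ⟨⟨a, c⟩, ⟨b, d⟩⟩⟩ hx
          simp only [Finset.mem_sigma, Finset.mem_product, Finset.HasAntidiagonal.mem_antidiagonal] at hx
          obtain ⟨-, h1, h2⟩ := hx
          subst h1; subst h2; rfl
        · rintro ⟨⟨i1, i2⟩, ⟨⟨a, b⟩, ⟨c, d⟩⟩⟩ hx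
          simp only [Finset.mem_sigma, Finset.mem_product, Finset.HasAntidiagonal.mem_antidiagonal] at hx
          obtain ⟨-, h1, h2⟩ := hx
          subst h1; subst h2; rfl
        · rintro ⟨⟨p1, p2⟩, ⟨⟨a, c⟩, ⟨b, d⟩⟩⟩ hx
          simp only [Finset.mem_sigma, Finset.mem_product, Finset.HasAntidiagonal.mem_antidiagonal] at hx
          obtain ⟨-, -, h2⟩ := hx
          simp only
          rw [← h2, pow_add]
          ring
      _ = ∑ ij ∈ antidiagonal n, ∑ y ∈ antidiagonal ij.1 ×ˢ antidiagonal ij.2,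
              ((-1 : ℂ) ^ y.1.2 * MvPowerSeries.coeff (Dm y.1) F) *
                ((-1 : ℂ) ^ y.2.2 * MvPowerSeries.coeff (Dm y.2) G) := by
        rw [Finset.sum_sigma']
      _ = ∑ ij ∈ antidiagonal n,
            (∑ q ∈ antidiagonal ij.1, (-1 : ℂ) ^ q.2 * MvPowerSeries.coeff (Dm q) F) *
              (∑ r ∈ antidiagonal ij.2, (-1 : ℂ) ^ r.2 * MvPowerSeries.coeff (Dm r) G) := by
        refine Finset.sum_congr rfl fun ij _ => ?_
        rw [Finset.sum_mul_sum, ← Finset.sum_product']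

lemma coeff_phi (F : MvPowerSeries (Fin 4) ℂ) (n : ℕ) :
    PowerSeries.coeff n (phi F) =
      ∑ p ∈ antidiagonal n, (-1 : ℂ) ^ p.2 * MvPowerSeries.coeff (Dm p) F := by
  simp only [phi, RingHom.coe_mk, MonoidHom.coe_mk, OneHom.coe_mk, PowerSeries.coeff_mk]

lemma phi_X0 : phi (MvPowerSeries.X 0) = 0 := by
  ext n
  rw [coeff_phi]
  have : ∀ p : ℕ × ℕ, Dm p ≠ Finsupp.single (0 : Fin 4) 1 := by
    intro p h
    have := Dm_apply0 p
    rw [h] at this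
    simp [Finsupp.single_apply] at this
  simp [MvPowerSeries.X, MvPowerSeries.coeff_monomial, this]

lemma phi_X2 : phi (MvPowerSeries.X 2) = 0 := by
  ext n
  rw [coeff_phi]
  have : ∀ p : ℕ × ℕ, Dm p ≠ Finsupp.single (2 : Fin 4) 1 := by
    intro p h
    have := Dm_apply2 p
    rw [h] at this
    simp [Finsupp.single_apply] at this
  simp [MvPowerSeries.X, MvPowerSeries.coeff_monomial, this]

lemma Dm_eq_single1_iff (p : ℕ × ℕ) : Dm p = Finsupp.single (1 : Fin 4) 1 ↔ p = (1, 0) := by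
  constructor
  · intro h
    have h1 := Dm_apply1 p
    have h3 := Dm_apply3 p
    rw [h] at h1 h3
    simp [Finsupp.single_apply] at h1 h3
    ext <;> simp [h1.symm, h3.symm]
  · rintro rfl
    ext i; fin_cases i <;> simp [Dm, Finsupp.single_apply]

lemma Dm_eq_single3_iff (p : ℕ × ℕ) : Dm p = Finsupp.single (3 : Fin 4) 1 ↔ p = (0, 1) := by
  constructor
  · intro h
    have h1 := Dm_apply1 p
    have h3 := Dm_apply3 p
    rw [h] at h1 h3
    simp [Finsupp.single_apply] at h1 h3
    ext <;> simp [h1.symm, h3.symm]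
  · rintro rfl
    ext i; fin_cases i <;> simp [Dm, Finsupp.single_apply]

lemma phi_X1 : phi (MvPowerSeries.X 1) = PowerSeries.X := by
  ext n
  rw [coeff_phi]
  rw [Finset.sum_congr rfl (fun p _ => show
      (-1 : ℂ) ^ p.2 * MvPowerSeries.coeff (Dm p) (MvPowerSeries.X 1)
        = if p = ((1:ℕ),(0:ℕ)) then 1 else 0 by
    rw [MvPowerSeries.coeff_X]
    simp only [Dm_eq_single1_iff]
    split_ifs with h
    · subst h; norm_num
    · ring)]
  rw [Finset.sum_ite_eq' (antidiagonal n) ((1:ℕ),(0:ℕ)) (fun _ => (1:ℂ))]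
  rw [PowerSeries.coeff_X]
  simp [Finset.HasAntidiagonal.mem_antidiagonal, eq_comm]

lemma phi_X3 : phi (MvPowerSeries.X 3) = -PowerSeries.X := by
  ext n
  rw [coeff_phi]
  rw [Finset.sum_congr rfl (fun p _ => show
      (-1 : ℂ) ^ p.2 * MvPowerSeries.coeff (Dm p) (MvPowerSeries.X 3)
        = if p = ((0:ℕ),(1:ℕ)) then -1 else 0 by
    rw [MvPowerSeries.coeff_X]
    simp only [Dm_eq_single3_iff]
    split_ifs with h
    · subst h; norm_num
    · ring)]
  rw [Finset.sum_ite_eq' (antidiagonal n) ((0:ℕ),(1:ℕ)) (fun _ => (-1:ℂ))]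
  rw [map_neg, PowerSeries.coeff_X]
  simp [Finset.HasAntidiagonal.mem_antidiagonal, eq_comm]
  split_ifs <;> simp

lemma gamma_iff (a b : ℕ) :
    (a, b) ∈ AddSubmonoid.closure ({((1:ℕ), (0:ℕ)), (1, 1), (0, 2)} : Set (ℕ × ℕ)) ↔
      (1 ≤ a ∨ b % 2 = 0) := by
  constructor
  · intro h
    have H : ∀ x : ℕ × ℕ,
        x ∈ AddSubmonoid.closure ({((1:ℕ), (0:ℕ)), (1, 1), (0, 2)} : Set (ℕ × ℕ)) →
          1 ≤ x.1 ∨ x.2 % 2 = 0 := by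
      intro x hx
      induction hx using AddSubmonoid.closure_induction with
      | mem y hy =>
          simp only [Set.mem_insert_iff, Set.mem_singleton_iff] at hy
          rcases hy with rfl | rfl | rfl <;> simp
      | zero => simp
      | add y z _ _ hy hz =>
          simp only [Prod.fst_add, Prod.snd_add] at *
          omega
    exact H (a, b) h
  · intro h
    have m1 : ((1:ℕ), (0:ℕ)) ∈ AddSubmonoid.closure ({((1:ℕ), (0:ℕ)), (1, 1), (0, 2)} : Set (ℕ × ℕ)) :=
      AddSubmonoid.subset_closure (by simp)
    have m2 : ((1:ℕ), (1:ℕ)) ∈ AddSubmonoid.closure ({((1:ℕ), (0:ℕ)), (1, 1), (0, 2)} : Set (ℕ × ℕ)) :=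
      AddSubmonoid.subset_closure (by simp)
    have m3 : ((0:ℕ), (2:ℕ)) ∈ AddSubmonoid.closure ({((1:ℕ), (0:ℕ)), (1, 1), (0, 2)} : Set (ℕ × ℕ)) :=
      AddSubmonoid.subset_closure (by simp)
    rcases Nat.even_or_odd b with ⟨c, hc⟩ | ⟨c, hc⟩
    · have : (a, b) = a • ((1:ℕ), (0:ℕ)) + c • ((0:ℕ), (2:ℕ)) := by
        simp [Prod.ext_iff, smul_eq_mul]
        omega
      rw [this]
      exact AddSubmonoid.add_mem _ (AddSubmonoid.nsmul_mem _ m1 a) (AddSubmonoid.nsmul_mem _ m3 c)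
    · have ha : 1 ≤ a := by omega
      obtain ⟨a', rfl⟩ : ∃ a', a = a' + 1 := ⟨a - 1, by omega⟩
      have : (a' + 1, b) = ((1:ℕ), (1:ℕ)) + a' • ((1:ℕ), (0:ℕ)) + c • ((0:ℕ), (2:ℕ)) := by
        simp [Prod.ext_iff, smul_eq_mul]
        omega
      rw [this]
      exact AddSubmonoid.add_mem _
        (AddSubmonoid.add_mem _ m2 (AddSubmonoid.nsmul_mem _ m1 a'))
        (AddSubmonoid.nsmul_mem _ m3 c)

open MvPowerSeries in
lemma mem_ideal (a b : ℕ) (h : 1 ≤ a ∨ b % 2 = 0) :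
    (X 0 ^ a * X 1 ^ b - X 2 ^ a * X 3 ^ b : MvPowerSeries (Fin 4) ℂ) ∈
      Ideal.span {X 0 - X 2, X 0 * X 1 - X 2 * X 3, X 1 ^ 2 - X 3 ^ 2} := by
  set I : Ideal (MvPowerSeries (Fin 4) ℂ) :=
    Ideal.span {X 0 - X 2, X 0 * X 1 - X 2 * X 3, X 1 ^ 2 - X 3 ^ 2} with hI
  set q := Ideal.Quotient.mk I with hq
  have e1 : q (X 0) = q (X 2) :=
    Ideal.Quotient.eq.mpr (Ideal.subset_span (by simp))
  have e2 : q (X 0) * q (X 1) = q (X 2) * q (X 3) := by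
    rw [← map_mul, ← map_mul]
    exact Ideal.Quotient.eq.mpr (Ideal.subset_span (by simp))
  have e3 : q (X 1) ^ 2 = q (X 3) ^ 2 := by
    rw [← map_pow, ← map_pow]
    exact Ideal.Quotient.eq.mpr (Ideal.subset_span (by simp))
  rw [← Ideal.Quotient.eq_zero_iff_mem]
  rw [map_sub, sub_eq_zero, map_mul, map_mul, map_pow, map_pow, map_pow, map_pow]
  rcases Nat.even_or_odd b with ⟨c, hc⟩ | ⟨c, hc⟩
  · subst hc
    calc q (X 0) ^ a * q (X 1) ^ (c + c)
        = q (X 0) ^ a * (q (X 1) ^ 2) ^ c := by ring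
      _ = q (X 2) ^ a * (q (X 3) ^ 2) ^ c := by rw [e1, e3]
      _ = q (X 2) ^ a * q (X 3) ^ (c + c) := by ring
  · have ha : 1 ≤ a := by omega
    obtain ⟨a', rfl⟩ : ∃ a', a = a' + 1 := ⟨a - 1, by omega⟩
    subst hc
    calc q (X 0) ^ (a' + 1) * q (X 1) ^ (2 * c + 1)
        = (q (X 0) * q (X 1)) * (q (X 0) ^ a' * (q (X 1) ^ 2) ^ c) := by ring
      _ = (q (X 2) * q (X 3)) * (q (X 2) ^ a' * (q (X 3) ^ 2) ^ c) := by rw [e2, e1, e3]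
      _ = q (X 2) ^ (a' + 1) * q (X 3) ^ (2 * c + 1) := by ring

open MvPowerSeries in
lemma not_integral (b : ℕ) (hb : b % 2 = 1) :
    ¬ IsIntegralOverIdeal
      (Ideal.span {X 0 - X 2, X 0 * X 1 - X 2 * X 3,
        X 1 ^ 2 - X 3 ^ 2} : Ideal (MvPowerSeries (Fin 4) ℂ))
      (X 0 ^ 0 * X 1 ^ b - X 2 ^ 0 * X 3 ^ b) := by
  rintro ⟨m, hm, A, hA, heq⟩
  have hker : (Ideal.span {X 0 - X 2, X 0 * X 1 - X 2 * X 3,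
      X 1 ^ 2 - X 3 ^ 2} : Ideal (MvPowerSeries (Fin 4) ℂ)) ≤ RingHom.ker phi := by
    rw [Ideal.span_le]
    rintro g hg
    simp only [Set.mem_insert_iff, Set.mem_singleton_iff] at hg
    rcases hg with rfl | rfl | rfl <;>
      simp [RingHom.mem_ker, phi_X0, phi_X1, phi_X2, phi_X3]
  have hA0 : ∀ j ∈ Finset.Icc 1 m, phi (A j) = 0 := by
    intro j hj
    rw [Finset.mem_Icc] at hj
    exact hker (Ideal.pow_le_self (by omega) (hA j hj.1 hj.2))
  have h0 := congrArg phi heq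
  simp only [map_add, map_pow, map_sum, map_mul, map_sub, map_zero,
    phi_X0, phi_X1, phi_X2, phi_X3, pow_zero, one_mul] at h0
  rw [Finset.sum_congr rfl (fun j hj => by rw [hA0 j hj, zero_mul])] at h0
  simp only [Finset.sum_const_zero, add_zero] at h0
  have hodd : Odd b := Nat.odd_iff.mpr hb
  rw [hodd.neg_pow, sub_neg_eq_add] at h0
  have h1 : (PowerSeries.X : PowerSeries ℂ) ^ b + PowerSeries.X ^ b ≠ 0 := by
    intro h
    have := congrArg (PowerSeries.coeff b) h
    simp [PowerSeries.coeff_X_pow] at this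
  exact h1 (pow_eq_zero_iff (by omega : m ≠ 0) |>.mp h0)

end
end WhitneyAux

open MvPowerSeries in
/-- The Whitney Umbrella `y² - x²z = 0` is Lipschitz saturated: with `Γ ⊆ ℕ²` the submonoid
generated by `(1,0), (1,1), (0,2)` and `I_Δ = ⟨x_1 - y_1, x_1 x_2 - y_1 y_2, x_2² - y_2²⟩` in
`ℂ[[x_1,x_2,y_1,y_2]]` (variables `x_1 = X 0`, `x_2 = X 1`, `y_1 = X 2`, `y_2 = X 3`),
the element `x_1^a x_2^b - y_1^a y_2^b` is integral over `I_Δ` iff `(a,b) ∈ Γ`. -/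
theorem whitney_umbrella_saturated
    (Γ : AddSubmonoid (ℕ × ℕ))
    (hΓ : Γ = AddSubmonoid.closure {(1, 0), (1, 1), (0, 2)})
    (IΔ : Ideal (MvPowerSeries (Fin 4) ℂ))
    (hIΔ : IΔ = Ideal.span {X 0 - X 2, X 0 * X 1 - X 2 * X 3, X 1 ^ 2 - X 3 ^ 2}) :
    ∀ a b : ℕ,
      IsIntegralOverIdeal IΔ (X 0 ^ a * X 1 ^ b - X 2 ^ a * X 3 ^ b) ↔ (a, b) ∈ Γ := by
  subst hΓ
  subst hIΔ
  intro a b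
  constructor
  · intro h
    rw [WhitneyAux.gamma_iff]
    by_contra hc
    push_neg at hc
    obtain ⟨ha, hb⟩ := hc
    have ha0 : a = 0 := by omega
    have hb1 : b % 2 = 1 := by omega
    subst ha0
    exact WhitneyAux.not_integral b hb1 h
  · intro h
    have hf := WhitneyAux.mem_ideal a b ((WhitneyAux.gamma_iff a b).mp h)
    refine ⟨1, one_pos, fun _ => -(X 0 ^ a * X 1 ^ b - X 2 ^ a * X 3 ^ b), ?_, ?_⟩
    · intro j h1 h2
      have : j = 1 := by omega
      subst this
      rw [pow_one]
      exact neg_mem hf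
    · simp
end
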